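/- arXiv:1106.1526 — 7 statements merged into one kernel-verified Lean document; each statement's English description precedes it below -/
import Mathlib

section
/- Let K be a line-free closed convex set in ℝ^d and let L be a d-dimensional closed convex set in ℝ^d. Let R := R_L(K) and assume R ≠ ∅. Then for a point x ∈ ℝ^d the following are equivalent: (i) x is an extreme point of R; (ii) either x is an extreme point of K not lying in the interior of L, or there exists a one-dimensional face I of K such that I \ {x} consists of two connected components I₁ and I₂ satisfying I₁ ⊆ int(L) and I₂ ∩ L = ∅. -/
open Set Pointwise MeasureTheory ENNReal

noncomputable section

variable {E : Type*}

def lred [AddCommGroup E] [Module ℝ E] [TopologicalSpace E] (L K : Set E) : Set E :=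
  convexHull ℝ (K \ interior L)

def lclo [AddCommGroup E] [Module ℝ E] [TopologicalSpace E] (𝓛 : Set (Set E)) (K : Set E) : Set E :=
  ⋂ L ∈ 𝓛, lred L K

def lcloIter [AddCommGroup E] [Module ℝ E] [TopologicalSpace E] (𝓛 : Set (Set E)) : ℕ → Set E → Set E
  | 0, K => K
  | (i+1), K => lclo 𝓛 (lcloIter 𝓛 i K)

def recCone [AddCommGroup E] [Module ℝ E] (K : Set E) : Set E :=
  {y | ∀ x ∈ K, ∀ t : ℝ, 0 ≤ t → x + t • y ∈ K}

def linealSp [AddCommGroup E] [Module ℝ E] (K : Set E) : Set E :=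
  {y | ∀ x ∈ K, ∀ t : ℝ, x + t • y ∈ K}

def LineFree [AddCommGroup E] [Module ℝ E] (K : Set E) : Prop :=
  ∀ x v : E, v ≠ 0 → ¬ (∀ t : ℝ, x + t • v ∈ K)

def setDim [AddCommGroup E] [Module ℝ E] (s : Set E) : ℕ :=
  Module.finrank ℝ (vectorSpan ℝ s)

def IsFaceOf [AddCommGroup E] [Module ℝ E] (K F : Set E) : Prop :=
  Convex ℝ F ∧ IsExtreme ℝ K F

abbrev Euc (d : ℕ) := EuclideanSpace ℝ (Fin d)

def latticePts (d : ℕ) : Set (Euc d) := {x | ∀ i, ∃ z : ℤ, x i = (z : ℝ)}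

def IsRatPolyhedron (d : ℕ) (P : Set (Euc d)) : Prop :=
  ∃ (n : ℕ) (a : Fin n → Fin d → ℚ) (b : Fin n → ℚ), (∀ i, a i ≠ 0) ∧
    P = {x | ∀ i, ∑ j, (a i j : ℝ) * x j ≤ (b i : ℝ)}

def IsPolyhedron (d : ℕ) (P : Set (Euc d)) : Prop :=
  ∃ (n : ℕ) (a : Fin n → Euc d) (b : Fin n → ℝ), (∀ i, a i ≠ 0) ∧
    P = {x | ∀ i, (inner ℝ (a i) x : ℝ) ≤ b i}

def IsFacetOf (d : ℕ) (L F : Set (Euc d)) : Prop :=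
  IsFaceOf L F ∧ setDim F + 1 = d

def IsOuterNormalOf (d : ℕ) (L F : Set (Euc d)) (u : Euc d) : Prop :=
  F = {x | x ∈ L ∧ ∀ y ∈ L, (inner ℝ u y : ℝ) ≤ inner ℝ u x}

def primFacetNormals (d : ℕ) (L : Set (Euc d)) : Set (Euc d) :=
  {u | (∃ z : Fin d → ℤ, (∀ i, u i = (z i : ℝ)) ∧ Finset.univ.gcd z = 1) ∧
    ∃ F, IsFacetOf d L F ∧ IsOuterNormalOf d L F u}

def MaxFacetWidthLE (d : ℕ) (L : Set (Euc d)) (c : ℝ) : Prop :=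
  ∀ u ∈ primFacetNormals d L, ∀ x ∈ L, ∀ y ∈ L, (inner ℝ u x : ℝ) - inner ℝ u y ≤ c


open RealInnerProductSpace


private lemma isExtreme_sum_mem {E : Type*} [AddCommGroup E] [Module ℝ E]
    {K F : Set E} (hK : Convex ℝ K) (hKF : IsExtreme ℝ K F) {ι : Type*} :
    ∀ (t : Finset ι) (w : ι → ℝ), (∀ i ∈ t, 0 < w i) → ∑ i ∈ t, w i = 1 →
      ∀ (z : ι → E), (∀ i ∈ t, z i ∈ K) → (∑ i ∈ t, w i • z i) ∈ F →
      ∀ i ∈ t, z i ∈ F := by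
  intro t
  induction t using Finset.cons_induction with
  | empty => intro w _ _ _ _ _ i hi; exact absurd hi (Finset.notMem_empty i)
  | cons i t hit IH =>
    intro w hpos h1 z hz hmem j hj
    rw [Finset.sum_cons] at h1 hmem
    rcases Finset.eq_empty_or_nonempty t with rfl | hne
    · simp only [Finset.sum_empty, add_zero] at h1 hmem
      rw [h1, one_smul] at hmem
      rcases Finset.mem_cons.1 hj with rfl | hj'
      · exact hmem
      · exact absurd hj' (Finset.notMem_empty j)
    · set W := ∑ k ∈ t, w k with hW
      have hWpos : 0 < W := Finset.sum_pos (fun k hk => hpos k (Finset.mem_cons_of_mem hk)) hne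
      have hwi : 0 < w i := hpos i (Finset.mem_cons_self i t)
      set q := ∑ k ∈ t, (w k / W) • z k with hq
      have hqK : q ∈ K := by
        apply hK.sum_mem (fun k hk => div_nonneg (hpos k (Finset.mem_cons_of_mem hk)).le hWpos.le)
        · rw [← Finset.sum_div, ← hW, div_self hWpos.ne']
        · exact fun k hk => hz k (Finset.mem_cons_of_mem hk)
      have hWq : W • q = ∑ k ∈ t, w k • z k := by
        rw [hq, Finset.smul_sum]
        refine Finset.sum_congr rfl fun k hk => ?_
        rw [smul_smul, mul_div_cancel₀ _ hWpos.ne']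
      have hmem' : w i • z i + W • q ∈ F := by rw [hWq]; exact hmem
      have hseg : (w i • z i + W • q) ∈ openSegment ℝ (z i) q :=
        ⟨w i, W, hwi, hWpos, h1, rfl⟩
      obtain ⟨hziF, hqF⟩ := (⟨hKF.2 (hz i (Finset.mem_cons_self i t)) hqK hmem' hseg,
        hKF.right_mem_of_mem_openSegment (hz i (Finset.mem_cons_self i t)) hqK hmem' hseg⟩ : z i ∈ F ∧ q ∈ F)
      rcases Finset.mem_cons.1 hj with rfl | hj'
      · exact hziF
      · refine IH (fun k => w k / W) (fun k hk => div_pos (hpos k (Finset.mem_cons_of_mem hk)) hWpos)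
          (by rw [← Finset.sum_div, ← hW, div_self hWpos.ne']) z
          (fun k hk => hz k (Finset.mem_cons_of_mem hk)) hqF j hj'

private lemma convexHull_inter_face {E : Type*} [AddCommGroup E] [Module ℝ E]
    {K F S : Set E} (hK : Convex ℝ K) (hKF : IsExtreme ℝ K F) (hS : S ⊆ K) :
    convexHull ℝ S ∩ F ⊆ convexHull ℝ (S ∩ F) := by
  rintro p ⟨hp, hpF⟩
  rw [convexHull_eq] at hp
  obtain ⟨ι, t, w, z, hw0, hw1, hzS, hp⟩ := hp
  rw [Finset.centerMass_eq_of_sum_1 _ _ hw1] at hp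
  set t' := t.filter (fun i => 0 < w i) with ht'
  have hsub : t' ⊆ t := Finset.filter_subset _ _
  have hzero : ∀ i ∈ t, i ∉ t' → w i = 0 := by
    intro i hi hni
    by_contra h
    exact hni (Finset.mem_filter.2 ⟨hi, lt_of_le_of_ne (hw0 i hi) (Ne.symm h)⟩)
  have hw1' : ∑ i ∈ t', w i = 1 := by
    rw [← hw1]
    exact (Finset.sum_subset hsub (fun i hi hni => hzero i hi hni)).symm ▸ rfl
  have hsum' : ∑ i ∈ t', w i • z i = p := by
    rw [← hp]
    exact Finset.sum_subset hsub (fun i hi hni => by rw [hzero i hi hni, zero_smul])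
  have hFmem : ∀ i ∈ t', z i ∈ F := by
    refine isExtreme_sum_mem hK hKF t' w (fun i hi => (Finset.mem_filter.1 hi).2) hw1' z
      (fun i hi => hS (hzS i (hsub hi))) (by rw [hsum']; exact hpF)
  rw [← hsum']
  exact (convex_convexHull ℝ (S ∩ F)).sum_mem
    (fun i hi => ((Finset.mem_filter.1 hi).2).le) hw1'
    (fun i hi => subset_convexHull ℝ _ ⟨hzS i (hsub hi), hFmem i hi⟩)

private lemma comp_lemma {d : ℕ} {K : Set (Euc d)} (hK : Convex ℝ K) {x v w₀ : Euc d}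
    (hv : v ≠ 0) {t₀ : ℝ} (ht₀ : 0 < t₀) (hw₀ : w₀ = x + t₀ • v) (hw₀K : w₀ ∈ K) :
    {y | y ∈ K ∧ ∃ t : ℝ, 0 < t ∧ y = x + t • v} =
      connectedComponentIn ((K ∩ {y | ∃ t : ℝ, y = x + t • v}) \ {x}) w₀ := by
  set P := {y | y ∈ K ∧ ∃ t : ℝ, 0 < t ∧ y = x + t • v} with hP
  have hvn : (0:ℝ) < ⟪v, v⟫ := by rw [real_inner_self_eq_norm_sq]; exact pow_pos (norm_pos_iff.2 hv) 2
  have hw₀P : w₀ ∈ P := ⟨hw₀K, t₀, ht₀, hw₀⟩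
  have hPsub : P ⊆ (K ∩ {y | ∃ t : ℝ, y = x + t • v}) \ {x} := by
    rintro y ⟨hyK, t, ht, rfl⟩
    refine ⟨⟨hyK, t, rfl⟩, ?_⟩
    simp only [mem_singleton_iff]
    intro h
    rcases smul_eq_zero.1 (add_eq_left.1 h) with h' | h'
    · exact ht.ne' h'
    · exact hv h'
  have hPcv : Convex ℝ P := by
    rintro y₁ ⟨hy₁K, t₁, ht₁, rfl⟩ y₂ ⟨hy₂K, t₂, ht₂, rfl⟩ c₁ c₂ hc₁ hc₂ hsum
    refine ⟨hK hy₁K hy₂K hc₁ hc₂ hsum, c₁ * t₁ + c₂ * t₂, ?_, ?_⟩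
    · rcases eq_or_lt_of_le hc₁ with h | h
      · have : c₂ = 1 := by linarith
        simp [← h, this, ht₂]
      · have h2 : 0 ≤ c₂ * t₂ := mul_nonneg hc₂ ht₂.le
        have h1 : 0 < c₁ * t₁ := mul_pos h ht₁
        linarith
    · have : c₁ • (x + t₁ • v) + c₂ • (x + t₂ • v)
          = (c₁ + c₂) • x + (c₁ * t₁ + c₂ * t₂) • v := by module
      rw [this, hsum, one_smul]
  have hg : Continuous fun y : Euc d => ⟪v, y - x⟫ :=
    Continuous.inner continuous_const (continuous_id.sub continuous_const)
  have hU : IsOpen {y : Euc d | 0 < ⟪v, y - x⟫} := isOpen_lt continuous_const hg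
  have hV : IsOpen {y : Euc d | ⟪v, y - x⟫ < 0} := isOpen_lt hg continuous_const
  have hdisj : Disjoint {y : Euc d | 0 < ⟪v, y - x⟫} {y : Euc d | ⟪v, y - x⟫ < 0} := by
    rw [Set.disjoint_left]
    rintro y h1 h2
    rw [mem_setOf_eq] at h1 h2
    linarith
  have hcover : (K ∩ {y | ∃ t : ℝ, y = x + t • v}) \ {x}
      ⊆ {y : Euc d | 0 < ⟪v, y - x⟫} ∪ {y : Euc d | ⟪v, y - x⟫ < 0} := by
    rintro y ⟨⟨hyK, t, rfl⟩, hne⟩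
    simp only [mem_singleton_iff] at hne
    have ht : t ≠ 0 := by
      rintro rfl; exact hne (by simp)
    have hin : ⟪v, (x + t • v) - x⟫ = t * ⟪v, v⟫ := by
      rw [add_sub_cancel_left, real_inner_smul_right]
    rcases ht.lt_or_gt with h | h
    · right; rw [mem_setOf_eq, hin]; exact mul_neg_of_neg_of_pos h hvn
    · left; rw [mem_setOf_eq, hin]; exact mul_pos h hvn
  refine Subset.antisymm (hPcv.isPreconnected.subset_connectedComponentIn hw₀P hPsub) ?_
  have hcsub := connectedComponentIn_subset ((K ∩ {y | ∃ t : ℝ, y = x + t • v}) \ {x}) w₀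
  rcases IsPreconnected.subset_or_subset hU hV hdisj (hcsub.trans hcover)
      (isPreconnected_connectedComponentIn) with h | h
  · intro y hy
    obtain ⟨⟨hyK, t, rfl⟩, hne⟩ := hcsub hy
    refine ⟨hyK, t, ?_, rfl⟩
    have := h hy
    rw [mem_setOf_eq, add_sub_cancel_left, real_inner_smul_right] at this
    rcases mul_pos_iff.1 this with ⟨h1, _⟩ | ⟨_, h2⟩
    · exact h1
    · linarith
  · exfalso
    have hw₀mem : w₀ ∈ connectedComponentIn ((K ∩ {y | ∃ t : ℝ, y = x + t • v}) \ {x}) w₀ :=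
      mem_connectedComponentIn (hPsub hw₀P)
    have := h hw₀mem
    rw [mem_setOf_eq, hw₀, add_sub_cancel_left, real_inner_smul_right] at this
    exact absurd this (not_lt.2 (mul_pos ht₀ hvn).le)

set_option maxHeartbeats 2000000 in
/-- Theorem: Properties of L-reductions, Part I.
Let `K` be a line-free closed convex set in `ℝ^d` and `L` a `d`-dimensional closed convex
set in `ℝ^d`. If `R := R_L(K)` is nonempty, then `x` is an extreme point of `R` iff either
`x` is an extreme point of `K` not in the interior of `L`, or there is a one-dimensional
face `I` of `K` such that `I \ {x}` consists of two connected components `I₁`, `I₂` with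
`I₁ ⊆ int L` and `I₂ ∩ L = ∅`. -/
theorem stmt0 (d : ℕ) (K L : Set (Euc d))
    (hKcl : IsClosed K) (hKcv : Convex ℝ K) (hKlf : LineFree K)
    (hLcl : IsClosed L) (hLcv : Convex ℝ L) (hLdim : setDim L = d)
    (hne : (lred L K).Nonempty) (x : Euc d) :
    x ∈ (lred L K).extremePoints ℝ ↔
      (x ∈ K.extremePoints ℝ \ interior L ∨
        ∃ I : Set (Euc d), IsFaceOf K I ∧ setDim I = 1 ∧
          ∃ I₁ I₂ : Set (Euc d),
            I \ {x} = I₁ ∪ I₂ ∧ Disjoint I₁ I₂ ∧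
            (∃ y ∈ I₁, I₁ = connectedComponentIn (I \ {x}) y) ∧
            (∃ y ∈ I₂, I₂ = connectedComponentIn (I \ {x}) y) ∧
            I₁ ⊆ interior L ∧ I₂ ∩ L = ∅) := by
  have hRK : lred L K ⊆ K := convexHull_min diff_subset hKcv
  have hsubR : K \ interior L ⊆ lred L K := subset_convexHull ℝ _
  constructor
  · -- Forward direction
    intro hx
    have hxKi : x ∈ K \ interior L := extremePoints_convexHull_subset hx
    have hxK := hxKi.1
    have hxiL := hxKi.2
    have hext : ∀ p ∈ lred L K, ∀ q ∈ lred L K,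
        x ∈ openSegment ℝ p q → p = x ∧ q = x := (mem_extremePoints.1 hx).2
    by_cases hxe : x ∈ K.extremePoints ℝ
    · exact Or.inl ⟨hxe, hxiL⟩
    right
    rw [mem_extremePoints] at hxe
    push_neg at hxe
    obtain ⟨a, haK, b, hbK, hseg, hne2⟩ := hxe hxK
    have hax : a ≠ x := by
      intro h
      rw [h] at hseg
      exact hne2 h (left_mem_openSegment_iff.1 hseg).symm
    have hbx : b ≠ x := by
      intro h
      rw [h] at hseg
      exact hne2 (right_mem_openSegment_iff.1 hseg) h
    have hab : a ≠ b := by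
      intro h
      rw [← h, openSegment_same, mem_singleton_iff] at hseg
      exact hax hseg.symm
    obtain ⟨θ₁, θ₂, hθ₁, hθ₂, hθsum, hθeq⟩ := hseg
    set v := b - a with hv
    have hvne : v ≠ 0 := by rw [hv, sub_ne_zero]; exact hab.symm
    have hae : x - θ₂ • v = a := by
      have h1 : x - θ₂ • v = (θ₁ + θ₂) • a := by rw [← hθeq, hv]; module
      rw [h1, hθsum, one_smul]
    have hbe : x + θ₁ • v = b := by
      have h1 : x + θ₁ • v = (θ₁ + θ₂) • b := by rw [← hθeq, hv]; module
      rw [h1, hθsum, one_smul]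
    set Adm : Set (Euc d) := {w | ∃ ε : ℝ, 0 < ε ∧ ∀ s : ℝ, |s| ≤ ε → x + s • w ∈ K}
      with hAdm
    have hAdm0 : (0 : Euc d) ∈ Adm := ⟨1, one_pos, fun s _ => by simpa using hxK⟩
    have admv : v ∈ Adm := by
      refine ⟨min θ₁ θ₂, lt_min hθ₁ hθ₂, fun s hs => ?_⟩
      have habs := abs_le.1 hs
      have hm1 := min_le_left θ₁ θ₂
      have hm2 := min_le_right θ₁ θ₂
      have h1 : 0 ≤ θ₂ + s := by linarith
      have h2 : θ₂ + s ≤ 1 := by linarith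
      have key : x + s • v = (1 - (θ₂ + s)) • a + (θ₂ + s) • b := by
        have hθ1' : θ₁ = 1 - θ₂ := by linarith
        rw [← hθeq, hv, hθ1']; module
      rw [key]
      exact hKcv haK hbK (by linarith) h1 (by ring)
    have hxL : x ∈ L := by
      by_contra hxL
      obtain ⟨ε, hε, hball⟩ := Metric.isOpen_iff.1 hLcl.isOpen_compl x hxL
      set D := ‖a - x‖ + ‖b - x‖ + 1 with hD
      have hDpos : (0:ℝ) < D := by positivity
      set η := min 1 (ε / D) with hη
      have hηpos : 0 < η := lt_min one_pos (div_pos hε hDpos)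
      have hη1 : η ≤ 1 := min_le_left _ _
      have hηD : η ≤ ε / D := min_le_right _ _
      have hsmall : ∀ w : Euc d, w ∈ K → ‖w - x‖ + 1 ≤ D → x + η • (w - x) ∈ Lᶜ := by
        intro w hwK hwD
        apply hball
        rw [Metric.mem_ball, dist_eq_norm, add_sub_cancel_left, norm_smul,
          Real.norm_eq_abs, abs_of_pos hηpos]
        calc η * ‖w - x‖ ≤ ε / D * ‖w - x‖ :=
              mul_le_mul_of_nonneg_right hηD (norm_nonneg _)
          _ < ε := by
              rw [div_mul_eq_mul_div, div_lt_iff₀ hDpos]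
              nlinarith [norm_nonneg (w - x)]
      have haD : ‖a - x‖ + 1 ≤ D := by
        have := norm_nonneg (b - x); rw [hD]; linarith
      have hbD : ‖b - x‖ + 1 ≤ D := by
        have := norm_nonneg (a - x); rw [hD]; linarith
      have ha'L := hsmall a haK haD
      have hb'L := hsmall b hbK hbD
      have ha'K : x + η • (a - x) ∈ K := by
        have hrep : x + η • (a - x) = (1 - η) • x + η • a := by module
        rw [hrep]; exact hKcv hxK haK (by linarith) hηpos.le (by ring)
      have hb'K : x + η • (b - x) ∈ K := by
        have hrep : x + η • (b - x) = (1 - η) • x + η • b := by module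
        rw [hrep]; exact hKcv hxK hbK (by linarith) hηpos.le (by ring)
      have hxseg : x ∈ openSegment ℝ (x + η • (a - x)) (x + η • (b - x)) := by
        refine ⟨θ₁, θ₂, hθ₁, hθ₂, hθsum, ?_⟩
        have hrep : θ₁ • (x + η • (a - x)) + θ₂ • (x + η • (b - x)) =
            (θ₁ + θ₂) • x + η • ((θ₁ • a + θ₂ • b) - (θ₁ + θ₂) • x) := by module
        rw [hrep, hθsum, hθeq, one_smul, sub_self, smul_zero, add_zero]
      obtain ⟨h1, -⟩ := hext _ (hsubR ⟨ha'K, fun h => ha'L (interior_subset h)⟩)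
        _ (hsubR ⟨hb'K, fun h => hb'L (interior_subset h)⟩) hxseg
      rcases smul_eq_zero.1 (add_eq_left.1 h1) with h' | h'
      · exact hηpos.ne' h'
      · exact hax (sub_eq_zero.1 h')
    obtain ⟨f, hf⟩ := geometric_hahn_banach_open_point hLcv.interior isOpen_interior hxiL
    have hBne : ∀ w ∈ Adm, w ≠ 0 → f w ≠ 0 := by
      rintro w ⟨ε, hε, hmem⟩ hw0
      have hp : x + ε • w ∈ K := hmem ε (by rw [abs_of_pos hε])
      have hq : x + (-ε) • w ∈ K := hmem (-ε) (by rw [abs_neg, abs_of_pos hε])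
      by_cases hpL : x + ε • w ∈ interior L
      · have h1 := hf _ hpL
        rw [map_add, _root_.map_smul, smul_eq_mul] at h1
        intro hfw
        rw [hfw, mul_zero, add_zero] at h1
        exact lt_irrefl _ h1
      by_cases hqL : x + (-ε) • w ∈ interior L
      · have h1 := hf _ hqL
        rw [map_add, _root_.map_smul, smul_eq_mul] at h1
        intro hfw
        rw [hfw, mul_zero, add_zero] at h1
        exact lt_irrefl _ h1
      · exfalso
        have hxop : x ∈ openSegment ℝ (x + ε • w) (x + (-ε) • w) :=
          ⟨1/2, 1/2, by norm_num, by norm_num, by norm_num, by module⟩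
        obtain ⟨h1, -⟩ := hext _ (hsubR ⟨hp, hpL⟩) _ (hsubR ⟨hq, hqL⟩) hxop
        rcases smul_eq_zero.1 (add_eq_left.1 h1) with h' | h'
        · exact hε.ne' h'
        · exact hw0 h'
    have admsmul : ∀ w ∈ Adm, ∀ c : ℝ, c • w ∈ Adm := by
      rintro w ⟨ε, hε, hmem⟩ c
      by_cases hc : c = 0
      · rw [hc, zero_smul]; exact hAdm0
      · refine ⟨ε / |c|, div_pos hε (abs_pos.2 hc), fun s hs => ?_⟩
        have hrep : x + s • c • w = x + (s * c) • w := by rw [smul_smul]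
        rw [hrep]
        apply hmem
        rw [abs_mul]
        calc |s| * |c| ≤ ε / |c| * |c| :=
              mul_le_mul_of_nonneg_right hs (abs_nonneg c)
          _ = ε := div_mul_cancel₀ _ (abs_ne_zero.2 hc)
    have admadd : ∀ w₁ ∈ Adm, ∀ w₂ ∈ Adm, w₁ + w₂ ∈ Adm := by
      rintro w₁ ⟨ε₁, hε₁, h₁⟩ w₂ ⟨ε₂, hε₂, h₂⟩
      refine ⟨min ε₁ ε₂ / 2, by have := lt_min hε₁ hε₂; linarith, fun s hs => ?_⟩
      have hs1 : |2 * s| ≤ ε₁ := by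
        rw [abs_mul, abs_two]
        calc 2 * |s| ≤ 2 * (min ε₁ ε₂ / 2) := by linarith
          _ = min ε₁ ε₂ := by ring
          _ ≤ ε₁ := min_le_left _ _
      have hs2 : |2 * s| ≤ ε₂ := by
        rw [abs_mul, abs_two]
        calc 2 * |s| ≤ 2 * (min ε₁ ε₂ / 2) := by linarith
          _ = min ε₁ ε₂ := by ring
          _ ≤ ε₂ := min_le_right _ _
      have key : x + s • (w₁ + w₂)
          = (1/2 : ℝ) • (x + (2*s) • w₁) + (1/2 : ℝ) • (x + (2*s) • w₂) := by module
      rw [key]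
      exact hKcv (h₁ _ hs1) (h₂ _ hs2) (by norm_num) (by norm_num) (by norm_num)
    have hfv : f v ≠ 0 := hBne v admv hvne
    have hdir : ∀ w ∈ Adm, ∃ c : ℝ, w = c • v := by
      intro w hw
      by_cases hcz : f w • v - f v • w = 0
      · have heq : f w • v = f v • w := sub_eq_zero.1 hcz
        refine ⟨f w / f v, ?_⟩
        calc w = (f v)⁻¹ • (f v • w) := by
              rw [smul_smul, inv_mul_cancel₀ hfv, one_smul]
          _ = (f v)⁻¹ • (f w • v) := by rw [heq]
          _ = (f w / f v) • v := by rw [smul_smul, mul_comm, ← div_eq_mul_inv]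
      · exfalso
        have h1 := admsmul v admv (f w)
        have h2 := admsmul w hw (-(f v))
        have h3 := admadd _ h1 _ h2
        have hAdmz : f w • v - f v • w ∈ Adm := by
          rw [sub_eq_add_neg, ← neg_smul]; exact h3
        apply hBne _ hAdmz hcz
        rw [map_sub, _root_.map_smul, _root_.map_smul, smul_eq_mul, smul_eq_mul]
        ring
    set I : Set (Euc d) := K ∩ {y | ∃ t : ℝ, y = x + t • v} with hI
    have hxI : x ∈ I := ⟨hxK, 0, by simp⟩
    have haI : a ∈ I := ⟨haK, -θ₂, by rw [← hae]; module⟩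
    have hbI : b ∈ I := ⟨hbK, θ₁, hbe.symm⟩
    have htau : ∀ t t' : ℝ, x + t • v = x + t' • v → t = t' := by
      intro t t' h
      have h1 : t • v = t' • v := add_left_cancel h
      have h2 : (t - t') • v = 0 := by rw [sub_smul, h1, sub_self]
      rcases smul_eq_zero.1 h2 with h' | h'
      · exact sub_eq_zero.1 h'
      · exact absurd h' hvne
    have hface : IsExtreme ℝ K I := by
      refine ⟨inter_subset_left, ?_⟩
      suffices key : ∀ ⦃p⦄, p ∈ K → ∀ ⦃q⦄, q ∈ K → ∀ ⦃m⦄, m ∈ I → m ∈ openSegment ℝ p q →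
          p ∈ I ∧ q ∈ I from fun p hp q hq m hm hs => (key hp hq hm hs).1
      rintro p hpK q hqK m ⟨hmK, s, rfl⟩ hmseg
      by_cases hpq : p = q
      · rw [hpq, openSegment_same, mem_singleton_iff] at hmseg
        constructor
        · rw [hpq]; exact ⟨hqK, s, hmseg.symm⟩
        · exact ⟨hqK, s, hmseg.symm⟩
      obtain ⟨μ₁, μ₂, hμ₁, hμ₂, hμs, hμe⟩ := hmseg
      have hwAdm : q - p ∈ Adm := by
        obtain ⟨r, hrK, μ₀, hμ₀, hμ₀1, hxr⟩ : ∃ r ∈ K, ∃ μ₀ : ℝ, 0 < μ₀ ∧ μ₀ ≤ 1 ∧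
            x = (1 - μ₀) • r + μ₀ • (x + s • v) := by
          rcases lt_trichotomy s 0 with hs | hs | hs
          · refine ⟨b, hbK, θ₁ / (-s + θ₁), div_pos hθ₁ (by linarith),
              (div_le_one (by linarith)).2 (by linarith), ?_⟩
            rw [← hbe]
            have hDne : -s + θ₁ ≠ 0 := by
              have : (0:ℝ) < -s + θ₁ := by linarith
              exact this.ne'
            match_scalars <;> (field_simp; try ring)
          · refine ⟨x, hxK, 1, one_pos, le_refl 1, by rw [hs]; module⟩
          · refine ⟨a, haK, θ₂ / (s + θ₂), div_pos hθ₂ (by linarith),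
              (div_le_one (by linarith)).2 (by linarith), ?_⟩
            rw [← hae]
            have hDne : s + θ₂ ≠ 0 := by
              have : (0:ℝ) < s + θ₂ := by linarith
              exact this.ne'
            match_scalars <;> (field_simp; try ring)
        refine ⟨μ₀ * min μ₁ μ₂, mul_pos hμ₀ (lt_min hμ₁ hμ₂), fun s' hs' => ?_⟩
        have hmin : 0 < min μ₁ μ₂ := lt_min hμ₁ hμ₂
        have hb1 : |s' / μ₀| ≤ min μ₁ μ₂ := by
          rw [abs_div, abs_of_pos hμ₀, div_le_iff₀ hμ₀, mul_comm]
          exact hs'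
        have habs1 := (abs_le.1 hb1).1
        have habs2 := (abs_le.1 hb1).2
        have hm1 := min_le_left μ₁ μ₂
        have hm2 := min_le_right μ₁ μ₂
        have hinner : (μ₁ - s' / μ₀) • p + (μ₂ + s' / μ₀) • q ∈ K := by
          apply hKcv hpK hqK (by linarith) (by linarith)
          rw [show μ₁ - s' / μ₀ + (μ₂ + s' / μ₀) = μ₁ + μ₂ from by ring, hμs]
        have hexpand : (μ₁ - s' / μ₀) • p + (μ₂ + s' / μ₀) • q
            = (x + s • v) + (s' / μ₀) • (q - p) := by
          rw [← hμe]; module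
        have hcoef : μ₀ * (s' / μ₀) = s' := by field_simp
        have key : x + s' • (q - p)
            = (1 - μ₀) • r + μ₀ • ((μ₁ - s' / μ₀) • p + (μ₂ + s' / μ₀) • q) := by
          rw [hexpand]
          have h2 : μ₀ • ((x + s • v) + (s' / μ₀) • (q - p))
              = μ₀ • (x + s • v) + (μ₀ * (s' / μ₀)) • (q - p) := by module
          rw [h2, hcoef, ← add_assoc, ← hxr]
        rw [key]
        exact hKcv hrK hinner (by linarith) hμ₀.le (by ring)
      obtain ⟨c, hc⟩ := hdir _ hwAdm
      constructor
      · refine ⟨hpK, s - μ₂ * c, ?_⟩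
        have hrep : p = (μ₁ • p + μ₂ • q) - μ₂ • (q - p) := by
          have hμ1' : μ₁ = 1 - μ₂ := by linarith
          rw [hμ1']; module
        rw [hrep, hμe, hc]; module
      · refine ⟨hqK, s + μ₁ * c, ?_⟩
        have hrep : q = (μ₁ • p + μ₂ • q) + μ₁ • (q - p) := by
          have hμ2' : μ₂ = 1 - μ₁ := by linarith
          rw [hμ2']; module
        rw [hrep, hμe, hc]; module
    have hIcv : Convex ℝ I := by
      rintro y₁ ⟨h1K, t₁, rfl⟩ y₂ ⟨h2K, t₂, rfl⟩ c₁ c₂ hc₁ hc₂ hcs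
      refine ⟨hKcv h1K h2K hc₁ hc₂ hcs, c₁ * t₁ + c₂ * t₂, ?_⟩
      have hrep : c₁ • (x + t₁ • v) + c₂ • (x + t₂ • v)
          = (c₁ + c₂) • x + (c₁ * t₁ + c₂ * t₂) • v := by module
      rw [hrep, hcs, one_smul]
    have hdimI : setDim I = 1 := by
      have hspan : vectorSpan ℝ I = ℝ ∙ v := by
        apply le_antisymm
        · rw [vectorSpan_def, Submodule.span_le]
          rintro w hw
          obtain ⟨y₁, ⟨-, t₁, rfl⟩, y₂, ⟨-, t₂, rfl⟩, rfl⟩ := hw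
          rw [SetLike.mem_coe, Submodule.mem_span_singleton]
          exact ⟨t₁ - t₂, by simp only [vsub_eq_sub]; module⟩
        · rw [Submodule.span_singleton_le_iff_mem]
          have hrep : v = b -ᵥ a := by rw [vsub_eq_sub, hv]
          rw [hrep]
          exact vsub_mem_vectorSpan ℝ hbI haI
      rw [setDim, hspan]
      exact finrank_span_singleton hvne
    set Ip : Set (Euc d) := {y | y ∈ K ∧ ∃ t : ℝ, 0 < t ∧ y = x + t • v} with hIp
    set Im : Set (Euc d) := {y | y ∈ K ∧ ∃ t : ℝ, t < 0 ∧ y = x + t • v} with hIm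
    have hIpcomp : Ip = connectedComponentIn (I \ {x}) b := by
      have := comp_lemma hKcv hvne hθ₁ hbe.symm hbK
      rw [← hI] at this
      exact this
    have hImcomp : Im = connectedComponentIn (I \ {x}) a := by
      have hane : -v ≠ (0 : Euc d) := neg_ne_zero.2 hvne
      have haeq : a = x + θ₂ • (-v) := by rw [← hae]; module
      have hcm := comp_lemma hKcv hane hθ₂ haeq haK
      have e1 : {y : Euc d | y ∈ K ∧ ∃ t : ℝ, 0 < t ∧ y = x + t • (-v)} = Im := by
        ext y
        constructor
        · rintro ⟨hyK, t, ht, rfl⟩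
          exact ⟨hyK, -t, by linarith, by module⟩
        · rintro ⟨hyK, t, ht, rfl⟩
          exact ⟨hyK, -t, by linarith, by module⟩
      have e2 : (K ∩ {y : Euc d | ∃ t : ℝ, y = x + t • (-v)}) = I := by
        rw [hI]
        ext y
        constructor
        · rintro ⟨hyK, t, rfl⟩
          exact ⟨hyK, -t, by module⟩
        · rintro ⟨hyK, t, rfl⟩
          exact ⟨hyK, -t, by module⟩
      rw [e1, e2] at hcm
      exact hcm
    have hzerone : ∀ t : ℝ, t ≠ 0 → x + t • v ≠ x := by
      intro t ht h
      rcases smul_eq_zero.1 (add_eq_left.1 h) with h' | h'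
      · exact ht h'
      · exact hvne h'
    have hunion : I \ {x} = Ip ∪ Im := by
      ext y
      constructor
      · rintro ⟨⟨hyK, t, rfl⟩, hnex⟩
        simp only [mem_singleton_iff] at hnex
        have ht : t ≠ 0 := by rintro rfl; exact hnex (by simp)
        rcases ht.lt_or_gt with h | h
        · exact Or.inr ⟨hyK, t, h, rfl⟩
        · exact Or.inl ⟨hyK, t, h, rfl⟩
      · rintro (⟨hyK, t, ht, rfl⟩ | ⟨hyK, t, ht, rfl⟩)
        · exact ⟨⟨hyK, t, rfl⟩, fun h => hzerone t ht.ne' (mem_singleton_iff.1 h)⟩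
        · exact ⟨⟨hyK, t, rfl⟩, fun h => hzerone t ht.ne (mem_singleton_iff.1 h)⟩
    have hdisj : Disjoint Ip Im := by
      rw [Set.disjoint_left]
      rintro y ⟨-, t, ht, rfl⟩ ⟨-, t', ht', heq⟩
      have := htau t t' heq
      linarith
    have hbIp : b ∈ Ip := ⟨hbK, θ₁, hθ₁, hbe.symm⟩
    have haIm : a ∈ Im := ⟨haK, -θ₂, by linarith, by rw [← hae]; module⟩
    have hstrad : ∀ t₁ t₂ : ℝ, 0 < t₁ → t₂ < 0 →
        x + t₁ • v ∈ lred L K → x + t₂ • v ∈ lred L K → False := by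
      intro t₁ t₂ ht₁ ht₂ hpR hqR
      have hDpos : (0:ℝ) < t₁ - t₂ := by linarith
      have hxseg : x ∈ openSegment ℝ (x + t₁ • v) (x + t₂ • v) := by
        refine ⟨-t₂ / (t₁ - t₂), t₁ / (t₁ - t₂), div_pos (by linarith) hDpos,
          div_pos ht₁ hDpos, ?_, ?_⟩
        · rw [← add_div, show -t₂ + t₁ = t₁ - t₂ from by ring]
          exact div_self hDpos.ne'
        · match_scalars <;> (field_simp; try ring)
      obtain ⟨h1, -⟩ := hext _ hpR _ hqR hxseg
      exact hzerone t₁ ht₁.ne' h1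
    have hcases : Ip ⊆ interior L ∨ Im ⊆ interior L := by
      by_contra hcon
      push_neg at hcon
      obtain ⟨p, hpIp, hpL⟩ := not_subset.1 hcon.1
      obtain ⟨q, hqIm, hqL⟩ := not_subset.1 hcon.2
      obtain ⟨hpK', t₁, ht₁, rfl⟩ := hpIp
      obtain ⟨hqK', t₂, ht₂, rfl⟩ := hqIm
      exact hstrad t₁ t₂ ht₁ ht₂ (hsubR ⟨hpK', hpL⟩) (hsubR ⟨hqK', hqL⟩)
    rcases hcases with hcase | hcase
    · refine ⟨I, ⟨hIcv, hface⟩, hdimI, Ip, Im, hunion, hdisj,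
        ⟨b, hbIp, hIpcomp⟩, ⟨a, haIm, hImcomp⟩, hcase, ?_⟩
      rw [eq_empty_iff_forall_notMem]
      rintro y ⟨⟨hyK, t, ht, rfl⟩, hyL⟩
      have hbint : b ∈ interior L := hcase hbIp
      have hDpos : (0:ℝ) < θ₁ - t := by linarith
      have hxseg : x ∈ openSegment ℝ b (x + t • v) := by
        refine ⟨-t / (θ₁ - t), θ₁ / (θ₁ - t), div_pos (by linarith) hDpos,
          div_pos hθ₁ hDpos, ?_, ?_⟩
        · rw [← add_div, show -t + θ₁ = θ₁ - t from by ring]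
          exact div_self hDpos.ne'
        · rw [← hbe]
          match_scalars <;> (field_simp; try ring)
      exact hxiL (hLcv.openSegment_interior_closure_subset_interior hbint
        (subset_closure hyL) hxseg)
    · refine ⟨I, ⟨hIcv, hface⟩, hdimI, Im, Ip, by rw [hunion, union_comm], hdisj.symm,
        ⟨a, haIm, hImcomp⟩, ⟨b, hbIp, hIpcomp⟩, hcase, ?_⟩
      rw [eq_empty_iff_forall_notMem]
      rintro y ⟨⟨hyK, t, ht, rfl⟩, hyL⟩
      have haint : a ∈ interior L := hcase haIm
      have hDpos : (0:ℝ) < t + θ₂ := by linarith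
      have hxseg : x ∈ openSegment ℝ a (x + t • v) := by
        refine ⟨t / (t + θ₂), θ₂ / (t + θ₂), div_pos ht hDpos,
          div_pos hθ₂ hDpos, ?_, ?_⟩
        · rw [← add_div]
          exact div_self hDpos.ne'
        · rw [← hae]
          match_scalars <;> (field_simp; try ring)
      exact hxiL (hLcv.openSegment_interior_closure_subset_interior haint
        (subset_closure hyL) hxseg)
  · -- Backward direction
    rintro (⟨hxe, hxiL⟩ | ⟨I, ⟨hIcv, hIex⟩, hIdim, I₁, I₂, hsplit, hdisj,
      ⟨y₁, hy₁, hceq₁⟩, ⟨y₂, hy₂, hceq₂⟩, h₁L, h₂L⟩)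
    · refine ⟨hsubR ⟨hxe.1, hxiL⟩, ?_⟩
      intro p hp q hq hseg
      exact hxe.2 (hRK hp) (hRK hq) hseg
    · have hy₁I : y₁ ∈ I \ {x} := by rw [hsplit]; exact Or.inl hy₁
      have hy₂I : y₂ ∈ I \ {x} := by rw [hsplit]; exact Or.inr hy₂
      have hy₂x : y₂ ≠ x := by simpa using hy₂I.2
      have hy₁x : y₁ ≠ x := by simpa using hy₁I.2
      have hxI : x ∈ I := by
        by_contra hxI
        have hId : I \ {x} = I := diff_singleton_eq_self hxI
        have hII₁ : I ⊆ I₁ := by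
          rw [hceq₁]
          exact hIcv.isPreconnected.subset_connectedComponentIn
            (by rw [hId] at hy₁I; exact hy₁I) (by rw [hId])
        exact Set.disjoint_left.1 hdisj (hII₁ hy₂I.1) hy₂
      have hIK : I ⊆ K := hIex.1
      have hxK : x ∈ K := hIK hxI
      rw [setDim] at hIdim
      obtain ⟨v₀, hv₀ne, hv₀span⟩ := finrank_eq_one_iff'.1 hIdim
      set u := y₂ - x with hu
      have hune : u ≠ 0 := sub_ne_zero.2 hy₂x
      have huV : u ∈ vectorSpan ℝ I := by
        rw [hu, ← vsub_eq_sub]; exact vsub_mem_vectorSpan ℝ hy₂I.1 hxI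
      obtain ⟨c₂, hc₂⟩ := hv₀span ⟨u, huV⟩
      have hc₂ne : c₂ ≠ 0 := by
        rintro rfl
        rw [zero_smul] at hc₂
        exact hune (congrArg Subtype.val hc₂).symm
      have hkey : ∀ y ∈ I, ∃ t : ℝ, y = x + t • u := by
        intro y hyI
        have hyV : y - x ∈ vectorSpan ℝ I := by
          rw [← vsub_eq_sub]; exact vsub_mem_vectorSpan ℝ hyI hxI
        obtain ⟨c, hc⟩ := hv₀span ⟨y - x, hyV⟩
        refine ⟨c / c₂, ?_⟩
        have h2 : c₂ • (v₀ : Euc d) = u := congrArg Subtype.val hc₂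
        have h3 : c • (v₀ : Euc d) = y - x := congrArg Subtype.val hc
        have h1 : (c / c₂) • u = y - x := by
          rw [← h2, ← h3, smul_smul, div_mul_cancel₀ _ hc₂ne]
        rw [h1]
        module
      have hutau : ∀ t t' : ℝ, x + t • u = x + t' • u → t = t' := by
        intro t t' h
        have h1 : (t - t') • u = 0 := by
          rw [sub_smul, add_left_cancel h, sub_self]
        rcases smul_eq_zero.1 h1 with h' | h'
        · exact sub_eq_zero.1 h'
        · exact absurd h' hune
      have hy₂e : y₂ = x + (1:ℝ) • u := by rw [hu]; module
      obtain ⟨t₁, ht₁e⟩ := hkey y₁ hy₁I.1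
      have ht₁ne : t₁ ≠ 0 := by
        rintro h
        rw [h, zero_smul, add_zero] at ht₁e
        exact hy₁x ht₁e
      have huu : (0:ℝ) < ⟪u, u⟫ := by
        rw [real_inner_self_eq_norm_sq]; exact pow_pos (norm_pos_iff.2 hune) 2
      -- identify I₂ via comp_lemma
      have hIℓ : I ∩ {y : Euc d | ∃ t : ℝ, y = x + t • u} = I :=
        inter_eq_self_of_subset_left fun y hy => hkey y hy
      have hcomp2 := comp_lemma hIcv hune one_pos hy₂e hy₂I.1
      rw [hIℓ] at hcomp2
      have hI₂eq : I₂ = {y | y ∈ I ∧ ∃ t : ℝ, 0 < t ∧ y = x + t • u} := by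
        rw [hceq₂, ← hcomp2]
      -- t₁ < 0
      have ht₁neg : t₁ < 0 := by
        rcases ht₁ne.lt_or_gt with h | h
        · exact h
        exfalso
        have hsegsub : segment ℝ y₁ y₂ ⊆ I₂ := by
          rw [hI₂eq]
          rintro z ⟨c₁', c₂', hc₁', hc₂', hcs', rfl⟩
          refine ⟨hIcv hy₁I.1 hy₂I.1 hc₁' hc₂' hcs', c₁' * t₁ + c₂' * 1, ?_, ?_⟩
          · rcases eq_or_lt_of_le hc₁' with hcz | hcp
            · have hc2 : c₂' = 1 := by linarith
              rw [← hcz, hc2]; norm_num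
            · have hpos := mul_pos hcp h
              have hnn : 0 ≤ c₂' * 1 := by linarith
              linarith
          · have hrep : c₁' • (x + t₁ • u) + c₂' • (x + (1:ℝ) • u)
                = (c₁' + c₂') • x + (c₁' * t₁ + c₂' * 1) • u := by module
            rw [ht₁e, hy₂e, hrep, hcs', one_smul]
        exact Set.disjoint_left.1 hdisj hy₁ (hsegsub (left_mem_segment ℝ y₁ y₂))
      -- x not in interior L
      have hxiL : x ∉ interior L := by
        intro hxint
        obtain ⟨ε, hε, hball⟩ := Metric.isOpen_iff.1 isOpen_interior x hxint
        have hDpos : (0:ℝ) < ‖u‖ + 1 := by positivity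
        set η := min 1 (ε / (‖u‖ + 1)) with hη
        have hηpos : 0 < η := lt_min one_pos (div_pos hε hDpos)
        have hη1 : η ≤ 1 := min_le_left _ _
        have hzI : x + η • u ∈ I := by
          have hrep : x + η • u = (1 - η) • x + η • y₂ := by rw [hy₂e]; module
          rw [hrep]
          exact hIcv hxI hy₂I.1 (by linarith) hηpos.le (by ring)
        have hzball : x + η • u ∈ Metric.ball x ε := by
          rw [Metric.mem_ball, dist_eq_norm, add_sub_cancel_left, norm_smul,
            Real.norm_eq_abs, abs_of_pos hηpos]
          calc η * ‖u‖ ≤ ε / (‖u‖ + 1) * ‖u‖ :=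
                mul_le_mul_of_nonneg_right (min_le_right _ _) (norm_nonneg _)
            _ < ε := by
                rw [div_mul_eq_mul_div, div_lt_iff₀ hDpos]
                nlinarith [norm_nonneg u]
        have hzI₂ : x + η • u ∈ I₂ := by
          rw [hI₂eq]; exact ⟨hzI, η, hηpos, rfl⟩
        have : x + η • u ∈ I₂ ∩ L := ⟨hzI₂, interior_subset (hball hzball)⟩
        rw [h₂L] at this
        exact this
      refine mem_extremePoints.2 ⟨hsubR ⟨hxK, hxiL⟩, ?_⟩
      intro p hp q hq hxseg
      obtain ⟨hpI, hqI⟩ := (⟨hIex.2 (hRK hp) (hRK hq) hxI hxseg,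
        hIex.right_mem_of_mem_openSegment (hRK hp) (hRK hq) hxI hxseg⟩ : p ∈ I ∧ q ∈ I)
      set C : Set (Euc d) := I ∩ {y : Euc d | ⟪u, x⟫ ≤ ⟪u, y⟫} with hC
      have hlin : IsLinearMap ℝ fun y : Euc d => ⟪u, y⟫ :=
        ⟨fun a b => inner_add_right u a b, fun c a => real_inner_smul_right u a c⟩
      have hCcv : Convex ℝ C := hIcv.inter (convex_halfSpace_ge hlin _)
      have hsubC : (K \ interior L) ∩ I ⊆ C := by
        rintro y ⟨⟨hyK, hyiL⟩, hyI⟩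
        refine ⟨hyI, ?_⟩
        by_cases hyx : y = x
        · rw [hyx]; exact le_refl (inner ℝ u x : ℝ)
        · have hymem : y ∈ I₁ ∪ I₂ := by
            rw [← hsplit]; exact ⟨hyI, by simpa using hyx⟩
          rcases hymem with h | h
          · exact absurd (h₁L h) hyiL
          · rw [hI₂eq] at h
            obtain ⟨-, t, ht, rfl⟩ := h
            rw [mem_setOf_eq, inner_add_right, real_inner_smul_right]
            nlinarith
      have hpC : p ∈ C := convexHull_min hsubC hCcv
        (convexHull_inter_face hKcv hIex diff_subset ⟨hp, hpI⟩)
      have hqC : q ∈ C := convexHull_min hsubC hCcv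
        (convexHull_inter_face hKcv hIex diff_subset ⟨hq, hqI⟩)
      obtain ⟨s₁, hs₁e⟩ := hkey p hpC.1
      obtain ⟨s₂, hs₂e⟩ := hkey q hqC.1
      have hs₁0 : 0 ≤ s₁ := by
        have h1 := hpC.2
        rw [mem_setOf_eq, hs₁e, inner_add_right, real_inner_smul_right] at h1
        nlinarith
      have hs₂0 : 0 ≤ s₂ := by
        have h1 := hqC.2
        rw [mem_setOf_eq, hs₂e, inner_add_right, real_inner_smul_right] at h1
        nlinarith
      obtain ⟨c₁', c₂', hc₁', hc₂', hcs', hce'⟩ := hxseg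
      have hx0 : (c₁' * s₁ + c₂' * s₂) • u = 0 := by
        have h := hce'
        rw [hs₁e, hs₂e] at h
        have h2 : c₁' • (x + s₁ • u) + c₂' • (x + s₂ • u)
            = (c₁' + c₂') • x + (c₁' * s₁ + c₂' * s₂) • u := by module
        rw [h2, hcs', one_smul] at h
        exact add_eq_left.1 h
      rcases smul_eq_zero.1 hx0 with h | h
      · have h1 : c₁' * s₁ = 0 := by nlinarith [mul_nonneg hc₁'.le hs₁0, mul_nonneg hc₂'.le hs₂0]
        have h2 : c₂' * s₂ = 0 := by nlinarith [mul_nonneg hc₁'.le hs₁0, mul_nonneg hc₂'.le hs₂0]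
        have hs₁z : s₁ = 0 := by
          rcases mul_eq_zero.1 h1 with h' | h'
          · exact absurd h' hc₁'.ne'
          · exact h'
        have hs₂z : s₂ = 0 := by
          rcases mul_eq_zero.1 h2 with h' | h'
          · exact absurd h' hc₂'.ne'
          · exact h'
        constructor
        · rw [hs₁e, hs₁z, zero_smul, add_zero]
        · rw [hs₂e, hs₂z, zero_smul, add_zero]
      · exact absurd h hune
end
end

section
/- Let 𝓛 be a nonempty class of d-dimensional closed convex sets in ℝ^d such that for every L ∈ 𝓛 the set rec(L) is a linear space, and let M := ℝ^d \ ⋃_{L∈𝓛} int(L). Then for every line-free closed convex set K in ℝ^d one has ⋂_{i=0}^{∞} R_𝓛^i(K) = conv(K ∩ M) + rec(K). -/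
open Set Pointwise MeasureTheory ENNReal

noncomputable section

variable {E : Type*}

namespace Stmt8Aux

open Filter Topology

variable {d : ℕ}

lemma zero_mem_recCone (K : Set (Euc d)) : (0 : Euc d) ∈ recCone K := by
  intro x hx t ht; simpa using hx

lemma recCone_add {K : Set (Euc d)} {y₁ y₂ : Euc d} (h₁ : y₁ ∈ recCone K)
    (h₂ : y₂ ∈ recCone K) : y₁ + y₂ ∈ recCone K := by
  intro x hx t ht
  have := h₂ (x + t • y₁) (h₁ x hx t ht) t ht
  simpa [smul_add, add_assoc] using this

lemma recCone_smul {K : Set (Euc d)} {y : Euc d} (h : y ∈ recCone K) {c : ℝ} (hc : 0 ≤ c) :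
    c • y ∈ recCone K := by
  intro x hx t ht
  have := h x hx (t * c) (mul_nonneg ht hc)
  simpa [mul_smul] using this

lemma convex_recCone (K : Set (Euc d)) : Convex ℝ (recCone K) := by
  intro x hx y hy a b ha hb _
  exact recCone_add (recCone_smul hx ha) (recCone_smul hy hb)

lemma add_mem_of_recCone {K : Set (Euc d)} {x y : Euc d} (hx : x ∈ K) (hy : y ∈ recCone K) :
    x + y ∈ K := by
  simpa using hy x hx 1 zero_le_one

lemma ray_mem_recCone {C : Set (Euc d)} (hcl : IsClosed C) (hcv : Convex ℝ C) {z v : Euc d}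
    (hz : z ∈ C) (h : ∀ t : ℝ, 0 ≤ t → z + t • v ∈ C) : v ∈ recCone C := by
  intro x hx t ht
  rcases eq_or_lt_of_le ht with rfl | htpos
  · simpa using hx
  -- sequence: x + t•v + (t/(n+1))•(z - x) → x + t•v
  have hseq : Tendsto (fun n : ℕ => x + t • v + (t / (n + 1)) • (z - x)) atTop
      (𝓝 (x + t • v)) := by
    have h1 : Tendsto (fun n : ℕ => t / (n + 1)) atTop (𝓝 0) := by
      have := tendsto_natCast_atTop_atTop (R := ℝ)
      have h2 : Tendsto (fun n : ℕ => ((n : ℝ) + 1)) atTop atTop := this.atTop_add tendsto_const_nhds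
      simpa using h2.const_div_atTop t
    have h2 : Tendsto (fun n : ℕ => (t / (n + 1)) • (z - x)) atTop (𝓝 (0 : EuclideanSpace ℝ (Fin d))) := by
      simpa using h1.smul_const (z - x)
    simpa using tendsto_const_nhds.add h2
  apply hcl.mem_of_tendsto hseq
  filter_upwards [eventually_ge_atTop (⌈t⌉₊)] with n hn
  set lam : ℝ := t / (n + 1) with hlam
  have hn1 : t ≤ (n : ℝ) + 1 := by
    calc t ≤ (⌈t⌉₊ : ℝ) := Nat.le_ceil t
    _ ≤ (n : ℝ) := by exact_mod_cast hn
    _ ≤ (n : ℝ) + 1 := by linarith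
  have hpos : (0 : ℝ) < (n : ℝ) + 1 := by positivity
  have hlam0 : 0 < lam := div_pos htpos hpos
  have hlam1 : lam ≤ 1 := by
    rw [hlam, div_le_one hpos]; exact hn1
  have hmem : z + (t / lam) • v ∈ C := h _ (by positivity)
  have := hcv hx hmem (by linarith : (0:ℝ) ≤ 1 - lam) hlam0.le (by ring)
  have heq : (1 - lam) • x + lam • (z + (t / lam) • v) = x + t • v + lam • (z - x) := by
    have : lam • (t / lam) • v = t • v := by
      rw [smul_smul]; congr 1; field_simp
    rw [smul_add, this]
    rw [smul_sub, sub_smul, one_smul]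
    abel
  rwa [heq] at this

lemma recCone_mono {C K : Set (Euc d)} (hKcl : IsClosed K) (hKcv : Convex ℝ K)
    (hCK : C ⊆ K) (hCne : C.Nonempty) : recCone C ⊆ recCone K := by
  obtain ⟨z, hz⟩ := hCne
  intro y hy
  exact ray_mem_recCone hKcl hKcv (hCK hz) fun t ht => hCK (hy z hz t ht)

lemma lineFree_mono {C K : Set (Euc d)} (h : C ⊆ K) (hK : LineFree K) : LineFree C :=
  fun x v hv hline => hK x v hv fun t => h (hline t)


variable {𝓛 : Set (Set (Euc d))} {K : Set (Euc d)}

lemma iter_convex (hK : Convex ℝ K) : ∀ i, Convex ℝ (lcloIter 𝓛 i K)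
  | 0 => hK
  | (i+1) => by
      refine convex_iInter fun L => convex_iInter fun _ => convex_convexHull ℝ _

lemma iter_succ_subset (h𝓛ne : 𝓛.Nonempty) (hK : Convex ℝ K) (i : ℕ) :
    lcloIter 𝓛 (i+1) K ⊆ lcloIter 𝓛 i K := by
  obtain ⟨L₀, hL₀⟩ := h𝓛ne
  intro x hx
  have hx' : x ∈ lred L₀ (lcloIter 𝓛 i K) := by
    have := mem_iInter₂.1 hx L₀ hL₀
    exact this
  have : convexHull ℝ (lcloIter 𝓛 i K \ interior L₀) ⊆ lcloIter 𝓛 i K := by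
    refine convexHull_min (fun y hy => hy.1) (iter_convex hK i)
  exact this hx'

lemma iter_antitone (h𝓛ne : 𝓛.Nonempty) (hK : Convex ℝ K) {i j : ℕ} (hij : i ≤ j) :
    lcloIter 𝓛 j K ⊆ lcloIter 𝓛 i K := by
  induction j with
  | zero => simpa [Nat.le_zero.1 hij]
  | succ j ih =>
      rcases Nat.lt_or_ge i (j+1) with hlt | hge
      · exact (iter_succ_subset h𝓛ne hK j).trans (ih (Nat.lt_succ_iff.1 hlt))
      · have : i = j + 1 := le_antisymm hij hge
        subst this; exact fun x hx => hx

lemma iter_subset (h𝓛ne : 𝓛.Nonempty) (hK : Convex ℝ K) (i : ℕ) : lcloIter 𝓛 i K ⊆ K :=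
  iter_antitone h𝓛ne hK (Nat.zero_le i)

/-- The ⊇ direction core: `Q` is contained in every iterate. -/
lemma Q_subset_iter (h𝓛 : ∀ L ∈ 𝓛, IsClosed L ∧ Convex ℝ L ∧
      ∃ W : Submodule ℝ (Euc d), recCone L = (W : Set (Euc d)))
    {M : Set (Euc d)} (hM : M = univ \ ⋃ L ∈ 𝓛, interior L)
    (hKcv : Convex ℝ K) :
    ∀ i, convexHull ℝ (K ∩ M) + recCone K ⊆ lcloIter 𝓛 i K := by
  have hQK : convexHull ℝ (K ∩ M) + recCone K ⊆ K := by
    rintro z ⟨c, hc, y, hy, rfl⟩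
    exact add_mem_of_recCone (convexHull_min inter_subset_left hKcv hc) hy
  have hKM_Q : K ∩ M ⊆ convexHull ℝ (K ∩ M) + recCone K := by
    intro x hx
    exact ⟨x, subset_convexHull ℝ _ hx, 0, zero_mem_recCone K, add_zero x⟩
  have hKM_notint : ∀ L ∈ 𝓛, ∀ x ∈ K ∩ M, x ∉ interior L := by
    intro L hL x hx hmem
    rw [hM] at hx
    exact hx.2.2 (mem_iUnion₂.2 ⟨L, hL, hmem⟩)
  intro i
  induction i with
  | zero => exact hQK
  | succ i ih =>
      rintro z hz
      refine mem_iInter₂.2 fun L hL => ?_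
      obtain ⟨hLcl, hLcv, W, hW⟩ := h𝓛 L hL
      obtain ⟨c, hc, y, hy, rfl⟩ := hz
      show c + y ∈ convexHull ℝ (lcloIter 𝓛 i K \ interior L)
      by_cases hyL : y ∈ recCone L
      · -- translation case
        have hyL' : -y ∈ recCone L := by
          rw [hW] at hyL ⊢
          exact neg_mem hyL
        have htrans : ∀ p : Euc d, p ∉ interior L → p + y ∉ interior L := by
          intro p hp hmem
          -- interior L + (-y) ⊆ interior L
          have hopen : IsOpen ((fun q : Euc d => q + (-y)) '' interior L) :=
            (isOpenMap_add_right (-y)) _ isOpen_interior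
          have hsub : ((fun q : Euc d => q + (-y)) '' interior L) ⊆ L := by
            rintro _ ⟨q, hq, rfl⟩
            exact add_mem_of_recCone (interior_subset hq) hyL'
          have : ((fun q : Euc d => q + (-y)) '' interior L) ⊆ interior L :=
            interior_maximal hsub hopen
          have : p ∈ interior L := by
            have := this ⟨p + y, hmem, by abel⟩
            simpa using this
          exact hp this
        rw [convexHull_eq] at hc
        obtain ⟨ι, t, w, zf, hw0, hw1, hzs, hcc⟩ := hc
        have hmem : t.centerMass w (fun j => zf j + y) ∈
            convexHull ℝ (lcloIter 𝓛 i K \ interior L) := by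
          refine Finset.centerMass_mem_convexHull t hw0 (by rw [hw1]; norm_num) ?_
          intro j hj
          constructor
          · exact ih ⟨zf j, subset_convexHull ℝ _ (hzs j hj), y, hy, rfl⟩
          · exact htrans _ (hKM_notint L hL _ (hzs j hj))
        have heq : t.centerMass w (fun j => zf j + y) = c + y := by
          rw [← hcc, Finset.centerMass_eq_of_sum_1 _ _ hw1, Finset.centerMass_eq_of_sum_1 _ _ hw1]
          simp only [smul_add, Finset.sum_add_distrib, ← Finset.sum_smul, hw1, one_smul]
        rwa [heq] at hmem
      · -- escape along the ray
        have hT : ∃ T : ℝ, 1 ≤ T ∧ c + T • y ∉ L := by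
          by_contra hcon
          push_neg at hcon
          apply hyL
          refine ray_mem_recCone hLcl hLcv (z := c + (1:ℝ) • y) (hcon 1 le_rfl) ?_
          intro t ht
          have := hcon (1 + t) (by linarith)
          have heq : c + (1:ℝ) • y + t • y = c + (1 + t) • y := by
            rw [add_smul]; abel
          rw [heq]; exact this
        obtain ⟨T, hT1, hTL⟩ := hT
        have hTpos : (0:ℝ) < T := lt_of_lt_of_le one_pos hT1
        have hend : c + T • y ∈ lcloIter 𝓛 i K \ interior L :=
          ⟨ih ⟨c, hc, T • y, recCone_smul hy hTpos.le, rfl⟩,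
            fun hmem => hTL (interior_subset hmem)⟩
        have hc' : c ∈ convexHull ℝ (lcloIter 𝓛 i K \ interior L) := by
          refine convexHull_mono ?_ hc
          intro x hx
          exact ⟨ih (hKM_Q hx), hKM_notint L hL x hx⟩
        have hinvT : 1/T ≤ 1 := by rw [div_le_one hTpos]; exact hT1
        have := (convex_convexHull ℝ (lcloIter 𝓛 i K \ interior L)) hc'
          (subset_convexHull ℝ _ hend)
          (by linarith : (0:ℝ) ≤ 1 - 1/T) (by positivity : (0:ℝ) ≤ 1/T) (by ring)
        have heq : (1 - 1/T) • c + (1/T) • (c + T • y) = c + y := by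
          rw [smul_add, smul_smul, one_div, inv_mul_cancel₀ (ne_of_gt hTpos)]
          rw [sub_smul, one_smul, one_smul]
          abel
        rwa [heq] at this


/-- Supporting face with dimension drop. -/
lemma support_face {C : Set (Euc d)} (hcl : IsClosed C) (hcv : Convex ℝ C) {p v : Euc d}
    (hp : p ∈ C) (hv : v ∈ vectorSpan ℝ C)
    (hout : ∀ t : ℝ, 0 < t → p + t • v ∉ C) :
    ∃ F : Set (Euc d), p ∈ F ∧ F ⊆ C ∧ IsClosed F ∧ Convex ℝ F ∧
      Module.finrank ℝ (vectorSpan ℝ F) < Module.finrank ℝ (vectorSpan ℝ C) ∧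
      (∀ a b x : Euc d, a ∈ C → b ∈ C → x ∈ openSegment ℝ a b → x ∈ F → a ∈ F ∧ b ∈ F) := by
  have hvne : v ≠ 0 := by
    intro h
    exact hout 1 one_pos (by simpa [h] using hp)
  -- projections
  have hcomp : IsComplete C := hcl.isComplete
  have hne : C.Nonempty := ⟨p, hp⟩
  have Hproj : ∀ n : ℕ, ∃ w ∈ C, ‖(p + (1/(n+1) : ℝ) • v) - w‖ = ⨅ z : C, ‖(p + (1/(n+1):ℝ) • v) - (z : Euc d)‖ :=
    fun n => exists_norm_eq_iInf_of_complete_convex hne hcomp hcv _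
  choose w hwC hwmin using Hproj
  set q : ℕ → Euc d := fun n => p + (1/(n+1) : ℝ) • v with hq
  have hqC : ∀ n, q n ∉ C := fun n => hout _ (by positivity)
  have hchar : ∀ n, ∀ z ∈ C, inner ℝ (q n - w n) (z - w n) ≤ (0:ℝ) := fun n =>
    (norm_eq_iInf_iff_real_inner_le_zero hcv (hwC n)).1 (hwmin n)
  have hune : ∀ n, q n - w n ≠ 0 := fun n => sub_ne_zero.2 fun h => hqC n (h ▸ hwC n)
  -- distance bound : ‖q n - w n‖ ≤ ‖q n - p‖
  have hdist : ∀ n, ‖q n - w n‖ ≤ ‖q n - p‖ := by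
    intro n
    rw [hwmin n]
    have hbdd : BddBelow (range fun z : C => ‖q n - (z : Euc d)‖) := by
      refine ⟨0, fun r hr => ?_⟩
      obtain ⟨z, rfl⟩ := hr
      positivity
    exact ciInf_le hbdd ⟨p, hp⟩
  have hwp : Tendsto (fun n => w n) atTop (𝓝 p) := by
    rw [tendsto_iff_norm_sub_tendsto_zero]
    have hb : ∀ n : ℕ, ‖w n - p‖ ≤ 2 * (1/(n+1)) * ‖v‖ := by
      intro n
      have h1 : ‖q n - p‖ = (1/(n+1):ℝ) * ‖v‖ := by
        have he : q n - p = (1/(n+1):ℝ) • v := by simp [hq]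
        rw [he, norm_smul, Real.norm_eq_abs, abs_of_pos (by positivity : (0:ℝ) < 1/((n:ℝ)+1))]
      calc ‖w n - p‖ = ‖(q n - p) - (q n - w n)‖ := by congr 1; abel
      _ ≤ ‖q n - p‖ + ‖q n - w n‖ := norm_sub_le _ _
      _ ≤ ‖q n - p‖ + ‖q n - p‖ := by linarith [hdist n]
      _ = 2 * (1/(n+1)) * ‖v‖ := by rw [h1]; ring
    have hz : Tendsto (fun n : ℕ => 2 * (1/(n+1)) * ‖v‖) atTop (𝓝 0) := by
      have h1 : Tendsto (fun n : ℕ => (1:ℝ) / (n + 1)) atTop (𝓝 0) :=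
        tendsto_one_div_add_atTop_nhds_zero_nat
      have := (h1.const_mul 2).mul_const ‖v‖
      simpa [mul_comm, mul_assoc] using this
    exact squeeze_zero (fun n => norm_nonneg _) hb hz
  -- normalized directions in sphere ∩ vectorSpan
  set V : Submodule ℝ (Euc d) := vectorSpan ℝ C with hV
  set u' : ℕ → Euc d := fun n => ‖q n - w n‖⁻¹ • (q n - w n) with hu'
  have huV : ∀ n, u' n ∈ (Metric.sphere (0 : Euc d) 1 ∩ (V : Set (Euc d))) := by
    intro n
    constructor
    · simp only [hu', Metric.mem_sphere, dist_zero_right, norm_smul, norm_inv, norm_norm]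
      rw [inv_mul_cancel₀ (norm_ne_zero_iff.2 (hune n))]
    · refine Submodule.smul_mem _ _ ?_
      have h1 : p - w n ∈ V := vsub_mem_vectorSpan ℝ hp (hwC n)
      have h2 : (1/(n+1):ℝ) • v ∈ V := Submodule.smul_mem _ _ hv
      have : q n - w n = (p - w n) + (1/(n+1):ℝ) • v := by simp [hq]; abel
      rw [this]; exact Submodule.add_mem _ h1 h2
  have hKcomp : IsCompact (Metric.sphere (0 : Euc d) 1 ∩ (V : Set (Euc d))) :=
    (isCompact_sphere 0 1).inter_right (Submodule.closed_of_finiteDimensional V)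
  obtain ⟨u, huK, φ, hφ, hconv⟩ := hKcomp.tendsto_subseq huV
  have hu1 : ‖u‖ = 1 := by simpa using huK.1
  have huV' : u ∈ V := huK.2
  -- support property
  have hsup : ∀ z ∈ C, inner ℝ u (z - p) ≤ (0:ℝ) := by
    intro z hz
    have hev : ∀ n, inner ℝ (u' (φ n)) (z - w (φ n)) ≤ (0:ℝ) := by
      intro n
      have := hchar (φ n) z hz
      have h0 : (0:ℝ) ≤ ‖q (φ n) - w (φ n)‖⁻¹ := by positivity
      calc inner ℝ (u' (φ n)) (z - w (φ n))
          = ‖q (φ n) - w (φ n)‖⁻¹ * inner ℝ (q (φ n) - w (φ n)) (z - w (φ n)) := by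
            simp only [hu']; rw [real_inner_smul_left]
      _ ≤ 0 := mul_nonpos_of_nonneg_of_nonpos h0 this
    have hlim : Tendsto (fun n => inner ℝ (u' (φ n)) (z - w (φ n)) : ℕ → ℝ) atTop
        (𝓝 (inner ℝ u (z - p))) := by
      exact Filter.Tendsto.inner hconv (tendsto_const_nhds.sub (hwp.comp hφ.tendsto_atTop))
    exact le_of_tendsto hlim (Eventually.of_forall hev)
  -- the face
  refine ⟨{y ∈ C | inner ℝ u p ≤ (inner ℝ u y : ℝ)}, ⟨hp, le_rfl⟩, fun y hy => hy.1, ?_, ?_, ?_, ?_⟩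
  · show IsClosed (C ∩ {y : Euc d | (inner ℝ u p : ℝ) ≤ inner ℝ u y})
    exact hcl.inter (isClosed_le continuous_const (continuous_const.inner continuous_id'))
  · intro a ha b hb s t hs ht hst
    refine ⟨hcv ha.1 hb.1 hs ht hst, ?_⟩
    have h1 := ha.2; have h2 := hb.2
    calc (inner ℝ u p : ℝ) = s * inner ℝ u p + t * inner ℝ u p := by rw [← add_mul, hst, one_mul]
    _ ≤ s * inner ℝ u a + t * inner ℝ u b :=
        add_le_add (mul_le_mul_of_nonneg_left h1 hs) (mul_le_mul_of_nonneg_left h2 ht)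
    _ = inner ℝ u (s • a + t • b) := by
        rw [inner_add_right, real_inner_smul_right, real_inner_smul_right]
  · -- dimension drop
    have hsub : {y ∈ C | inner ℝ u p ≤ (inner ℝ u y : ℝ)} ⊆ C := fun y hy => hy.1
    have hle : vectorSpan ℝ {y ∈ C | inner ℝ u p ≤ (inner ℝ u y : ℝ)} ≤ V := vectorSpan_mono ℝ hsub
    have hval : ∀ a ∈ {y ∈ C | inner ℝ u p ≤ (inner ℝ u y : ℝ)}, (inner ℝ u a : ℝ) = inner ℝ u p := by
      intro a ha
      have h1 : (inner ℝ u (a - p) : ℝ) ≤ 0 := hsup a ha.1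
      rw [inner_sub_right] at h1
      linarith [ha.2]
    have huperp : ∀ y ∈ vectorSpan ℝ {y ∈ C | inner ℝ u p ≤ (inner ℝ u y : ℝ)},
        (inner ℝ u y : ℝ) = 0 := by
      intro y hy
      rw [vectorSpan] at hy
      induction hy using Submodule.span_induction with
      | mem z hz =>
          rw [Set.mem_vsub] at hz
          obtain ⟨a, ha, b, hb, rfl⟩ := hz
          rw [vsub_eq_sub, inner_sub_right, hval a ha, hval b hb, sub_self]
      | zero => simp
      | add z₁ z₂ _ _ h₁ h₂ => rw [inner_add_right, h₁, h₂, add_zero]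
      | smul c z _ h => rw [real_inner_smul_right, h, mul_zero]
    have hune' : u ≠ 0 := by
      intro h; rw [h, norm_zero] at hu1; exact zero_ne_one hu1
    have hnotmem : u ∉ vectorSpan ℝ {y ∈ C | inner ℝ u p ≤ (inner ℝ u y : ℝ)} := by
      intro hmem
      have := huperp u hmem
      rw [real_inner_self_eq_norm_sq, hu1] at this
      norm_num at this
    have hlt : vectorSpan ℝ {y ∈ C | inner ℝ u p ≤ (inner ℝ u y : ℝ)} < V :=
      lt_of_le_of_ne hle (fun h => hnotmem (h ▸ huV'))
    exact Submodule.finrank_lt_finrank_of_lt hlt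
  · intro a b x ha hb hseg hxF
    obtain ⟨s, t, hs, ht, hst, rfl⟩ := hseg
    have hFa : (inner ℝ u a : ℝ) ≤ inner ℝ u p := by
      have := hsup a ha; rw [inner_sub_right] at this; linarith
    have hFb : (inner ℝ u b : ℝ) ≤ inner ℝ u p := by
      have := hsup b hb; rw [inner_sub_right] at this; linarith
    have hcomb : (inner ℝ u p : ℝ) ≤ s * inner ℝ u a + t * inner ℝ u b := by
      have := hxF.2
      rwa [inner_add_right, real_inner_smul_right, real_inner_smul_right] at this
    have h3 : s * (inner ℝ u p : ℝ) + t * inner ℝ u p = inner ℝ u p := by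
      calc s * (inner ℝ u p : ℝ) + t * inner ℝ u p = (s + t) * inner ℝ u p := by ring
      _ = inner ℝ u p := by rw [hst, one_mul]
    have h2a : t * (inner ℝ u b : ℝ) ≤ t * inner ℝ u p := mul_le_mul_of_nonneg_left hFb ht.le
    have h2b : s * (inner ℝ u a : ℝ) ≤ s * inner ℝ u p := mul_le_mul_of_nonneg_left hFa hs.le
    constructor
    · refine ⟨ha, ?_⟩
      have h4 : s * (inner ℝ u p : ℝ) ≤ s * inner ℝ u a := by linarith
      exact le_of_mul_le_mul_left h4 hs
    · refine ⟨hb, ?_⟩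
      have h4 : t * (inner ℝ u p : ℝ) ≤ t * inner ℝ u b := by linarith
      exact le_of_mul_le_mul_left h4 ht


lemma pad_sum {α : Type*} [AddCommMonoid α] {n m : ℕ} (h : n ≤ m) (f : Fin n → α) :
    ∑ k : Fin m, (if h' : (k : ℕ) < n then f ⟨k, h'⟩ else 0) = ∑ i : Fin n, f i := by
  set F : ℕ → α := fun j => if h' : j < n then f ⟨j, h'⟩ else 0 with hF
  have h1 : ∑ k : Fin m, (if h' : (k : ℕ) < n then f ⟨k, h'⟩ else 0) = ∑ k : Fin m, F k :=
    Finset.sum_congr rfl fun k _ => rfl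
  have h2 : ∑ i : Fin n, f i = ∑ i : Fin n, F i :=
    Finset.sum_congr rfl fun i _ => by simp [hF, i.isLt]
  rw [h1, h2, Fin.sum_univ_eq_sum_range F m, Fin.sum_univ_eq_sum_range F n]
  symm
  apply Finset.sum_subset (Finset.range_subset_range.2 h)
  intro j _ hj
  simp only [Finset.mem_range, not_lt] at hj
  simp [hF, Nat.not_lt.2 hj]

/-- Carathéodory with a uniform number of points. -/
lemma caratheodory_fin {s : Set (Euc d)} {x : Euc d} (hx : x ∈ convexHull ℝ s) :
    ∃ (w : Fin (d+1) → ℝ) (z : Fin (d+1) → Euc d), (∀ k, 0 ≤ w k) ∧ ∑ k, w k = 1 ∧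
      (∀ k, z k ∈ s) ∧ ∑ k, w k • z k = x := by
  obtain ⟨ι, hι, z, w, hrange, hindep, hpos, hsum, hcomb⟩ :=
    eq_pos_convex_span_of_mem_convexHull hx
  letI := hι
  have hcard : Fintype.card ι ≤ d + 1 := by
    have h1 := hindep.card_le_finrank_succ
    have h2 : Module.finrank ℝ (vectorSpan ℝ (Set.range z)) ≤ Module.finrank ℝ (Euc d) :=
      Submodule.finrank_le _
    have h3 : Module.finrank ℝ (Euc d) = d := by
      simp [finrank_euclideanSpace_fin]
    omega
  have hne : Nonempty ι := by
    by_contra hA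
    rw [not_nonempty_iff] at hA
    revert hsum
    rw [show @Finset.univ ι hι = ∅ from Finset.univ_eq_empty]
    simp
  set n := Fintype.card ι with hn
  have hnpos : 0 < n := Fintype.card_pos
  set e := (Fintype.equivFin ι).symm with he
  refine ⟨fun k => if h : (k : ℕ) < n then w (e ⟨k, h⟩) else 0,
          fun k => if h : (k : ℕ) < n then z (e ⟨k, h⟩) else z (e ⟨0, hnpos⟩), ?_, ?_, ?_, ?_⟩
  · intro k
    by_cases h : (k : ℕ) < n
    · simp only [dif_pos h]; exact (hpos _).le
    · simp only [dif_neg h]; exact le_rfl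
  · rw [pad_sum hcard (fun i : Fin n => w (e i))]
    rw [Equiv.sum_comp e w]
    exact hsum
  · intro k
    by_cases h : (k : ℕ) < n
    · simp only [dif_pos h]; exact hrange (mem_range_self _)
    · simp only [dif_neg h]; exact hrange (mem_range_self _)
  · have hcongr : ∀ k : Fin (d+1),
        (if h : (k : ℕ) < n then w (e ⟨k, h⟩) else 0) •
          (if h : (k : ℕ) < n then z (e ⟨k, h⟩) else z (e ⟨0, hnpos⟩)) =
        (if h : (k : ℕ) < n then w (e ⟨k, h⟩) • z (e ⟨k, h⟩) else 0) := by
      intro k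
      by_cases h : (k : ℕ) < n
      · simp only [dif_pos h]
      · simp only [dif_neg h, zero_smul]
    rw [Finset.sum_congr rfl fun k _ => hcongr k]
    rw [pad_sum hcard (fun i : Fin n => w (e i) • z (e i))]
    rw [Equiv.sum_comp e (fun i => w i • z i)]
    exact hcomb

lemma nonextreme (h𝓛ne : 𝓛.Nonempty) (hKcv : Convex ℝ K)
    {e : Euc d} (he : ∀ i, e ∈ closure (lcloIter 𝓛 i K))
    {L : Set (Euc d)} (hL : L ∈ 𝓛) (heL : e ∈ interior L) :
    ∃ p q : Euc d, (∀ i, p ∈ closure (lcloIter 𝓛 i K)) ∧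
      (∀ i, q ∈ closure (lcloIter 𝓛 i K)) ∧ p ≠ q ∧ e ∈ openSegment ℝ p q := by
  classical
  obtain ⟨ε, hε, hball⟩ := Metric.isOpen_iff.1 isOpen_interior e heL
  set δ : ℝ := ε/4 with hδdef
  have hδ : 0 < δ := by positivity
  set Ann : Set (Euc d) := {y | δ/2 ≤ dist y e ∧ dist y e ≤ 2*δ} with hAnn
  have hAnnC : IsCompact Ann := by
    have h1 : Ann = Metric.closedBall e (2*δ) ∩ {y | δ/2 ≤ dist y e} := by
      ext y; simp [hAnn, Metric.mem_closedBall, and_comm]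
    rw [h1]
    exact (isCompact_closedBall e (2*δ)).inter_right
      (isClosed_le continuous_const (continuous_id.dist continuous_const))
  -- choice of approximating points
  have hp : ∀ i : ℕ, ∃ pt ∈ lcloIter 𝓛 (i+1) K, dist e pt < min (δ/2) (1/(i+1)) := by
    intro i
    have h := he (i+1)
    rw [Metric.mem_closure_iff] at h
    exact h _ (lt_min (by positivity) (by positivity))
  choose p hpA hpdist using hp
  have hpAi : ∀ i, p i ∈ lcloIter 𝓛 i K := fun i => iter_succ_subset h𝓛ne hKcv i (hpA i)
  have hpe : ∀ i, dist (p i) e ≤ δ/2 := fun i => by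
    rw [dist_comm]; exact ((hpdist i).le.trans (min_le_left _ _))
  -- each p i is a convex combination of points of (lcloIter i K) ∩ Ann
  have hrep : ∀ i, p i ∈ convexHull ℝ (lcloIter 𝓛 i K ∩ Ann) := by
    intro i
    have hpiL : p i ∈ lred L (lcloIter 𝓛 i K) := by
      have := hpA i
      exact mem_iInter₂.1 this L hL
    rw [lred, convexHull_eq] at hpiL
    obtain ⟨ι, t, w, xf, hw0, hw1, hxs, hcc⟩ := hpiL
    -- distances
    have hxfar : ∀ j ∈ t, 2*δ < dist (xf j) e := by
      intro j hj
      by_contra hcon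
      push_neg at hcon
      have : xf j ∈ Metric.ball e ε := by
        rw [Metric.mem_ball]
        calc dist (xf j) e ≤ 2*δ := hcon
        _ < ε := by rw [hδdef]; linarith
      exact (hxs j hj).2 (hball this)
    have hxp : ∀ j ∈ t, δ ≤ dist (xf j) (p i) := by
      intro j hj
      have h1 := hxfar j hj
      have h2 := hpe i
      have h3 := dist_triangle (xf j) (p i) e
      linarith
    set N : ι → ℝ := fun j => ‖xf j - p i‖ with hN
    have hNd : ∀ j ∈ t, δ ≤ N j := by
      intro j hj
      show δ ≤ ‖xf j - p i‖
      rw [← dist_eq_norm]; exact hxp j hj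
    have hNpos : ∀ j ∈ t, 0 < N j := fun j hj => lt_of_lt_of_le hδ (hNd j hj)
    set y : ι → Euc d := fun j => p i + (δ / N j) • (xf j - p i) with hy
    set μ : ι → ℝ := fun j => w j * (N j / δ) with hμ
    have hμ0 : ∀ j ∈ t, 0 ≤ μ j := by
      intro j hj
      show 0 ≤ w j * (N j / δ)
      exact mul_nonneg (hw0 j hj) (div_nonneg (le_of_lt (hNpos j hj)) hδ.le)
    have hμ1 : ∀ j ∈ t, w j ≤ μ j := by
      intro j hj
      show w j ≤ w j * (N j / δ)
      have : (1:ℝ) ≤ N j / δ := (one_le_div hδ).2 (hNd j hj)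
      calc w j = w j * 1 := (mul_one _).symm
      _ ≤ w j * (N j / δ) := mul_le_mul_of_nonneg_left this (hw0 j hj)
    have hμsum : 1 ≤ ∑ j ∈ t, μ j := by
      rw [← hw1]; exact Finset.sum_le_sum hμ1
    have hμpos : 0 < ∑ j ∈ t, μ j := lt_of_lt_of_le one_pos hμsum
    -- y j ∈ lcloIter i K ∩ Ann
    have hymem : ∀ j ∈ t, y j ∈ lcloIter 𝓛 i K ∩ Ann := by
      intro j hj
      have hc01 : 0 ≤ δ / N j ∧ δ / N j ≤ 1 := by
        constructor
        · exact div_nonneg hδ.le (hNpos j hj).le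
        · rw [div_le_one (hNpos j hj)]; exact hNd j hj
      constructor
      · have hcomb : y j = (1 - δ/N j) • p i + (δ/N j) • xf j := by
          show p i + (δ / N j) • (xf j - p i) = _
          rw [smul_sub, sub_smul, one_smul]; abel
        rw [hcomb]
        exact iter_convex hKcv i (hpAi i) (hxs j hj).1 (by linarith [hc01.2]) hc01.1 (by ring)
      · have hNne : N j ≠ 0 := (hNpos j hj).ne'
        have hdy : dist (y j) (p i) = δ := by
          show dist (p i + (δ / N j) • (xf j - p i)) (p i) = δ
          rw [dist_eq_norm]
          have h5 : p i + (δ / N j) • (xf j - p i) - p i = (δ / N j) • (xf j - p i) := by abel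
          rw [h5, norm_smul, Real.norm_eq_abs, abs_of_pos (div_pos hδ (hNpos j hj))]
          show δ / N j * ‖xf j - p i‖ = δ
          have hNj : ‖xf j - p i‖ = N j := rfl
          rw [hNj]
          field_simp
        have h6 : dist e (p i) ≤ δ/2 := by rw [dist_comm]; exact hpe i
        constructor
        · have h5 := dist_triangle (y j) (p i) e
          have h7 := dist_triangle (y j) e (p i)
          rw [hdy] at h7
          show δ/2 ≤ dist (y j) e
          linarith
        · have h4 := dist_triangle (y j) (p i) e
          rw [hdy] at h4
          show dist (y j) e ≤ 2*δ
          linarith [hpe i]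
    -- p i = centerMass μ y
    have hxfsum : ∑ j ∈ t, w j • xf j = p i := by
      rw [← Finset.centerMass_eq_of_sum_1 _ _ hw1]; exact hcc
    have hsplit : ∀ j ∈ t, μ j • y j = μ j • p i + w j • (xf j - p i) := by
      intro j hj
      have hNne : N j ≠ 0 := (hNpos j hj).ne'
      show (w j * (N j / δ)) • (p i + (δ / N j) • (xf j - p i)) =
        (w j * (N j / δ)) • p i + w j • (xf j - p i)
      rw [smul_add, smul_smul]
      have hsc : w j * (N j / δ) * (δ / N j) = w j := by field_simp
      rw [hsc]
    have hkey : ∑ j ∈ t, μ j • y j = (∑ j ∈ t, μ j) • p i := by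
      rw [Finset.sum_congr rfl hsplit, Finset.sum_add_distrib, ← Finset.sum_smul]
      have : ∑ j ∈ t, w j • (xf j - p i) = 0 := by
        simp only [smul_sub]
        rw [Finset.sum_sub_distrib, hxfsum, ← Finset.sum_smul, hw1, one_smul, sub_self]
      rw [this, add_zero]
    have hcM : t.centerMass μ y = p i := by
      have hdef : t.centerMass μ y = (∑ j ∈ t, μ j)⁻¹ • ∑ j ∈ t, μ j • y j := rfl
      rw [hdef, hkey, smul_smul, inv_mul_cancel₀ hμpos.ne', one_smul]
    rw [← hcM]
    exact Finset.centerMass_mem_convexHull t hμ0 hμpos hymem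
  -- Carathéodory representations with fixed size
  have hrep' : ∀ i, ∃ (W : Fin (d+1) → ℝ) (Z : Fin (d+1) → Euc d), (∀ k, 0 ≤ W k) ∧
      ∑ k, W k = 1 ∧ (∀ k, Z k ∈ lcloIter 𝓛 i K ∩ Ann) ∧ ∑ k, W k • Z k = p i :=
    fun i => caratheodory_fin (hrep i)
  choose W Z hW0 hW1 hZmem hWZ using hrep'
  -- compactness
  set T : Set ((Fin (d+1) → ℝ) × (Fin (d+1) → Euc d)) :=
    (stdSimplex ℝ (Fin (d+1))) ×ˢ (univ.pi fun _ => Ann) with hT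
  have hTcomp : IsCompact T :=
    (isCompact_stdSimplex _ _).prod (isCompact_univ_pi fun _ => hAnnC)
  have hseqT : ∀ i, (W i, Z i) ∈ T := by
    intro i
    refine ⟨⟨hW0 i, hW1 i⟩, ?_⟩
    intro k _
    exact (hZmem i k).2
  obtain ⟨⟨Wl, Zl⟩, hmemT, φ, hφ, hconv⟩ := hTcomp.tendsto_subseq hseqT
  have hWt : Tendsto (fun n => W (φ n)) atTop (𝓝 Wl) :=
    (continuous_fst.tendsto _).comp hconv
  have hZt : Tendsto (fun n => Z (φ n)) atTop (𝓝 Zl) :=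
    (continuous_snd.tendsto _).comp hconv
  have hWk : ∀ k, Tendsto (fun n => W (φ n) k) atTop (𝓝 (Wl k)) :=
    fun k => ((continuous_apply k).tendsto _).comp hWt
  have hZk : ∀ k, Tendsto (fun n => Z (φ n) k) atTop (𝓝 (Zl k)) :=
    fun k => ((continuous_apply k).tendsto _).comp hZt
  -- e is the limit combination
  have hpet : Tendsto (fun n => p (φ n)) atTop (𝓝 e) := by
    rw [tendsto_iff_dist_tendsto_zero]
    apply squeeze_zero (fun n => dist_nonneg)
      (g := fun n : ℕ => 1/((n:ℝ)+1))
    · intro n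
      have h1 := (hpdist (φ n)).le
      have h2 : (1:ℝ)/((φ n : ℝ)+1) ≤ 1/((n:ℝ)+1) := by
        apply one_div_le_one_div_of_le (by positivity)
        have h3 : (n:ℝ) ≤ (φ n : ℝ) := Nat.cast_le.2 hφ.le_apply
        linarith
      rw [dist_comm]
      calc dist e (p (φ n)) ≤ min (δ/2) (1/((φ n : ℝ)+1)) := h1
      _ ≤ 1/((φ n : ℝ)+1) := min_le_right _ _
      _ ≤ 1/((n:ℝ)+1) := h2
    · exact tendsto_one_div_add_atTop_nhds_zero_nat
  have hsumt : Tendsto (fun n => ∑ k, W (φ n) k • Z (φ n) k) atTop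
      (𝓝 (∑ k, Wl k • Zl k)) := by
    apply tendsto_finset_sum
    intro k _
    exact (hWk k).smul (hZk k)
  have heq : e = ∑ k, Wl k • Zl k := by
    have : Tendsto (fun n => p (φ n)) atTop (𝓝 (∑ k, Wl k • Zl k)) := by
      have hfun : (fun n => p (φ n)) = fun n => ∑ k, W (φ n) k • Z (φ n) k := by
        funext n; rw [hWZ]
      rw [hfun]; exact hsumt
    exact tendsto_nhds_unique hpet this
  -- limit points lie in all closures
  have hZcl : ∀ k, ∀ i, Zl k ∈ closure (lcloIter 𝓛 i K) := by
    intro k i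
    apply mem_closure_of_tendsto (hZk k)
    rw [eventually_atTop]
    refine ⟨i, fun n hn => ?_⟩
    have h1 : i ≤ φ n := le_trans hn (hφ.le_apply)
    exact iter_antitone h𝓛ne hKcv h1 (hZmem (φ n) k).1
  have hZAnn : ∀ k, Zl k ∈ Ann := fun k => hmemT.2 k (mem_univ k)
  have hZne : ∀ k, Zl k ≠ e := by
    intro k hke
    have := (hZAnn k).1
    rw [hke, dist_self] at this
    linarith
  -- extract a proper convex combination
  have hWl0 : ∀ k, 0 ≤ Wl k := hmemT.1.1
  have hWl1 : ∑ k, Wl k = 1 := hmemT.1.2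
  have hj₀ : ∃ j₀, 0 < Wl j₀ := by
    by_contra hcon
    push_neg at hcon
    have : ∀ k ∈ Finset.univ, Wl k = 0 := fun k _ => le_antisymm (hcon k) (hWl0 k)
    rw [Finset.sum_congr rfl this] at hWl1
    simp at hWl1
  obtain ⟨j₀, hj₀pos⟩ := hj₀
  set a : ℝ := Wl j₀ with ha
  have hsumsplit : a + ∑ k ∈ Finset.univ.erase j₀, Wl k = 1 := by
    rw [ha, Finset.add_sum_erase _ _ (Finset.mem_univ j₀)]; exact hWl1
  have ha1 : a < 1 := by
    rcases lt_or_eq_of_le (le_of_not_gt (fun hgt : 1 < a => by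
      have h0 : ∀ k ∈ Finset.univ.erase j₀, (0:ℝ) ≤ Wl k := fun k _ => hWl0 k
      have := Finset.sum_nonneg h0
      linarith)) with h | h
    · exact h
    · -- a = 1 : contradiction since e would equal Zl j₀
      exfalso
      have hzero : ∑ k ∈ Finset.univ.erase j₀, Wl k = 0 := by linarith
      have hallz : ∀ k ∈ Finset.univ.erase j₀, Wl k = 0 := by
        rw [Finset.sum_eq_zero_iff_of_nonneg (fun k _ => hWl0 k)] at hzero
        exact hzero
      have : e = Zl j₀ := by
        rw [heq, ← Finset.add_sum_erase _ _ (Finset.mem_univ j₀)]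
        rw [Finset.sum_eq_zero (fun k hk => by rw [hallz k hk, zero_smul])]
        rw [add_zero]
        have h1 : Wl j₀ = 1 := by rw [← ha]; exact h
        rw [h1, one_smul]
      exact hZne j₀ this.symm
  set b : ℝ := 1 - a with hb
  have hbpos : 0 < b := by rw [hb]; linarith
  have hesum : ∑ k ∈ Finset.univ.erase j₀, Wl k = b := by linarith
  set q : Euc d := b⁻¹ • ∑ k ∈ Finset.univ.erase j₀, Wl k • Zl k with hq
  have hqcl : ∀ i, q ∈ closure (lcloIter 𝓛 i K) := by
    intro i
    have hconv' : Convex ℝ (closure (lcloIter 𝓛 i K)) := (iter_convex hKcv i).closure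
    have := hconv'.centerMass_mem (t := Finset.univ.erase j₀) (w := Wl) (z := Zl)
      (fun k _ => hWl0 k) (by rw [hesum]; exact hbpos) (fun k _ => hZcl k i)
    have hdef : (Finset.univ.erase j₀).centerMass Wl Zl =
        (∑ k ∈ Finset.univ.erase j₀, Wl k)⁻¹ • ∑ k ∈ Finset.univ.erase j₀, Wl k • Zl k := rfl
    rw [hdef, hesum] at this
    exact this
  have hcomb : e = a • Zl j₀ + b • q := by
    rw [hq, smul_smul, mul_inv_cancel₀ hbpos.ne', one_smul]
    rw [heq, ← Finset.add_sum_erase _ _ (Finset.mem_univ j₀)]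
  have hpq : Zl j₀ ≠ q := by
    intro hpq
    have : e = Zl j₀ := by
      rw [hcomb, ← hpq, ← add_smul]
      have : a + b = 1 := by rw [hb]; ring
      rw [this, one_smul]
    exact hZne j₀ this.symm
  refine ⟨Zl j₀, q, fun i => hZcl j₀ i, hqcl, hpq, ?_⟩
  exact ⟨a, b, hj₀pos, hbpos, by rw [hb]; ring, hcomb.symm⟩

/-- Minkowski-type decomposition. -/
lemma mink {B : Set (Euc d)} : ∀ n : ℕ, ∀ C : Set (Euc d),
    Module.finrank ℝ (vectorSpan ℝ C) ≤ n → IsClosed C → Convex ℝ C → LineFree C →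
    (∀ e ∈ C, e ∈ B → ∃ p q, p ∈ C ∧ q ∈ C ∧ p ≠ q ∧ e ∈ openSegment ℝ p q) →
    ∀ x ∈ C, x ∈ convexHull ℝ (C \ B) + recCone C := by
  intro n
  induction n with
  | zero =>
      intro C hdim hcl hcv hlf hP x hx
      by_cases hxB : x ∈ B
      · exfalso
        obtain ⟨p, q, hp, hq, hpq, -⟩ := hP x hx hxB
        have hv : q -ᵥ p ∈ vectorSpan ℝ C := vsub_mem_vectorSpan ℝ hq hp
        have h0 : vectorSpan ℝ C = ⊥ := Submodule.finrank_eq_zero.1 (Nat.le_zero.1 hdim)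
        rw [h0, Submodule.mem_bot] at hv
        have : q = p := by rwa [vsub_eq_sub, sub_eq_zero] at hv
        exact hpq this.symm
      · exact ⟨x, subset_convexHull ℝ _ ⟨hx, hxB⟩, 0, zero_mem_recCone C, add_zero x⟩
  | succ n IH =>
      intro C hdim hcl hcv hlf hP x hx
      by_cases hxB : x ∈ B
      swap
      · exact ⟨x, subset_convexHull ℝ _ ⟨hx, hxB⟩, 0, zero_mem_recCone C, add_zero x⟩
      obtain ⟨p, q, hp, hq, hpq, hseg⟩ := hP x hx hxB
      obtain ⟨s, t, hs, ht, hst, hx'⟩ := hseg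
      set v : Euc d := q - p with hv
      have hv0 : v ≠ 0 := sub_ne_zero.2 (Ne.symm hpq)
      have hvV : v ∈ vectorSpan ℝ C := by
        have := vsub_mem_vectorSpan ℝ hq hp
        rwa [vsub_eq_sub] at this
      set I : Set ℝ := {r : ℝ | x + r • v ∈ C} with hI
      have hIconv : Convex ℝ I := by
        intro r₁ h1 r₂ h2 a b ha hb hab
        show x + (a • r₁ + b • r₂) • v ∈ C
        simp only [smul_eq_mul]
        have heq : a • (x + r₁ • v) + b • (x + r₂ • v)
            = (a + b) • x + (a * r₁ + b * r₂) • v := by module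
        rw [hab, one_smul] at heq
        rw [← heq]
        exact hcv h1 h2 ha hb hab
      have hIclosed : IsClosed I := by
        have hcont : Continuous fun r : ℝ => x + r • v :=
          continuous_const.add (continuous_id.smul continuous_const)
        exact hcl.preimage hcont
      have hsI : s ∈ I := by
        show x + s • v ∈ C
        have heq : x + s • v = (s + t) • q := by
          rw [← hx', hv]; module
        rw [heq, hst, one_smul]; exact hq
      have hmtI : -t ∈ I := by
        show x + (-t) • v ∈ C
        have heq : x + (-t) • v = (s + t) • p := by
          rw [← hx', hv]; module
        rw [heq, hst, one_smul]; exact hp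
      have hIne : I.Nonempty := ⟨s, hsI⟩
      -- helper to build face + apply IH at an endpoint r₀ of I, giving membership in the target
      have face_step : ∀ r₀ : ℝ, (x + r₀ • v ∈ C) → (∀ u : ℝ, 0 < u → x + (r₀ + u) • v ∉ C) →
          (x + r₀ • v ∈ convexHull ℝ (C \ B) + recCone C) := by
        intro r₀ hr₀ hout
        have hout' : ∀ u : ℝ, 0 < u → (x + r₀ • v) + u • v ∉ C := by
          intro u hu hmem
          refine hout u hu ?_
          have : x + r₀ • v + u • v = x + (r₀ + u) • v := by module
          rwa [this] at hmem
        obtain ⟨F, hpF, hFC, hFcl, hFcv, hFdim, hFext⟩ :=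
          support_face hcl hcv hr₀ hvV hout'
        have hFdim' : Module.finrank ℝ (vectorSpan ℝ F) ≤ n := by omega
        have hFlf : LineFree F := lineFree_mono hFC hlf
        have hFP : ∀ e ∈ F, e ∈ B → ∃ p' q', p' ∈ F ∧ q' ∈ F ∧ p' ≠ q' ∧
            e ∈ openSegment ℝ p' q' := by
          intro e heF heB
          obtain ⟨p', q', hp', hq', hpq', hseg'⟩ := hP e (hFC heF) heB
          obtain ⟨hp'F, hq'F⟩ := hFext p' q' e hp' hq' hseg' heF
          exact ⟨p', q', hp'F, hq'F, hpq', hseg'⟩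
        have hres := IH F hFdim' hFcl hFcv hFlf hFP _ hpF
        obtain ⟨c, hc, ρ, hρ, hsum⟩ := hres
        refine ⟨c, convexHull_mono (diff_subset_diff_left hFC) hc, ρ,
          recCone_mono hcl hcv hFC ⟨_, hpF⟩ hρ, hsum⟩
      by_cases hbdd : BddAbove I
      · by_cases hbddb : BddBelow I
        · -- both endpoints exist
          set r₁ : ℝ := sInf I with hr₁
          set r₂ : ℝ := sSup I with hr₂
          have hr₁I : r₁ ∈ I := hIclosed.csInf_mem hIne hbddb
          have hr₂I : r₂ ∈ I := hIclosed.csSup_mem hIne hbdd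
          have hr₁neg : r₁ < 0 := lt_of_le_of_lt (csInf_le hbddb hmtI) (by linarith)
          have hr₂pos : 0 < r₂ := lt_of_lt_of_le hs (le_csSup hbdd hsI)
          have hp₀ : x + r₁ • v ∈ convexHull ℝ (C \ B) + recCone C := by
            -- use -v direction: (x + r₁•v) + u•(-v) ∉ C
            have hout : ∀ u : ℝ, 0 < u → (x + r₁ • v) + u • (-v) ∉ C := by
              intro u hu hmem
              have heq : x + r₁ • v + u • (-v) = x + (r₁ - u) • v := by module
              rw [heq] at hmem
              have : r₁ ≤ r₁ - u := csInf_le hbddb hmem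
              linarith
            obtain ⟨F, hpF, hFC, hFcl, hFcv, hFdim, hFext⟩ :=
              support_face hcl hcv (show x + r₁ • v ∈ C from hr₁I) (neg_mem hvV) hout
            have hFdim' : Module.finrank ℝ (vectorSpan ℝ F) ≤ n := by omega
            have hFP : ∀ e ∈ F, e ∈ B → ∃ p' q', p' ∈ F ∧ q' ∈ F ∧ p' ≠ q' ∧
                e ∈ openSegment ℝ p' q' := by
              intro e heF heB
              obtain ⟨p', q', hp', hq', hpq', hseg'⟩ := hP e (hFC heF) heB
              obtain ⟨hp'F, hq'F⟩ := hFext p' q' e hp' hq' hseg' heF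
              exact ⟨p', q', hp'F, hq'F, hpq', hseg'⟩
            have hres := IH F hFdim' hFcl hFcv (lineFree_mono hFC hlf) hFP _ hpF
            obtain ⟨c, hc, ρ, hρ, hsum⟩ := hres
            exact ⟨c, convexHull_mono (diff_subset_diff_left hFC) hc, ρ,
              recCone_mono hcl hcv hFC ⟨_, hpF⟩ hρ, hsum⟩
          have hq₀ : x + r₂ • v ∈ convexHull ℝ (C \ B) + recCone C := by
            apply face_step r₂ hr₂I
            intro u hu hmem
            have : r₂ + u ≤ r₂ := le_csSup hbdd hmem
            linarith
          -- x is a convex combination of the two endpoints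
          have hQconv : Convex ℝ (convexHull ℝ (C \ B) + recCone C) :=
            (convex_convexHull ℝ _).add (convex_recCone C)
          have hD : 0 < r₂ - r₁ := by linarith
          have hDne : r₂ - r₁ ≠ 0 := hD.ne'
          have h1 : r₂ / (r₂ - r₁) + -r₁ / (r₂ - r₁) = 1 := by
            field_simp
            ring
          have h2 : r₂ / (r₂ - r₁) * r₁ + -r₁ / (r₂ - r₁) * r₂ = 0 := by
            field_simp; ring
          have hexp : (r₂ / (r₂ - r₁)) • (x + r₁ • v) + ((-r₁) / (r₂ - r₁)) • (x + r₂ • v)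
              = (r₂ / (r₂ - r₁) + -r₁ / (r₂ - r₁)) • x
                + (r₂ / (r₂ - r₁) * r₁ + -r₁ / (r₂ - r₁) * r₂) • v := by module
          rw [h1, h2, one_smul, zero_smul, add_zero] at hexp
          rw [← hexp]
          exact hQconv hp₀ hq₀ (by positivity) (div_nonneg (by linarith) hD.le) h1
        · -- unbounded below : -v ∈ recCone C
          have hray : ∀ u : ℝ, 0 ≤ u → x + u • (-v) ∈ C := by
            intro u hu
            obtain ⟨r, hrI, hrlt⟩ := not_bddBelow_iff.1 hbddb (-u)
            have : -u ∈ I := hIconv.ordConnected.out hrI hsI ⟨by linarith, by linarith⟩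
            show x + u • (-v) ∈ C
            have heq : x + u • (-v) = x + (-u) • v := by module
            rw [heq]; exact this
          have hnegv : -v ∈ recCone C := ray_mem_recCone hcl hcv hx hray
          have hr₂I : sSup I ∈ I := hIclosed.csSup_mem hIne hbdd
          have hr₂pos : 0 < sSup I := lt_of_lt_of_le hs (le_csSup hbdd hsI)
          have hq₀ : x + sSup I • v ∈ convexHull ℝ (C \ B) + recCone C := by
            apply face_step (sSup I) hr₂I
            intro u hu hmem
            have : sSup I + u ≤ sSup I := le_csSup hbdd hmem
            linarith
          obtain ⟨c, hc, ρ, hρ, hsum⟩ := hq₀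
          refine ⟨c, hc, ρ + sSup I • (-v), recCone_add hρ (recCone_smul hnegv hr₂pos.le), ?_⟩
          show c + (ρ + sSup I • (-v)) = x
          have hsum' : c + ρ = x + sSup I • v := hsum
          rw [← add_assoc, hsum']
          module
      · -- unbounded above : v ∈ recCone C
        have hray : ∀ u : ℝ, 0 ≤ u → x + u • v ∈ C := by
          intro u hu
          obtain ⟨r, hrI, hrgt⟩ := not_bddAbove_iff.1 hbdd u
          exact hIconv.ordConnected.out hmtI hrI ⟨by linarith, by linarith⟩
        have hvrec : v ∈ recCone C := ray_mem_recCone hcl hcv hx hray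
        by_cases hbddb : BddBelow I
        · have hr₁I : sInf I ∈ I := hIclosed.csInf_mem hIne hbddb
          have hr₁neg : sInf I < 0 := lt_of_le_of_lt (csInf_le hbddb hmtI) (by linarith)
          have hp₀ : x + sInf I • v ∈ convexHull ℝ (C \ B) + recCone C := by
            have hout : ∀ u : ℝ, 0 < u → (x + sInf I • v) + u • (-v) ∉ C := by
              intro u hu hmem
              have heq : x + sInf I • v + u • (-v) = x + (sInf I - u) • v := by module
              rw [heq] at hmem
              have : sInf I ≤ sInf I - u := csInf_le hbddb hmem
              linarith
            obtain ⟨F, hpF, hFC, hFcl, hFcv, hFdim, hFext⟩ :=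
              support_face hcl hcv (show x + sInf I • v ∈ C from hr₁I) (neg_mem hvV) hout
            have hFdim' : Module.finrank ℝ (vectorSpan ℝ F) ≤ n := by omega
            have hFP : ∀ e ∈ F, e ∈ B → ∃ p' q', p' ∈ F ∧ q' ∈ F ∧ p' ≠ q' ∧
                e ∈ openSegment ℝ p' q' := by
              intro e heF heB
              obtain ⟨p', q', hp', hq', hpq', hseg'⟩ := hP e (hFC heF) heB
              obtain ⟨hp'F, hq'F⟩ := hFext p' q' e hp' hq' hseg' heF
              exact ⟨p', q', hp'F, hq'F, hpq', hseg'⟩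
            have hres := IH F hFdim' hFcl hFcv (lineFree_mono hFC hlf) hFP _ hpF
            obtain ⟨c, hc, ρ, hρ, hsum⟩ := hres
            exact ⟨c, convexHull_mono (diff_subset_diff_left hFC) hc, ρ,
              recCone_mono hcl hcv hFC ⟨_, hpF⟩ hρ, hsum⟩
          obtain ⟨c, hc, ρ, hρ, hsum⟩ := hp₀
          refine ⟨c, hc, ρ + (-sInf I) • v, recCone_add hρ
            (recCone_smul hvrec (by linarith)), ?_⟩
          show c + (ρ + (-sInf I) • v) = x
          have hsum' : c + ρ = x + sInf I • v := hsum
          rw [← add_assoc, hsum']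
          module
        · -- line in C : contradiction
          exfalso
          refine hlf x v hv0 fun r => ?_
          obtain ⟨r', hr'I, hr'lt⟩ := not_bddBelow_iff.1 hbddb r
          obtain ⟨r'', hr''I, hr''gt⟩ := not_bddAbove_iff.1 hbdd r
          exact hIconv.ordConnected.out hr'I hr''I ⟨hr'lt.le, hr''gt.le⟩

end Stmt8Aux

/-- Theorem: the limit of the sequence of i-th 𝓛-closures, Part I.
Let `𝓛` be a nonempty class of `d`-dimensional closed convex sets in `ℝ^d` whose
recession cones are linear spaces, and let `M := ℝ^d \ ⋃_{L ∈ 𝓛} int L`. Then for every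
line-free closed convex set `K` one has `⋂ᵢ R_𝓛^i(K) = conv(K ∩ M) + rec K`. -/
theorem stmt8 (d : ℕ) (𝓛 : Set (Set (Euc d))) (h𝓛ne : 𝓛.Nonempty)
    (h𝓛 : ∀ L ∈ 𝓛, IsClosed L ∧ Convex ℝ L ∧ setDim L = d ∧
      ∃ W : Submodule ℝ (Euc d), recCone L = (W : Set (Euc d)))
    (M : Set (Euc d)) (hM : M = univ \ ⋃ L ∈ 𝓛, interior L)
    (K : Set (Euc d)) (hKcl : IsClosed K) (hKcv : Convex ℝ K) (hKlf : LineFree K) :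
    ⋂ i : ℕ, lcloIter 𝓛 i K = convexHull ℝ (K ∩ M) + recCone K := by
  classical
  apply Set.Subset.antisymm
  · -- the hard direction
    intro z hz
    set C : Set (Euc d) := ⋂ i, closure (lcloIter 𝓛 i K) with hC
    have hzC : z ∈ C := mem_iInter.2 fun i => subset_closure (mem_iInter.1 hz i)
    have hCcl : IsClosed C := isClosed_iInter fun i => isClosed_closure
    have hCcv : Convex ℝ C := convex_iInter fun i => (Stmt8Aux.iter_convex hKcv i).closure
    have hCK : C ⊆ K := fun y hy => by
      have h0 := mem_iInter.1 hy 0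
      rwa [show lcloIter 𝓛 0 K = K from rfl, hKcl.closure_eq] at h0
    have hCne : C.Nonempty := ⟨z, hzC⟩
    have hClf : LineFree C := Stmt8Aux.lineFree_mono hCK hKlf
    have hdim : Module.finrank ℝ (vectorSpan ℝ C) ≤ d := by
      have h1 : Module.finrank ℝ (vectorSpan ℝ C) ≤ Module.finrank ℝ (Euc d) :=
        Submodule.finrank_le _
      have h2 : Module.finrank ℝ (Euc d) = d := by simp [finrank_euclideanSpace_fin]
      omega
    have hP : ∀ e ∈ C, e ∈ (⋃ L ∈ 𝓛, interior L) →
        ∃ p q, p ∈ C ∧ q ∈ C ∧ p ≠ q ∧ e ∈ openSegment ℝ p q := by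
      intro e heC heB
      obtain ⟨L, hL, heL⟩ := mem_iUnion₂.1 heB
      obtain ⟨p, q, hp, hq, hpq, hseg⟩ :=
        Stmt8Aux.nonextreme h𝓛ne hKcv (fun i => mem_iInter.1 heC i) hL heL
      exact ⟨p, q, mem_iInter.2 hp, mem_iInter.2 hq, hpq, hseg⟩
    obtain ⟨c, hc, ρ, hρ, hsum⟩ :=
      Stmt8Aux.mink d C hdim hCcl hCcv hClf hP z hzC
    refine ⟨c, ?_, ρ, Stmt8Aux.recCone_mono hKcl hKcv hCK hCne hρ, hsum⟩
    refine convexHull_mono ?_ hc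
    intro y hy
    refine ⟨hCK hy.1, ?_⟩
    rw [hM]
    exact ⟨mem_univ y, hy.2⟩
  · intro z hz
    refine mem_iInter.2 fun i => ?_
    refine Stmt8Aux.Q_subset_iter (fun L hL => ?_) hM hKcv i hz
    obtain ⟨h1, h2, -, h3⟩ := h𝓛 L hL
    exact ⟨h1, h2, h3⟩
end
end

section
/- Let 𝓛 be a nonempty class of d-dimensional closed convex sets in ℝ^d such that for every L ∈ 𝓛 the set rec(L) is a linear space, let M := ℝ^d \ ⋃_{L∈𝓛} int(L), and let K be a bounded line-free closed convex set in ℝ^d (i.e., a compact convex set). Then R_𝓛^i(K) converges to conv(K ∩ M) with respect to the Hausdorff distance, as i → ∞. -/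
open Set Pointwise MeasureTheory ENNReal

noncomputable section

variable {E : Type*}

section Aux

open Filter Metric EMetric

/-- Padding a sum indexed by `Fin m` to a sum indexed by `Fin N` for `m ≤ N`. -/
lemma sum_pad {Mo : Type*} [AddCommMonoid Mo] {m N : ℕ} (hmN : m ≤ N) (G : Fin m → Mo) :
    (∑ i : Fin N, if h : (i : ℕ) < m then G ⟨i, h⟩ else 0) = ∑ j : Fin m, G j := by
  have h1 : (∑ i : Fin N, if h : (i : ℕ) < m then G ⟨i, h⟩ else 0)
      = ∑ i ∈ Finset.range N, (if h : i < m then G ⟨i, h⟩ else 0) :=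
    Fin.sum_univ_eq_sum_range (fun i => if h : i < m then G ⟨i, h⟩ else 0) N
  have h2 : (∑ j : Fin m, G j)
      = ∑ i ∈ Finset.range m, (if h : i < m then G ⟨i, h⟩ else 0) := by
    rw [← Fin.sum_univ_eq_sum_range (fun i => if h : i < m then G ⟨i, h⟩ else 0) m]
    exact Finset.sum_congr rfl fun j _ => by rw [dif_pos j.isLt]
  rw [h1, h2]
  exact (Finset.sum_subset (Finset.range_subset_range.2 hmN) (fun i _ hi => by
    rw [Finset.mem_range] at hi
    rw [dif_neg hi])).symm

/-- The convex hull of a compact set in a finite-dimensional normed space is compact. -/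
lemma isCompact_convexHull_fd {F : Type*} [NormedAddCommGroup F] [NormedSpace ℝ F]
    [FiniteDimensional ℝ F] {s : Set F} (hs : IsCompact s) :
    IsCompact (convexHull ℝ s) := by
  rcases s.eq_empty_or_nonempty with rfl | ⟨x₀, hx₀⟩
  · simp
  set N := Module.finrank ℝ F + 1 with hN
  set f : (Fin N → ℝ) × (Fin N → F) → F := fun p => ∑ i, p.1 i • p.2 i with hf
  have hfc : Continuous f := by
    apply continuous_finset_sum
    intro i _
    exact ((continuous_apply i).comp continuous_fst).smul
      ((continuous_apply i).comp continuous_snd)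
  have himg : convexHull ℝ s =
      f '' (stdSimplex ℝ (Fin N) ×ˢ Set.pi Set.univ fun _ : Fin N => s) := by
    apply Subset.antisymm
    · intro x hx
      obtain ⟨ι, hfin, z, w, hzs, hind, hwpos, hw1, hxe⟩ :=
        eq_pos_convex_span_of_mem_convexHull hx
      letI := hfin
      have hcard : Fintype.card ι ≤ N := by
        refine le_trans hind.card_le_finrank_succ ?_
        exact Nat.add_le_add_right (Submodule.finrank_le _) 1
      set m := Fintype.card ι with hm
      let e : ι ≃ Fin m := Fintype.equivFin ι
      set w' : Fin N → ℝ := fun i => if h : (i : ℕ) < m then w (e.symm ⟨i, h⟩) else 0 with hw'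
      set z' : Fin N → F := fun i => if h : (i : ℕ) < m then z (e.symm ⟨i, h⟩) else x₀ with hz'
      have hw'0 : ∀ i, 0 ≤ w' i := by
        intro i
        by_cases h : (i : ℕ) < m
        · simp only [hw', dif_pos h]; exact (hwpos _).le
        · simp only [hw', dif_neg h]; exact le_refl 0
      have hsum_e : ∀ (g : ι → ℝ), ∑ j : Fin m, g (e.symm j) = ∑ i : ι, g i := fun g =>
        Equiv.sum_comp e.symm g
      have hw'1 : ∑ i, w' i = 1 := by
        rw [hw']
        rw [sum_pad hcard (fun j => w (e.symm j))]
        rw [hsum_e w, hw1]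
      have hxval : f (w', z') = x := by
        have : ∀ i : Fin N, w' i • z' i
            = if h : (i : ℕ) < m then w (e.symm ⟨i, h⟩) • z (e.symm ⟨i, h⟩) else 0 := by
          intro i
          by_cases h : (i : ℕ) < m
          · simp only [hw', hz', dif_pos h]
          · simp only [hw', hz', dif_neg h, zero_smul]
        calc f (w', z') = ∑ i : Fin N,
              (if h : (i : ℕ) < m then w (e.symm ⟨i, h⟩) • z (e.symm ⟨i, h⟩) else 0) :=
              Finset.sum_congr rfl fun i _ => this i
          _ = ∑ j : Fin m, w (e.symm j) • z (e.symm j) :=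
              sum_pad hcard (fun j => w (e.symm j) • z (e.symm j))
          _ = ∑ i : ι, w i • z i := Equiv.sum_comp e.symm (fun i => w i • z i)
          _ = x := hxe
      refine ⟨(w', z'), ⟨⟨hw'0, hw'1⟩, fun i _ => ?_⟩, hxval⟩
      by_cases h : (i : ℕ) < m
      · simp only [hz', dif_pos h]
        exact hzs ⟨_, rfl⟩
      · simp only [hz', dif_neg h]
        exact hx₀
    · rintro x ⟨⟨w, g⟩, ⟨hw, hg⟩, rfl⟩
      exact (convex_convexHull ℝ s).sum_mem (fun i _ => hw.1 i) hw.2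
        (fun i _ => subset_convexHull ℝ s (hg i (Set.mem_univ i)))
  rw [himg]
  exact (((isCompact_stdSimplex ℝ _).prod (isCompact_univ_pi fun _ => hs)).image hfc)

/-- Shrinking lemma: a decreasing sequence of compact closed sets whose intersection lies in an
open set is eventually inside that open set. -/
lemma exists_subset_of_iInter_subset_open {X : Type*} [TopologicalSpace X] {C : ℕ → Set X}
    (hdec : ∀ i, C (i + 1) ⊆ C i) (hcomp : ∀ i, IsCompact (C i)) (hcl : ∀ i, IsClosed (C i))
    {U : Set X} (hU : IsOpen U) (hsub : (⋂ i, C i) ⊆ U) : ∃ N, C N ⊆ U := by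
  by_contra h
  push_neg at h
  have hne : ∀ n, (C n \ U).Nonempty := by
    intro n
    obtain ⟨x, hx, hxU⟩ := not_subset.1 (h n)
    exact ⟨x, hx, hxU⟩
  obtain ⟨x, hx⟩ := IsCompact.nonempty_iInter_of_sequence_nonempty_isCompact_isClosed
    (fun n => C n \ U) (fun n => diff_subset_diff_left (hdec n)) hne
    ((hcomp 0).diff hU) (fun n => (hcl n).sdiff hU)
  have hx' := mem_iInter.1 hx
  exact (hx' 0).2 (hsub (mem_iInter.2 fun n => (hx' n).1))

end Aux

open Filter in
/-- Corollary: Hausdorff convergence of iterated 𝓛-closures.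
Let `𝓛` be a nonempty class of `d`-dimensional closed convex sets in `ℝ^d` whose
recession cones are linear spaces, `M := ℝ^d \ ⋃_{L ∈ 𝓛} int L`, and let `K` be a
bounded line-free closed convex set. Then `R_𝓛^i(K)` converges to `conv(K ∩ M)` in the
Hausdorff distance as `i → ∞`. -/
theorem stmt10 (d : ℕ) (𝓛 : Set (Set (Euc d))) (h𝓛ne : 𝓛.Nonempty)
    (h𝓛 : ∀ L ∈ 𝓛, IsClosed L ∧ Convex ℝ L ∧ setDim L = d ∧
      ∃ W : Submodule ℝ (Euc d), recCone L = (W : Set (Euc d)))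
    (M : Set (Euc d)) (hM : M = univ \ ⋃ L ∈ 𝓛, interior L)
    (K : Set (Euc d)) (hKcl : IsClosed K) (hKcv : Convex ℝ K)
    (hKlf : LineFree K) (hKb : Bornology.IsBounded K) :
    Tendsto (fun i : ℕ => EMetric.hausdorffEdist (lcloIter 𝓛 i K) (convexHull ℝ (K ∩ M)))
      atTop (nhds 0) := by
  classical
  obtain ⟨L₀, hL₀⟩ := h𝓛ne
  set T : Set (Euc d) := convexHull ℝ (K ∩ M) with hT
  set Kc : ℕ → Set (Euc d) := fun i => lcloIter 𝓛 i K with hKc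
  have hK0 : IsCompact K := Metric.isCompact_of_isClosed_isBounded hKcl hKb
  -- each iterate is compact and convex
  have hcomp : ∀ i, IsCompact (Kc i) ∧ Convex ℝ (Kc i) := by
    intro i
    induction i with
    | zero => exact ⟨hK0, hKcv⟩
    | succ n ih =>
      have h1 : ∀ L : Set (Euc d), IsCompact (lred L (Kc n)) := fun L =>
        isCompact_convexHull_fd (ih.1.diff isOpen_interior)
      have hcl : IsClosed (lclo 𝓛 (Kc n)) :=
        isClosed_biInter fun L _ => (h1 L).isClosed
      refine ⟨(h1 L₀).of_isClosed_subset hcl (biInter_subset_of_mem hL₀), ?_⟩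
      exact convex_iInter₂ fun L _ => convex_convexHull ℝ _
  -- the iterates are decreasing
  have hdec : ∀ i, Kc (i + 1) ⊆ Kc i := by
    intro i
    calc Kc (i + 1) ⊆ lred L₀ (Kc i) := biInter_subset_of_mem hL₀
      _ ⊆ convexHull ℝ (Kc i) := convexHull_mono diff_subset
      _ = Kc i := (hcomp i).2.convexHull_eq
  have hmono : Antitone Kc := antitone_nat_of_succ_le hdec
  set Ki : Set (Euc d) := ⋂ i, Kc i with hKi
  have hKicl : IsClosed Ki := isClosed_iInter fun i => (hcomp i).1.isClosed
  have hKicomp : IsCompact Ki := (hcomp 0).1.of_isClosed_subset hKicl (iInter_subset _ 0)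
  have hKicv : Convex ℝ Ki := convex_iInter fun i => (hcomp i).2
  -- M is closed
  have hMcl : IsClosed M := by
    rw [hM, ← Set.compl_eq_univ_diff]
    exact (isOpen_biUnion fun L _ => isOpen_interior).isClosed_compl
  have hTcomp : IsCompact T := isCompact_convexHull_fd (hK0.inter_right hMcl)
  -- the target is contained in every iterate
  have hTsub : ∀ i, T ⊆ Kc i := by
    intro i
    induction i with
    | zero => exact convexHull_min inter_subset_left hKcv
    | succ n ih =>
      refine subset_iInter₂ fun L hL => ?_
      refine convexHull_mono fun x hx => ?_
      refine ⟨ih (subset_convexHull ℝ _ hx), ?_⟩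
      intro hxint
      have hxM : x ∈ M := hx.2
      rw [hM] at hxM
      exact hxM.2 (Set.mem_biUnion hL hxint)
  -- fixed point property of the intersection
  have hfix : ∀ L ∈ 𝓛, Ki ⊆ convexHull ℝ (Ki \ interior L) := by
    intro L hL
    have hCcomp : IsCompact (Ki \ interior L) := hKicomp.diff isOpen_interior
    have hhullcomp : IsCompact (convexHull ℝ (Ki \ interior L)) := isCompact_convexHull_fd hCcomp
    have key : ∀ δ : ℝ, 0 < δ →
        Ki ⊆ Metric.cthickening δ (convexHull ℝ (Ki \ interior L)) := by
      intro δ hδ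
      have hCdec : ∀ n, (Kc (n + 1) \ interior L) ⊆ (Kc n \ interior L) := fun n =>
        diff_subset_diff_left (hdec n)
      have hCiEq : (⋂ n, Kc n \ interior L) = Ki \ interior L := by
        ext x
        simp only [mem_iInter, mem_diff, hKi]
        constructor
        · intro h
          exact ⟨fun n => (h n).1, (h 0).2⟩
        · intro h n
          exact ⟨h.1 n, h.2⟩
      obtain ⟨N, hN⟩ := exists_subset_of_iInter_subset_open hCdec
        (fun n => (hcomp n).1.diff isOpen_interior)
        (fun n => (hcomp n).1.isClosed.sdiff isOpen_interior)
        (Metric.isOpen_thickening (δ := δ) (E := Ki \ interior L))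
        (by rw [hCiEq]; exact Metric.self_subset_thickening hδ _)
      have h2 : Kc N \ interior L ⊆
          Metric.cthickening δ (convexHull ℝ (Ki \ interior L)) :=
        hN.trans ((Metric.thickening_subset_cthickening δ _).trans
          (Metric.cthickening_subset_of_subset δ (subset_convexHull ℝ _)))
      have h3 : convexHull ℝ (Kc N \ interior L) ⊆
          Metric.cthickening δ (convexHull ℝ (Ki \ interior L)) :=
        convexHull_min h2 ((convex_convexHull ℝ _).cthickening δ)
      calc Ki ⊆ Kc (N + 1) := iInter_subset _ (N + 1)
        _ ⊆ convexHull ℝ (Kc N \ interior L) := biInter_subset_of_mem hL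
        _ ⊆ _ := h3
    intro x hx
    have hxcl : x ∈ closure (convexHull ℝ (Ki \ interior L)) := by
      rw [Metric.closure_eq_iInter_cthickening]
      exact mem_iInter₂.2 fun δ hδ => key δ hδ hx
    rwa [hhullcomp.isClosed.closure_eq] at hxcl
  -- all extreme points of the intersection lie in K ∩ M
  have hext : Ki.extremePoints ℝ ⊆ K ∩ M := by
    intro x hx
    refine ⟨iInter_subset Kc 0 hx.1, ?_⟩
    rw [hM]
    refine ⟨mem_univ x, fun hcon => ?_⟩
    obtain ⟨L, hL, hxL⟩ := Set.mem_iUnion₂.1 hcon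
    have heq : Ki = convexHull ℝ (Ki \ interior L) :=
      Subset.antisymm (hfix L hL) (convexHull_min diff_subset hKicv)
    have hx' : x ∈ (convexHull ℝ (Ki \ interior L)).extremePoints ℝ := by
      rw [← heq]; exact hx
    have hxmem : x ∈ Ki \ interior L := extremePoints_convexHull_subset hx'
    exact hxmem.2 hxL
  -- Krein–Milman : the intersection is contained in the target
  have hKiT : Ki ⊆ T := by
    have hKM := closure_convexHull_extremePoints hKicomp hKicv
    rw [← hKM]
    refine (closure_mono (convexHull_mono hext)).trans ?_
    rw [hTcomp.isClosed.closure_eq]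
  have hKieq : Ki = T := Subset.antisymm hKiT (subset_iInter fun i => hTsub i)
  -- conclude the Hausdorff convergence
  rw [ENNReal.tendsto_atTop_zero]
  intro ε hε
  set U : Set (Euc d) := {x | EMetric.infEdist x Ki < ε} with hU
  have hUopen : IsOpen U := isOpen_lt EMetric.continuous_infEdist continuous_const
  have hKiU : Ki ⊆ U := by
    intro x hx
    show EMetric.infEdist x Ki < ε
    rw [show EMetric.infEdist x Ki = 0 from EMetric.infEdist_zero_of_mem hx]
    exact hε
  obtain ⟨N, hN⟩ := exists_subset_of_iInter_subset_open hdec (fun i => (hcomp i).1)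
    (fun i => (hcomp i).1.isClosed) hUopen hKiU
  refine ⟨N, fun n hn => ?_⟩
  have hsubU : Kc n ⊆ U := (hmono hn).trans hN
  show EMetric.hausdorffEdist (Kc n) T ≤ ε
  rw [← hKieq]
  apply EMetric.hausdorffEdist_le_of_infEdist
  · intro x hx
    exact le_of_lt (hsubU hx)
  · intro x hx
    rw [EMetric.infEdist_zero_of_mem (mem_iInter.1 hx n)]
    exact zero_le
end
end

section
/- Let K and L be closed convex sets in ℝ^d such that the lineality space of K is not contained in rec(L) ∪ (−rec(L)). Then R_L(K) = K. -/
open Set Pointwise MeasureTheory ENNReal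

noncomputable section

variable {E : Type*}

lemma leaves {d : ℕ} {L : Set (Euc d)} (hLcl : IsClosed L) (hLcv : Convex ℝ L)
    {v : Euc d} (hv : v ∉ recCone L) (x : Euc d) :
    ∃ s : ℝ, 0 ≤ s ∧ x + s • v ∉ L := by
  by_contra h
  push_neg at h
  have hx : x ∈ L := by simpa using h 0 le_rfl
  simp only [recCone, Set.mem_setOf_eq] at hv
  push_neg at hv
  obtain ⟨x₀, hx₀, t₀, ht₀, hnot⟩ := hv
  apply hnot
  have key : ∀ n : ℕ, (1 - (1:ℝ)/(n+1)) • x₀ + ((1:ℝ)/(n+1)) • x + t₀ • v ∈ L := by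
    intro n
    have hpos : (0:ℝ) < 1/(n+1) := by positivity
    have h1 : (1:ℝ)/(n+1) ≤ 1 := by
      rw [div_le_one (by positivity)]
      linarith [Nat.cast_nonneg (α := ℝ) n]
    have hmem : x + ((n+1 : ℝ) * t₀) • v ∈ L := h _ (by positivity)
    have hc := hLcv (a := 1 - 1/(n+1)) (b := 1/(n+1)) hx₀ hmem (by linarith) hpos.le (by ring)
    convert hc using 1
    rw [smul_add, smul_smul, add_assoc]
    congr 2
    congr 1
    field_simp
  have h0 : Filter.Tendsto (fun n : ℕ => (1:ℝ)/(n+1)) Filter.atTop (nhds 0) :=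
    tendsto_one_div_add_atTop_nhds_zero_nat
  have hlim : Filter.Tendsto (fun n : ℕ => (1 - (1:ℝ)/(n+1)) • x₀ + ((1:ℝ)/(n+1)) • x + t₀ • v)
      Filter.atTop (nhds (x₀ + t₀ • v)) := by
    have := (((tendsto_const_nhds (x := (1:ℝ))).sub h0).smul_const x₀).add
      ((h0.smul_const x).add (tendsto_const_nhds (x := t₀ • v)))
    simpa [add_assoc] using this
  exact hLcl.mem_of_tendsto hlim (Filter.Eventually.of_forall key)

/-- Lemma: no reduction happens.
If `K` and `L` are closed convex sets in `ℝ^d` with `lineal(K) ⊄ rec(L) ∪ (−rec(L))`,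
then `R_L(K) = K`. -/
theorem stmt11 (d : ℕ) (K L : Set (Euc d))
    (hKcl : IsClosed K) (hKcv : Convex ℝ K) (hLcl : IsClosed L) (hLcv : Convex ℝ L)
    (h : ¬ (linealSp K ⊆ recCone L ∪ -recCone L)) :
    lred L K = K := by
  rw [Set.not_subset] at h
  obtain ⟨v, hvlin, hvnot⟩ := h
  simp only [Set.mem_union, Set.mem_neg, not_or] at hvnot
  obtain ⟨hv1, hv2⟩ := hvnot
  apply subset_antisymm
  · exact convexHull_min Set.diff_subset hKcv
  · intro x hx
    by_cases hxL : x ∈ interior L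
    · have hxLL : x ∈ L := interior_subset hxL
      obtain ⟨s, hs0, hsn⟩ := leaves hLcl hLcv hv1 x
      obtain ⟨r, hr0, hrn⟩ := leaves hLcl hLcv hv2 x
      have hs : 0 < s := by
        rcases hs0.lt_or_eq with h' | h'
        · exact h'
        · exact absurd (by simpa [← h'] using hxLL) hsn
      have hr : 0 < r := by
        rcases hr0.lt_or_eq with h' | h'
        · exact h'
        · exact absurd (by simpa [← h'] using hxLL) hrn
      have ha : x + s • v ∈ K \ interior L :=
        ⟨hvlin x hx s, fun hc => hsn (interior_subset hc)⟩
      have hb : x + (-r) • v ∈ K \ interior L := by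
        refine ⟨hvlin x hx (-r), fun hc => hrn (interior_subset ?_)⟩
        simpa [neg_smul] using hc
      have hsum : 0 < s + r := by linarith
      have hcomb : (r/(s+r)) • (x + s • v) + (s/(s+r)) • (x + (-r) • v) = x := by
        match_scalars <;> field_simp <;> ring
      have := (convex_convexHull ℝ (K \ interior L)) (a := r/(s+r)) (b := s/(s+r))
        (subset_convexHull ℝ _ ha) (subset_convexHull ℝ _ hb)
        (by positivity) (by positivity)
        (by field_simp; ring)
      rw [hcomb] at this
      exact this
    · exact subset_convexHull ℝ _ ⟨hx, hxL⟩
end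
end

section
/- Let L be a d-dimensional rational polyhedron in ℝ^d with maxfw(L) < ∞ and let p ∈ ℚ^d ∩ int(L). Suppose k, ℓ, m ∈ ℕ satisfy: (a) maxfw(L) ≤ k; (b) for every facet F of L one has (ℓ·aff(F)) ∩ ℤ^d ≠ ∅; (c) m·p ∈ ℤ^d. Then (k·ℓ·m)! · ext((L−p)°) ⊆ ℤ^d, where (L−p)° is the polar set of L−p and ext denotes the set of extreme points. -/
open Set Pointwise MeasureTheory ENNReal
set_option maxHeartbeats 1000000

noncomputable section

variable {E : Type*}

/-- The polar set `C° = {y : ⟨y,x⟩ ≤ 1 for all x ∈ C}`. -/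
def polarSet (d : ℕ) (C : Set (Euc d)) : Set (Euc d) :=
  {y | ∀ x ∈ C, (inner ℝ y x : ℝ) ≤ 1}

section Stmt13Aux
variable {d : ℕ}




lemma polar_convex (C : Set (Euc d)) : Convex ℝ (polarSet d C) := by
  intro y1 h1 y2 h2 s t hs ht hst
  intro x hx
  show (inner ℝ (s • y1 + t • y2) x : ℝ) ≤ 1
  have e : (inner ℝ (s • y1 + t • y2) x : ℝ) = s * inner ℝ y1 x + t * inner ℝ y2 x := by
    rw [inner_add_left, real_inner_smul_left, real_inner_smul_left]
  rw [e]
  have g1 := h1 x hx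
  have g2 := h2 x hx
  nlinarith [mul_le_mul_of_nonneg_left g1 hs, mul_le_mul_of_nonneg_left g2 ht]

lemma polar_hull {n : ℕ} (a : Fin n → Euc d) (β : Fin n → ℝ) (hβ : ∀ i, 0 < β i)
    (C : Set (Euc d)) (hC : ∀ x, x ∈ C ↔ ∀ i, (inner ℝ (a i) x : ℝ) ≤ β i) :
    polarSet d C = convexHull ℝ (insert (0 : Euc d) (range fun i => (β i)⁻¹ • a i)) := by
  set S : Set (Euc d) := insert (0 : Euc d) (range fun i => (β i)⁻¹ • a i) with hS
  have hSfin : S.Finite := (finite_range _).insert _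
  apply Subset.antisymm
  · intro y hy
    by_contra hcon
    obtain ⟨f, u, hfa, hfy⟩ :=
      geometric_hahn_banach_closed_point (convex_convexHull ℝ S)
        (hSfin.isCompact_convexHull ℝ).isClosed hcon
    have h0 : (0 : ℝ) < u := by
      have := hfa 0 (subset_convexHull ℝ S (mem_insert _ _))
      simpa using this
    set v : Euc d := (InnerProductSpace.toDual ℝ (Euc d)).symm f with hv
    have hvx : ∀ x : Euc d, (inner ℝ v x : ℝ) = f x := fun x =>
      InnerProductSpace.toDual_symm_apply
    have hxC : u⁻¹ • v ∈ C := by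
      rw [hC]
      intro i
      have hβi := hβ i
      have hi : f ((β i)⁻¹ • a i) < u :=
        hfa _ (subset_convexHull ℝ S (mem_insert_of_mem _ ⟨i, rfl⟩))
      rw [← hvx, real_inner_smul_right] at hi
      have h2 : (inner ℝ v (a i) : ℝ) < β i * u := by
        have := mul_lt_mul_of_pos_left hi hβi
        rwa [mul_inv_cancel_left₀ hβi.ne'] at this
      rw [real_inner_smul_right, real_inner_comm]
      have h3 : u⁻¹ * (inner ℝ v (a i) : ℝ) ≤ u⁻¹ * (β i * u) :=
        mul_le_mul_of_nonneg_left h2.le (inv_nonneg.2 h0.le)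
      calc u⁻¹ * (inner ℝ v (a i) : ℝ) ≤ u⁻¹ * (β i * u) := h3
        _ = β i := by field_simp
    have h4 := hy _ hxC
    rw [real_inner_smul_right, real_inner_comm, hvx] at h4
    have h5 : u * (u⁻¹ * f y) ≤ u * 1 := mul_le_mul_of_nonneg_left h4 h0.le
    rw [mul_inv_cancel_left₀ h0.ne'] at h5
    linarith
  · apply convexHull_min _ (polar_convex C)
    rintro y (rfl | ⟨i, rfl⟩)
    · intro x hx; show (inner ℝ (0 : Euc d) x : ℝ) ≤ 1; simp
    · intro x hx
      have h1 := (hC x).1 hx i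
      have hβi := hβ i
      show (inner ℝ ((β i)⁻¹ • a i) x : ℝ) ≤ 1
      rw [real_inner_smul_left]
      calc (β i)⁻¹ * (inner ℝ (a i) x : ℝ) ≤ (β i)⁻¹ * β i :=
            mul_le_mul_of_nonneg_left h1 (inv_nonneg.2 hβi.le)
        _ = 1 := inv_mul_cancel₀ hβi.ne'




lemma inner_eq' (x y : Euc d) : (inner ℝ x y : ℝ) = ∑ i, x i * y i := by
  simp [PiLp.inner_apply]; exact Finset.sum_congr rfl fun i _ => mul_comm _ _

noncomputable def innF (u : Euc d) : Euc d →ₗ[ℝ] ℝ where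
  toFun x := (inner ℝ u x : ℝ)
  map_add' x y := inner_add_right u x y
  map_smul' c x := by
    show (inner ℝ u (c • x) : ℝ) = c * (inner ℝ u x : ℝ)
    rw [real_inner_smul_right]

lemma finrank_ker_innF (u : Euc d) (hu : u ≠ 0) :
    Module.finrank ℝ (LinearMap.ker (innF u)) + 1 = d := by
  have hr : LinearMap.range (innF u) = ⊤ := by
    rw [LinearMap.range_eq_top]
    intro t
    refine ⟨(t / (inner ℝ u u : ℝ)) • u, ?_⟩
    have h0 : (inner ℝ u u : ℝ) ≠ 0 := inner_self_ne_zero.2 hu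
    show (inner ℝ u (_ : Euc d) : ℝ) = t
    rw [real_inner_smul_right]
    exact div_mul_cancel₀ t h0
  have := LinearMap.finrank_range_add_finrank_ker (innF u)
  rw [hr, finrank_top] at this
  simp only [finrank_euclideanSpace_fin, Module.finrank_self] at this
  omega

noncomputable def hypAff (u : Euc d) (M : ℝ) : AffineSubspace ℝ (Euc d) where
  carrier := {x | (inner ℝ u x : ℝ) = M}
  smul_vsub_vadd_mem' := by
    intro t p1 p2 p3 h1 h2 h3
    simp only [mem_setOf_eq] at *
    have : (inner ℝ u (t • (p1 -ᵥ p2) +ᵥ p3) : ℝ)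
        = t * ((inner ℝ u p1 : ℝ) - (inner ℝ u p2 : ℝ)) + (inner ℝ u p3 : ℝ) := by
      rw [vadd_eq_add, vsub_eq_sub, inner_add_right, real_inner_smul_right, inner_sub_right]
    rw [this, h1, h2, h3]; ring

lemma extreme_classify {S P : Set (Euc d)}
    (hP : P = convexHull ℝ S) {y : Euc d} (hy : y ∈ P.extremePoints ℝ) :
    y ∈ S ∧ y ∉ convexHull ℝ (S \ {y}) := by
  subst hP
  have h1 : y ∈ S := extremePoints_convexHull_subset hy
  have h2 := ((convex_convexHull ℝ S).mem_extremePoints_iff_mem_diff_convexHull_diff).1 hy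
  refine ⟨h1, fun hcon => h2.2 ?_⟩
  exact convexHull_mono (diff_subset_diff_left (subset_convexHull ℝ S)) hcon

lemma exists_ball {n : ℕ} (a : Fin n → Euc d) (β : Fin n → ℝ) (w : Euc d)
    (Q : Fin n → Prop) (hw : ∀ i, ¬ Q i → (inner ℝ (a i) w : ℝ) < β i) :
    ∃ ε > 0, ∀ x : Euc d, dist x w < ε → ∀ i, ¬ Q i → (inner ℝ (a i) x : ℝ) < β i := by
  classical
  have hopen : IsOpen {x : Euc d | ∀ i, ¬ Q i → (inner ℝ (a i) x : ℝ) < β i} := by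
    have he : {x : Euc d | ∀ i, ¬ Q i → (inner ℝ (a i) x : ℝ) < β i} =
        ⋂ i, {x : Euc d | ¬ Q i → (inner ℝ (a i) x : ℝ) < β i} := by
      ext x; simp [mem_iInter]
    rw [he]
    refine isOpen_iInter_of_finite fun i => ?_
    by_cases hq : Q i
    · have : {x : Euc d | ¬ Q i → (inner ℝ (a i) x : ℝ) < β i} = univ := by
        ext x; simp [hq]
      rw [this]; exact isOpen_univ
    · have : {x : Euc d | ¬ Q i → (inner ℝ (a i) x : ℝ) < β i}
          = {x : Euc d | (inner ℝ (a i) x : ℝ) < β i} := by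
        ext x; simp [hq]
      rw [this]
      exact isOpen_lt (Continuous.inner continuous_const continuous_id) continuous_const
  have hwmem : w ∈ {x : Euc d | ∀ i, ¬ Q i → (inner ℝ (a i) x : ℝ) < β i} := hw
  obtain ⟨ε, hε, hball⟩ := Metric.isOpen_iff.1 hopen w hwmem
  exact ⟨ε, hε, fun x hx => hball (by rwa [Metric.mem_ball])⟩


lemma exists_w {n : ℕ} (a : Fin n → Euc d) (β : Fin n → ℝ) (hβ : ∀ i, 0 < β i)
    (y : Euc d) (hy0 : y ≠ 0)
    (hstrong : y ∉ convexHull ℝ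
      ((insert (0 : Euc d) (range fun i => (β i)⁻¹ • a i)) \ {y})) :
    ∃ w : Euc d, (inner ℝ y w : ℝ) = 1 ∧
      (∀ i, ¬ ((β i)⁻¹ • a i = y) → (inner ℝ (a i) w : ℝ) < β i) := by
  set T : Set (Euc d) := (insert (0 : Euc d) (range fun i => (β i)⁻¹ • a i)) \ {y} with hT
  have hTfin : T.Finite := (((finite_range _).insert _).diff)
  obtain ⟨f, u, hfa, hfy⟩ :=
    geometric_hahn_banach_closed_point (convex_convexHull ℝ T)
      (hTfin.isCompact_convexHull ℝ).isClosed hstrong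
  have h0T : (0 : Euc d) ∈ T := ⟨mem_insert _ _, by simpa using (Ne.symm hy0)⟩
  have h0 : (0 : ℝ) < u := by
    have := hfa 0 (subset_convexHull ℝ T h0T)
    simpa using this
  set v : Euc d := (InnerProductSpace.toDual ℝ (Euc d)).symm f with hv
  have hvx : ∀ x : Euc d, (inner ℝ v x : ℝ) = f x := fun x =>
    InnerProductSpace.toDual_symm_apply
  -- x̂ := u⁻¹ • v satisfies ⟨y,x̂⟩ > 1 and strict ineqs for the "other" i
  set xh : Euc d := u⁻¹ • v with hxh
  have hyx : (1 : ℝ) < (inner ℝ y xh : ℝ) := by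
    have : u < (inner ℝ v y : ℝ) := by rw [hvx]; exact hfy
    rw [hxh, real_inner_smul_right, real_inner_comm]
    have h5 : u⁻¹ * u < u⁻¹ * (inner ℝ v y : ℝ) :=
      mul_lt_mul_of_pos_left this (inv_pos.2 h0)
    rwa [inv_mul_cancel₀ h0.ne'] at h5
  have hother : ∀ i, ¬ ((β i)⁻¹ • a i = y) → (inner ℝ (a i) xh : ℝ) < β i := by
    intro i hne
    have hmem : (β i)⁻¹ • a i ∈ T :=
      ⟨mem_insert_of_mem _ ⟨i, rfl⟩, by simpa using hne⟩
    have hi : f ((β i)⁻¹ • a i) < u := hfa _ (subset_convexHull ℝ T hmem)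
    rw [← hvx, real_inner_smul_right] at hi
    have hβi := hβ i
    have h2 : (inner ℝ v (a i) : ℝ) < β i * u := by
      have := mul_lt_mul_of_pos_left hi hβi
      rwa [mul_inv_cancel_left₀ hβi.ne'] at this
    rw [hxh, real_inner_smul_right, real_inner_comm]
    have h3 : u⁻¹ * (inner ℝ v (a i) : ℝ) < u⁻¹ * (β i * u) :=
      mul_lt_mul_of_pos_left h2 (inv_pos.2 h0)
    calc u⁻¹ * (inner ℝ v (a i) : ℝ) < u⁻¹ * (β i * u) := h3
      _ = β i := by field_simp
  -- rescale
  set r : ℝ := (inner ℝ y xh : ℝ) with hr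
  have hr1 : 1 < r := hyx
  have hrpos : 0 < r := by linarith
  refine ⟨r⁻¹ • xh, ?_, ?_⟩
  · rw [real_inner_smul_right, ← hr, inv_mul_cancel₀ hrpos.ne']
  · intro i hne
    have hi := hother i hne
    have hβi := hβ i
    rw [real_inner_smul_right]
    rcases le_or_gt (inner ℝ (a i) xh : ℝ) 0 with hle | hlt
    · have : r⁻¹ * (inner ℝ (a i) xh : ℝ) ≤ 0 :=
        mul_nonpos_of_nonneg_of_nonpos (inv_nonneg.2 hrpos.le) hle
      linarith
    · have h6 : r⁻¹ * (inner ℝ (a i) xh : ℝ) < 1 * (inner ℝ (a i) xh : ℝ) := by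
        apply mul_lt_mul_of_pos_right _ hlt
        rw [inv_lt_one_iff₀]; right; exact hr1
      nlinarith


lemma exists_primitive {d : ℕ} (q : Fin d → ℚ) (hq : q ≠ 0) :
    ∃ (z : Fin d → ℤ) (c0 : ℝ), 0 < c0 ∧ Finset.univ.gcd z = 1 ∧
      ∀ i, (z i : ℝ) = c0 * (q i : ℝ) := by
  classical
  set D : ℤ := ∏ i, ((q i).den : ℤ) with hD
  have hDpos : 0 < D := Finset.prod_pos fun i _ => by exact_mod_cast (q i).den_pos
  set z' : Fin d → ℤ := fun i => (q i).num * ∏ i' ∈ Finset.univ.erase i, ((q i').den : ℤ)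
    with hz'
  have key : ∀ i, (z' i : ℚ) = q i * (D : ℚ) := by
    intro i
    have hsplit : ((q i).den : ℤ) * ∏ i' ∈ Finset.univ.erase i, ((q i').den : ℤ) = D :=
      Finset.mul_prod_erase Finset.univ (fun i' => ((q i').den : ℤ)) (Finset.mem_univ i)
    have hnum : (q i) * ((q i).den : ℚ) = ((q i).num : ℚ) := Rat.mul_den_eq_num _
    simp only [hz']
    rw [← hsplit]
    push_cast
    rw [← hnum]
    ring
  obtain ⟨i0, hi0⟩ := Function.ne_iff.1 hq
  have hz'0 : z' i0 ≠ 0 := by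
    apply mul_ne_zero
    · exact_mod_cast Rat.num_ne_zero.2 hi0
    · exact Finset.prod_ne_zero_iff.2 fun i' _ => by exact_mod_cast (q i').den_nz
  set g : ℤ := Finset.univ.gcd z' with hg
  have hgne : g ≠ 0 := fun h => hz'0 (Finset.gcd_eq_zero_iff.1 h i0 (Finset.mem_univ i0))
  have hgnn : 0 ≤ g := by
    have h1 : |g| = g := by rw [Int.abs_eq_normalize, Finset.normalize_gcd]
    rw [← h1]; exact abs_nonneg g
  have hgpos : 0 < g := lt_of_le_of_ne hgnn (Ne.symm hgne)
  set z : Fin d → ℤ := fun i => z' i / g with hz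
  have hzz' : ∀ i, g * z i = z' i := fun i =>
    Int.mul_ediv_cancel' (Finset.gcd_dvd (Finset.mem_univ i))
  have hgcd : Finset.univ.gcd z = 1 := Finset.gcd_div_eq_one (Finset.mem_univ i0) hz'0
  refine ⟨z, (D : ℝ) / (g : ℝ), by positivity, hgcd, ?_⟩
  intro i
  have hk : (z' i : ℝ) = (q i : ℝ) * (D : ℝ) := by exact_mod_cast congrArg (Rat.cast : ℚ → ℝ) (key i)
  have hzzi : (g : ℝ) * (z i : ℝ) = (z' i : ℝ) := by exact_mod_cast congrArg (Int.cast : ℤ → ℝ) (hzz' i)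
  have hgR : (g : ℝ) ≠ 0 := Int.cast_ne_zero.2 hgne
  field_simp
  rw [mul_comm ((z i : ℝ)) (g : ℝ), hzzi, hk]; ring

end Stmt13Aux

/-- Lemma: integrality of the polar, Part I.
Let `L` be a `d`-dimensional rational polyhedron with `maxfw(L) < ∞`, let
`p ∈ ℚ^d ∩ int L`, and let `k, ℓ, m ∈ ℕ` satisfy: (a) `maxfw(L) ≤ k`; (b) every facet
`F` of `L` has `(ℓ·aff F) ∩ ℤ^d ≠ ∅`; (c) `m·p ∈ ℤ^d`. Then
`(k·ℓ·m)! · ext((L−p)°) ⊆ ℤ^d`. -/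
theorem stmt13 (d : ℕ) (L : Set (Euc d))
    (hL : IsRatPolyhedron d L) (hLdim : setDim L = d)
    (hfin : ∀ u ∈ primFacetNormals d L, ∃ c : ℝ, ∀ x ∈ L, ∀ y ∈ L,
      (inner ℝ u x : ℝ) - inner ℝ u y ≤ c)
    (p : Euc d) (hpQ : ∀ i, ∃ q : ℚ, p i = (q : ℝ)) (hpL : p ∈ interior L)
    (k ℓ m : ℕ) (hk : 0 < k) (hℓ : 0 < ℓ) (hm : 0 < m)
    (ha : MaxFacetWidthLE d L (k : ℝ))
    (hb : ∀ F : Set (Euc d), IsFacetOf d L F →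
      (((ℓ : ℝ) • (affineSpan ℝ F : Set (Euc d))) ∩ latticePts d).Nonempty)
    (hc : ∀ i, ∃ z : ℤ, (m : ℝ) * p i = (z : ℝ)) :
    ((Nat.factorial (k * ℓ * m) : ℝ)) • ((polarSet d (L - {p})).extremePoints ℝ)
      ⊆ latticePts d := by
  classical
  obtain ⟨n, a, b, ha0, hLeq⟩ := hL
  set avec : Fin n → Euc d := fun i => (WithLp.toLp 2 (fun j => ((a i j : ℝ))) : Euc d) with havec
  have hinner : ∀ (i : Fin n) (x : Euc d),
      (inner ℝ (avec i) x : ℝ) = ∑ j, (a i j : ℝ) * x j := by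
    intro i x
    rw [inner_eq']
  have hmemL : ∀ x : Euc d, x ∈ L ↔ ∀ i, (inner ℝ (avec i) x : ℝ) ≤ (b i : ℝ) := by
    intro x
    rw [hLeq]
    simp only [mem_setOf_eq]
    constructor
    · intro h i; rw [hinner]; exact h i
    · intro h i; have := h i; rwa [hinner] at this
  have hLconv : Convex ℝ L := by
    intro x1 h1 x2 h2 s t hs ht hst
    rw [hmemL] at h1 h2 ⊢
    intro i
    have e : (inner ℝ (avec i) (s • x1 + t • x2) : ℝ)
        = s * inner ℝ (avec i) x1 + t * inner ℝ (avec i) x2 := by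
      rw [inner_add_right, real_inner_smul_right, real_inner_smul_right]
    rw [e]
    calc s * (inner ℝ (avec i) x1 : ℝ) + t * (inner ℝ (avec i) x2 : ℝ)
        ≤ s * (b i : ℝ) + t * (b i : ℝ) :=
          add_le_add (mul_le_mul_of_nonneg_left (h1 i) hs)
            (mul_le_mul_of_nonneg_left (h2 i) ht)
      _ = (b i : ℝ) := by rw [← add_mul, hst, one_mul]
  have havne : ∀ i, avec i ≠ 0 := by
    intro i hcon
    apply ha0 i
    funext j
    simp only [Pi.zero_apply]
    have h1 : avec i j = 0 := by rw [hcon]; rfl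
    have h2 : ((a i j : ℝ)) = 0 := h1
    exact_mod_cast h2
  set β : Fin n → ℝ := fun i => (b i : ℝ) - (inner ℝ (avec i) p : ℝ) with hβdef
  have hβpos : ∀ i, 0 < β i := by
    intro i
    have hpl2 := hpL
    rw [mem_interior_iff_mem_nhds] at hpl2
    obtain ⟨ε, hε, hball⟩ := Metric.mem_nhds_iff.1 hpl2
    have hna : (0:ℝ) < ‖avec i‖ := norm_pos_iff.2 (havne i)
    set s : ℝ := ε / 2 / ‖avec i‖ with hs
    have hspos : 0 < s := by positivity
    have hmem : p + s • avec i ∈ L := by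
      apply hball
      rw [Metric.mem_ball, dist_eq_norm]
      have e2 : p + s • avec i - p = s • avec i := by abel
      rw [e2, norm_smul, Real.norm_eq_abs, abs_of_pos hspos, hs,
        div_mul_cancel₀ _ hna.ne']
      linarith
    have h2 := (hmemL _).1 hmem i
    rw [inner_add_right, real_inner_smul_right, real_inner_self_eq_norm_mul_norm] at h2
    have h3 : 0 < s * (‖avec i‖ * ‖avec i‖) := by positivity
    simp only [hβdef]
    linarith
  have hmemC : ∀ x : Euc d, x ∈ L - {p} ↔ ∀ i, (inner ℝ (avec i) x : ℝ) ≤ β i := by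
    intro x
    constructor
    · intro hx
      obtain ⟨l, hl, pp, hpp, hlp⟩ := Set.mem_sub.1 hx
      rw [mem_singleton_iff] at hpp
      rw [hpp] at hlp
      subst hlp
      intro i
      have := (hmemL l).1 hl i
      rw [inner_sub_right]
      simp only [hβdef]; linarith
    · intro h
      rw [Set.mem_sub]
      refine ⟨x + p, ?_, p, mem_singleton p, by abel⟩
      rw [hmemL]
      intro i
      have := h i
      rw [inner_add_right]
      simp only [hβdef] at this; linarith
  have hCtoL : ∀ x' : Euc d, x' ∈ L - {p} → x' + p ∈ L := by
    intro x' hx'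
    obtain ⟨l, hl, pp, hpp, hlp⟩ := Set.mem_sub.1 hx'
    rw [mem_singleton_iff] at hpp
    rw [hpp] at hlp
    have e3 : x' + p = l := by rw [← hlp]; abel
    rwa [e3]
  have hpolar := polar_hull avec β hβpos (L - {p}) hmemC
  intro x0 hx0
  obtain ⟨y, hyext, rfl⟩ := Set.mem_smul_set.1 hx0
  by_cases hy0 : y = 0
  · subst hy0
    exact fun i => ⟨0, by simp⟩
  obtain ⟨hyS, hystrong⟩ := extreme_classify hpolar hyext
  have hyPolar : y ∈ polarSet d (L - {p}) := hyext.1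
  rcases mem_insert_iff.1 hyS with h0 | ⟨j, hj⟩
  · exact absurd h0 hy0
  obtain ⟨w, hw1, hwother⟩ := exists_w avec β hβpos y hy0 hystrong
  have hwC : w ∈ L - {p} := by
    rw [hmemC]
    intro i
    by_cases hQ : (β i)⁻¹ • avec i = y
    · have hai : avec i = β i • y := by rw [← hQ, smul_inv_smul₀ (hβpos i).ne']
      rw [hai, real_inner_smul_left, hw1, mul_one]
    · exact (hwother i hQ).le
  obtain ⟨ε, hεpos, hball⟩ := exists_ball avec β w (fun i => (β i)⁻¹ • avec i = y)
    (fun i h => hwother i h)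
  obtain ⟨z, c0, hc0pos, hgcd, hzq⟩ := exists_primitive (a j) (ha0 j)
  set uvec : Euc d := (WithLp.toLp 2 (fun i => (z i : ℝ)) : Euc d) with huvec
  set c : ℝ := c0 * β j with hcdef
  have hcpos : 0 < c := mul_pos hc0pos (hβpos j)
  have hjy : (β j)⁻¹ • avec j = y := hj
  have huyv : uvec = c • y := by
    ext i
    have h4 : (c • y) i = c * y i := rfl
    have hyi : y i = (β j)⁻¹ * (a j i : ℝ) := by rw [← hjy]; rfl
    have h5 : uvec i = c0 * (a j i : ℝ) := hzq i
    rw [h4, hyi, h5, hcdef]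
    have hβj : β j ≠ 0 := (hβpos j).ne'
    field_simp
  have hy_eq : y = c⁻¹ • uvec := by rw [huyv, inv_smul_smul₀ hcpos.ne']
  have huvec0 : uvec ≠ 0 := by
    intro hcon; apply hy0; rw [hy_eq, hcon, smul_zero]
  have hinner_u : ∀ x : Euc d, (inner ℝ uvec x : ℝ) = c * (inner ℝ y x : ℝ) := by
    intro x; rw [huyv, real_inner_smul_left]
  set M : ℝ := (inner ℝ uvec (w + p) : ℝ) with hM
  have hMw : M - (inner ℝ uvec p : ℝ) = c := by
    rw [hM, inner_add_right]
    have : (inner ℝ uvec w : ℝ) = c := by rw [hinner_u, hw1, mul_one]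
    linarith
  have hwpL : w + p ∈ L := hCtoL w hwC
  have hmax : ∀ x' ∈ L, (inner ℝ uvec x' : ℝ) ≤ M := by
    intro x' hx'
    have hx'C : x' - p ∈ L - {p} := Set.mem_sub.2 ⟨x', hx', p, rfl, rfl⟩
    have h1 := hyPolar _ hx'C
    have e1 : (inner ℝ uvec x' : ℝ) = c * (inner ℝ y (x' - p) : ℝ) + (inner ℝ uvec p : ℝ) := by
      rw [hinner_u, hinner_u, inner_sub_right]; ring
    rw [e1]
    have h6 : c * (inner ℝ y (x' - p) : ℝ) ≤ c * 1 := mul_le_mul_of_nonneg_left h1 hcpos.le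
    linarith
  set F : Set (Euc d) := {x | x ∈ L ∧ ∀ x' ∈ L, (inner ℝ uvec x' : ℝ) ≤ inner ℝ uvec x} with hF
  have hFiff : ∀ x, x ∈ F ↔ x ∈ L ∧ (inner ℝ uvec x : ℝ) = M := by
    intro x
    constructor
    · rintro ⟨hxL, hxmax⟩
      exact ⟨hxL, le_antisymm (hmax x hxL) (hxmax _ hwpL)⟩
    · rintro ⟨hxL, hxM⟩
      exact ⟨hxL, fun x' hx' => by rw [hxM]; exact hmax x' hx'⟩
  have hwpF : w + p ∈ F := (hFiff _).2 ⟨hwpL, rfl⟩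
  have hker : vectorSpan ℝ F = LinearMap.ker (innF uvec) := by
    apply le_antisymm
    · rw [vectorSpan_def, Submodule.span_le]
      rintro v ⟨x1, hx1, x2, hx2, rfl⟩
      have e1 := ((hFiff x1).1 hx1).2
      have e2 := ((hFiff x2).1 hx2).2
      simp only [SetLike.mem_coe, LinearMap.mem_ker]
      show (inner ℝ uvec (x1 -ᵥ x2) : ℝ) = 0
      rw [vsub_eq_sub, inner_sub_right, e1, e2, sub_self]
    · intro v hv
      have hv0 : (inner ℝ uvec v : ℝ) = 0 := LinearMap.mem_ker.1 hv
      by_cases hvz : v = 0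
      · subst hvz; exact Submodule.zero_mem _
      have hnv : (0:ℝ) < ‖v‖ := norm_pos_iff.2 hvz
      set t : ℝ := ε / 2 / ‖v‖ with ht
      have htpos : 0 < t := by positivity
      have hyv : (inner ℝ y v : ℝ) = 0 := by
        have h7 : c * (inner ℝ y v : ℝ) = 0 := by rw [← hinner_u v]; exact hv0
        exact (mul_eq_zero.1 h7).resolve_left hcpos.ne'
      have hx2C : w + t • v ∈ L - {p} := by
        rw [hmemC]
        intro i
        by_cases hQ : (β i)⁻¹ • avec i = y
        · have hai : avec i = β i • y := by rw [← hQ, smul_inv_smul₀ (hβpos i).ne']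
          rw [hai, real_inner_smul_left, inner_add_right, hw1, real_inner_smul_right, hyv]
          simp
        · apply le_of_lt
          apply hball _ _ i hQ
          rw [dist_eq_norm]
          have e4 : w + t • v - w = t • v := by abel
          rw [e4, norm_smul, Real.norm_eq_abs, abs_of_pos htpos, ht,
            div_mul_cancel₀ _ hnv.ne']
          linarith
      have hx2L : (w + t • v) + p ∈ L := hCtoL _ hx2C
      have hx2F : (w + t • v) + p ∈ F := by
        rw [hFiff]
        refine ⟨hx2L, ?_⟩
        have e5 : (w + t • v) + p = (w + p) + t • v := by abel
        rw [e5, inner_add_right, real_inner_smul_right, hv0, mul_zero, add_zero, hM]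
      have hmemvs : ((w + t • v) + p) -ᵥ (w + p) ∈ vectorSpan ℝ F :=
        vsub_mem_vectorSpan ℝ hx2F hwpF
      have he : ((w + t • v) + p) -ᵥ (w + p) = t • v := by
        rw [vsub_eq_sub]; abel
      rw [he] at hmemvs
      have h8 := Submodule.smul_mem (vectorSpan ℝ F) t⁻¹ hmemvs
      rwa [inv_smul_smul₀ htpos.ne'] at h8
  have hdim : setDim F + 1 = d := by
    show Module.finrank ℝ (vectorSpan ℝ F) + 1 = d
    rw [hker]
    exact finrank_ker_innF uvec huvec0
  have hconvF : Convex ℝ F := by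
    intro x1 h1 x2 h2 s t hs ht hst
    rw [hFiff] at h1 h2 ⊢
    refine ⟨hLconv h1.1 h2.1 hs ht hst, ?_⟩
    rw [inner_add_right, real_inner_smul_right, real_inner_smul_right, h1.2, h2.2]
    linear_combination M * hst
  have hextF : IsExtreme ℝ L F := by
    constructor
    · exact fun x hx => ((hFiff x).1 hx).1
    · intro x1 hx1 x2 hx2 x hx hseg
      obtain ⟨s, t, hs, ht, hst, hcomb⟩ := hseg
      have hxM := ((hFiff x).1 hx).2
      have h1 := hmax x1 hx1
      have h2 := hmax x2 hx2
      have e : s * (inner ℝ uvec x1 : ℝ) + t * (inner ℝ uvec x2 : ℝ) = M := by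
        rw [← hxM, ← hcomb, inner_add_right, real_inner_smul_right, real_inner_smul_right]
      have h9 : s * M + t * M = M := by linear_combination M * hst
      refine (show x1 ∈ F ∧ x2 ∈ F → x1 ∈ F from fun h => h.1) ?_
      constructor
      · rw [hFiff]
        refine ⟨hx1, le_antisymm h1 ?_⟩
        have h10 := mul_le_mul_of_nonneg_left h2 ht.le
        have h11 : s * M ≤ s * (inner ℝ uvec x1 : ℝ) := by linarith
        exact (mul_le_mul_iff_of_pos_left hs).1 h11
      · rw [hFiff]
        refine ⟨hx2, le_antisymm h2 ?_⟩
        have h10 := mul_le_mul_of_nonneg_left h1 hs.le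
        have h11 : t * M ≤ t * (inner ℝ uvec x2 : ℝ) := by linarith
        exact (mul_le_mul_iff_of_pos_left ht).1 h11
  have hfacet : IsFacetOf d L F := ⟨⟨hconvF, hextF⟩, hdim⟩
  have houter : IsOuterNormalOf d L F uvec := hF
  have hprim : uvec ∈ primFacetNormals d L := ⟨⟨z, fun i => rfl, hgcd⟩, F, hfacet, houter⟩
  have hwid := ha uvec hprim (w + p) hwpL p (interior_subset hpL)
  have hck : c ≤ (k : ℝ) := by rw [← hMw]; rw [hM]; linarith
  obtain ⟨ξ, hξmem, hξlat⟩ := hb F hfacet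
  obtain ⟨x1, hx1span, hx1eq⟩ := Set.mem_smul_set.1 hξmem
  have hx1M : (inner ℝ uvec x1 : ℝ) = M := by
    have hle : affineSpan ℝ F ≤ hypAff uvec M := by
      rw [affineSpan_le]
      intro x hx
      exact ((hFiff x).1 hx).2
    exact hle hx1span
  have hξlat' : ∀ i, ∃ zz : ℤ, ξ i = (zz : ℝ) := hξlat
  choose ζ hζ using hξlat'
  set Z1 : ℤ := ∑ i, z i * ζ i with hZ1def
  have hZ1 : (Z1 : ℝ) = (ℓ : ℝ) * M := by
    have e1 : (inner ℝ uvec ξ : ℝ) = (ℓ : ℝ) * M := by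
      rw [← hx1eq, real_inner_smul_right, hx1M]
    rw [← e1, inner_eq', hZ1def]
    push_cast
    refine Finset.sum_congr rfl fun i _ => ?_
    rw [hζ i]
  choose ζp hζp using hc
  set Z2 : ℤ := ∑ i, z i * ζp i with hZ2def
  have hZ2 : (Z2 : ℝ) = (m : ℝ) * (inner ℝ uvec p : ℝ) := by
    rw [inner_eq', Finset.mul_sum, hZ2def]
    push_cast
    refine Finset.sum_congr rfl fun i _ => ?_
    rw [← hζp i]
    show (z i : ℝ) * ((m:ℝ) * p i) = (m:ℝ) * ((z i : ℝ) * p i)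
    ring
  set N : ℤ := m * Z1 - ℓ * Z2 with hNdef
  have hNR : (N : ℝ) = (ℓ : ℝ) * (m : ℝ) * c := by
    rw [hNdef]
    push_cast
    rw [hZ1, hZ2, ← hMw]
    ring
  have hNpos : 0 < N := by
    have h9 : (0:ℝ) < (N:ℝ) := by
      rw [hNR]; positivity
    exact_mod_cast h9
  have hNle : N ≤ ((k * ℓ * m : ℕ) : ℤ) := by
    have h8 : (ℓ:ℝ) * (m:ℝ) * c ≤ (ℓ:ℝ) * (m:ℝ) * (k:ℝ) :=
      mul_le_mul_of_nonneg_left hck (by positivity)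
    have h9 : (N:ℝ) ≤ (((k * ℓ * m : ℕ) : ℤ) : ℝ) := by
      rw [hNR]; push_cast; nlinarith [h8]
    exact_mod_cast h9
  have hdvd : N ∣ ((Nat.factorial (k * ℓ * m) : ℕ) : ℤ) := by
    have h1 : N.toNat ∣ Nat.factorial (k * ℓ * m) :=
      Nat.dvd_factorial (by omega) (by omega)
    have h2 : (N.toNat : ℤ) = N := Int.toNat_of_nonneg hNpos.le
    rw [← h2]
    exact_mod_cast h1
  obtain ⟨T, hT⟩ := hdvd
  show ∀ i, ∃ zz : ℤ, ((Nat.factorial (k * ℓ * m) : ℝ) • y) i = (zz : ℝ)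
  intro i
  refine ⟨T * ℓ * m * z i, ?_⟩
  have happ : ((Nat.factorial (k * ℓ * m) : ℝ) • y) i
      = (Nat.factorial (k * ℓ * m) : ℝ) * y i := rfl
  have hyi : y i = c⁻¹ * (z i : ℝ) := by rw [hy_eq]; rfl
  have hfact : ((Nat.factorial (k * ℓ * m) : ℕ) : ℝ) = (N : ℝ) * (T : ℝ) := by
    exact_mod_cast hT
  have hc_eq : c = (N : ℝ) / ((ℓ : ℝ) * (m : ℝ)) := by
    rw [hNR]
    field_simp
  have hNne : (N : ℝ) ≠ 0 := by
    have : (0:ℝ) < (N:ℝ) := by exact_mod_cast hNpos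
    linarith
  have hlne : (ℓ : ℝ) ≠ 0 := by positivity
  have hmne : (m : ℝ) ≠ 0 := by positivity
  rw [happ, hyi, hfact, hc_eq]
  push_cast
  field_simp
end
end

section
/- Let L be a d-dimensional rational polyhedron in ℝ^d with maxfw(L) < ∞ and let p ∈ ℚ^d ∩ int(L). Suppose k, ℓ, m ∈ ℕ satisfy: (a) maxfw(L) ≤ k; (b) for every facet F of L one has (ℓ·aff(F)) ∩ ℤ^d ≠ ∅; (c) m·p ∈ ℤ^d. Then for every z ∈ ℤ^d, the value (k·ℓ·m)! · ‖z‖_{L−p} is a nonnegative integer, where ‖·‖_{L−p} is the gauge function of L−p. -/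
open Set Pointwise MeasureTheory ENNReal

noncomputable section

variable {E : Type*}

section
open RealInnerProductSpace

namespace Stmt14Aux
variable {d : ℕ}

def Pset {n : ℕ} (a : Fin n → Euc d) (b : Fin n → ℝ) : Set (Euc d) :=
  {x | ∀ i, ⟪a i, x⟫ ≤ b i}

lemma inner_euc (u x : Euc d) : ⟪u, x⟫ = ∑ j, u j * x j := by
  rw [PiLp.inner_apply]; simp [RCLike.inner_apply]
  exact Finset.sum_congr rfl fun j _ => mul_comm _ _

lemma convex_Pset {n : ℕ} (a : Fin n → Euc d) (b : Fin n → ℝ) : Convex ℝ (Pset a b) := by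
  have h : Pset a b = ⋂ i, {x : Euc d | ⟪a i, x⟫ ≤ b i} := by
    ext x; simp [Pset]
  rw [h]
  exact convex_iInter fun i => convex_halfSpace_le
    ⟨fun x y => inner_add_right _ _ _, fun c x => real_inner_smul_right _ _ _⟩ _

lemma interior_strict {n : ℕ} {a : Fin n → Euc d} {b : Fin n → ℝ} {p : Euc d}
    (hp : p ∈ interior (Pset a b)) (i : Fin n) (hai : a i ≠ 0) : ⟪a i, p⟫ < b i := by
  obtain ⟨ε, hε, hball⟩ := Metric.isOpen_iff.1 isOpen_interior p hp
  have hball' : Metric.ball p ε ⊆ Pset a b := fun x hx => interior_subset (hball hx)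
  have hle : ⟪a i, p⟫ ≤ b i := interior_subset hp i
  rcases lt_or_eq_of_le hle with h | h
  · exact h
  exfalso
  have hna : 0 < ‖a i‖ := norm_pos_iff.2 hai
  set q : Euc d := p + (ε / (2 * ‖a i‖)) • a i with hq
  have hqball : q ∈ Metric.ball p ε := by
    rw [Metric.mem_ball, dist_eq_norm]
    have h1 : q - p = (ε / (2 * ‖a i‖)) • a i := by rw [hq]; abel
    rw [h1, norm_smul, Real.norm_eq_abs, abs_of_pos (by positivity)]
    rw [div_mul_eq_mul_div]
    rw [div_lt_iff₀ (by positivity)]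
    nlinarith
  have hcon : ⟪a i, q⟫ ≤ b i := hball' hqball i
  rw [hq, inner_add_right, real_inner_smul_right, real_inner_self_eq_norm_sq] at hcon
  have : 0 < ε / (2 * ‖a i‖) * ‖a i‖ ^ 2 := by positivity
  linarith

lemma sub_singleton_eq {n : ℕ} (a : Fin n → Euc d) (b : Fin n → ℝ) (p : Euc d) :
    Pset a b - {p} = Pset a (fun i => b i - ⟪a i, p⟫) := by
  ext x
  simp only [Set.mem_sub, Set.mem_singleton_iff, Pset, mem_setOf_eq]
  constructor
  · rintro ⟨y, hy, q, rfl, rfl⟩ i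
    rw [inner_sub_right]
    have := hy i; linarith
  · intro hx
    refine ⟨x + p, fun i => ?_, p, rfl, by abel⟩
    rw [inner_add_right]
    have := hx i; linarith

lemma gauge_Pset_zero {n : ℕ} (a : Fin n → Euc d) (β : Fin n → ℝ) (hβ : ∀ i, 0 < β i)
    (z : Euc d) (hz : ∀ i, ⟪a i, z⟫ ≤ 0) : gauge (Pset a β) z = 0 := by
  rw [gauge_def]
  have h : {r : ℝ | r ∈ Ioi 0 ∧ z ∈ r • Pset a β} = Ioi 0 := by
    ext r
    simp only [mem_setOf_eq, and_iff_left_iff_imp]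
    intro hr
    rw [mem_smul_set_iff_inv_smul_mem₀ (ne_of_gt hr)]
    intro i
    rw [real_inner_smul_right]
    have h1 := hz i; have h2 := hβ i
    have h3 : 0 < r⁻¹ := inv_pos.2 hr
    nlinarith
  rw [h, csInf_Ioi]

lemma gauge_Pset_pos {n : ℕ} (a : Fin n → Euc d) (β : Fin n → ℝ) (hβ : ∀ i, 0 < β i)
    (z : Euc d) (i₀ : Fin n) (hz : 0 < ⟪a i₀, z⟫) :
    gauge (Pset a β) z
      = Finset.univ.sup' ⟨i₀, Finset.mem_univ i₀⟩ (fun i => ⟪a i, z⟫ / β i) := by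
  set t := Finset.univ.sup' ⟨i₀, Finset.mem_univ i₀⟩ (fun i => ⟪a i, z⟫ / β i) with ht
  have hle0 : ⟪a i₀, z⟫ / β i₀ ≤ t := by
    rw [ht]; exact Finset.le_sup' (fun i => ⟪a i, z⟫ / β i) (Finset.mem_univ i₀)
  have htpos : 0 < t := lt_of_lt_of_le (div_pos hz (hβ i₀)) hle0
  rw [gauge_def]
  have hset : {r : ℝ | r ∈ Ioi 0 ∧ z ∈ r • Pset a β} = Ici t := by
    ext r
    simp only [mem_setOf_eq, mem_Ioi, mem_Ici]
    constructor
    · rintro ⟨hr, hmem⟩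
      rw [mem_smul_set_iff_inv_smul_mem₀ (ne_of_gt hr)] at hmem
      rw [ht]
      refine Finset.sup'_le _ _ fun i _ => ?_
      show ⟪a i, z⟫ / β i ≤ r
      have hmi := hmem i
      rw [real_inner_smul_right] at hmi
      rw [div_le_iff₀ (hβ i)]
      have h4 := mul_le_mul_of_nonneg_left hmi (le_of_lt hr)
      rwa [← mul_assoc, mul_inv_cancel₀ (ne_of_gt hr), one_mul] at h4
    · intro hrt
      have hr : 0 < r := lt_of_lt_of_le htpos hrt
      refine ⟨hr, ?_⟩
      rw [mem_smul_set_iff_inv_smul_mem₀ (ne_of_gt hr)]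
      intro i
      rw [real_inner_smul_right]
      have hle1 : ⟪a i, z⟫ / β i ≤ t := by
        rw [ht]; exact Finset.le_sup' (fun i => ⟪a i, z⟫ / β i) (Finset.mem_univ i)
      have hi : ⟪a i, z⟫ / β i ≤ r := le_trans hle1 hrt
      rw [div_le_iff₀ (hβ i)] at hi
      have h3 : 0 < r⁻¹ := inv_pos.2 hr
      have h4 := mul_le_mul_of_nonneg_left hi (le_of_lt h3)
      rwa [← mul_assoc, inv_mul_cancel₀ (ne_of_gt hr), one_mul] at h4
  rw [hset, csInf_Ici]

noncomputable def hypAff (u : Euc d) (c : ℝ) : AffineSubspace ℝ (Euc d) where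
  carrier := {x | ⟪u, x⟫ = c}
  smul_vsub_vadd_mem' := by
    intro t p₁ p₂ p₃ h₁ h₂ h₃
    simp only [Set.mem_setOf_eq] at *
    have he : t • (p₁ -ᵥ p₂) +ᵥ p₃ = t • (p₁ - p₂) + p₃ := rfl
    rw [he, inner_add_right, real_inner_smul_right, inner_sub_right, h₁, h₂, h₃]
    ring

lemma facet_of_irredundant {n : ℕ} {a : Fin n → Euc d} {b : Fin n → ℝ} {p : Euc d}
    (hp : p ∈ interior (Pset a b)) (hne : ∀ j, a j ≠ 0)
    (i : Fin n) (y : Euc d) (hy1 : ∀ j, j ≠ i → ⟪a j, y⟫ ≤ b j) (hy2 : b i < ⟪a i, y⟫) :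
    ∃ F w, (Convex ℝ F ∧ IsExtreme ℝ (Pset a b) F) ∧
      Module.finrank ℝ (vectorSpan ℝ F) + 1 = d ∧
      F = {x | x ∈ Pset a b ∧ ∀ y' ∈ Pset a b, ⟪a i, y'⟫ ≤ ⟪a i, x⟫} ∧
      w ∈ F ∧ ⟪a i, w⟫ = b i ∧
      (∀ x ∈ (affineSpan ℝ F : Set (Euc d)), ⟪a i, x⟫ = b i) := by
  have hpi : ∀ j, ⟪a j, p⟫ < b j := fun j => interior_strict hp j (hne j)
  set D : ℝ := ⟪a i, y⟫ - ⟪a i, p⟫ with hD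
  have hDpos : 0 < D := by have := hpi i; simp only [hD]; linarith
  set t₀ : ℝ := (b i - ⟪a i, p⟫) / D with ht₀
  have ht₀pos : 0 < t₀ := div_pos (by linarith [hpi i]) hDpos
  have ht₀lt : t₀ < 1 := by
    rw [ht₀, div_lt_one hDpos]; simp only [hD]; linarith
  set w : Euc d := p + t₀ • (y - p) with hw
  have hinner_w : ∀ j, ⟪a j, w⟫ = ⟪a j, p⟫ + t₀ * (⟪a j, y⟫ - ⟪a j, p⟫) := by
    intro j
    rw [hw, inner_add_right, real_inner_smul_right, inner_sub_right]
  have hiw : ⟪a i, w⟫ = b i := by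
    rw [hinner_w i, ht₀, ← hD]
    field_simp
    ring
  have hjw : ∀ j, j ≠ i → ⟪a j, w⟫ < b j := by
    intro j hj
    rw [hinner_w j]
    have h1 := hpi j
    have h2 := hy1 j hj
    nlinarith
  have hwP : w ∈ Pset a b := by
    intro j
    by_cases hj : j = i
    · subst hj; exact le_of_eq hiw
    · exact le_of_lt (hjw j hj)
  set F : Set (Euc d) := {x | x ∈ Pset a b ∧ ∀ y' ∈ Pset a b, ⟪a i, y'⟫ ≤ ⟪a i, x⟫} with hF
  have hFchar : F = {x | x ∈ Pset a b ∧ ⟪a i, x⟫ = b i} := by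
    ext x
    simp only [hF, Set.mem_setOf_eq]
    constructor
    · rintro ⟨hxP, hdom⟩
      exact ⟨hxP, le_antisymm (hxP i) (hiw ▸ hdom w hwP)⟩
    · rintro ⟨hxP, hxe⟩
      exact ⟨hxP, fun y' hy' => by rw [hxe]; exact hy' i⟩
  have hwF : w ∈ F := by rw [hFchar]; exact ⟨hwP, hiw⟩
  -- linear functional
  set f : Euc d →ₗ[ℝ] ℝ :=
    { toFun := fun x => ⟪a i, x⟫
      map_add' := fun x y => inner_add_right _ _ _
      map_smul' := fun c x => real_inner_smul_right _ _ _ } with hf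
  -- open set where all other constraints are strict
  set U : Set (Euc d) := ⋂ j, {x | j ≠ i → ⟪a j, x⟫ < b j} with hU
  have hUopen : IsOpen U := by
    apply isOpen_iInter_of_finite
    intro j
    by_cases hj : j = i
    · subst hj; simp only [ne_eq, not_true_eq_false, false_implies]; exact isOpen_univ
    · have : {x : Euc d | j ≠ i → ⟪a j, x⟫ < b j} = {x | ⟪a j, x⟫ < b j} := by
        ext x; simp [hj]
      rw [this]
      exact isOpen_lt (Continuous.inner continuous_const continuous_id) continuous_const
  have hwU : w ∈ U := by
    rw [hU]; exact Set.mem_iInter.2 fun j hj => hjw j hj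
  obtain ⟨ε, hε, hball⟩ := Metric.isOpen_iff.1 hUopen w hwU
  have hkey : ∀ v : Euc d, ⟪a i, v⟫ = 0 → ‖v‖ < ε → w + v ∈ F := by
    intro v hv hnv
    have hmemU : w + v ∈ U := by
      apply hball
      rw [Metric.mem_ball, dist_eq_norm]
      have : w + v - w = v := by abel
      rw [this]; exact hnv
    have hP : w + v ∈ Pset a b := by
      intro j
      by_cases hj : j = i
      · subst hj; rw [inner_add_right, hv, hiw]; simp
      · exact le_of_lt (Set.mem_iInter.1 hmemU j hj)
    rw [hFchar]
    exact ⟨hP, by rw [inner_add_right, hv, hiw]; simp⟩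
  -- vectorSpan F = ker f
  have hvs : vectorSpan ℝ F = LinearMap.ker f := by
    apply le_antisymm
    · rw [vectorSpan_def]
      rw [Submodule.span_le]
      rintro u ⟨x, hx, y', hy', rfl⟩
      rw [hFchar] at hx hy'
      simp only [Set.mem_setOf_eq] at hx hy'
      simp only [SetLike.mem_coe, LinearMap.mem_ker, hf, LinearMap.coe_mk, AddHom.coe_mk]
      show ⟪a i, x -ᵥ y'⟫ = 0
      have : x -ᵥ y' = x - y' := rfl
      rw [this, inner_sub_right, hx.2, hy'.2, sub_self]
    · intro v hv
      simp only [LinearMap.mem_ker, hf, LinearMap.coe_mk, AddHom.coe_mk] at hv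
      by_cases hv0 : v = 0
      · subst hv0; exact Submodule.zero_mem _
      · have hnv : 0 < ‖v‖ := norm_pos_iff.2 hv0
        set c : ℝ := ε / (2 * ‖v‖) with hc
        have hcpos : 0 < c := by positivity
        have hsmall : ‖c • v‖ < ε := by
          rw [norm_smul, Real.norm_eq_abs, abs_of_pos hcpos, hc]
          rw [div_mul_eq_mul_div, div_lt_iff₀ (by positivity)]
          nlinarith
        have hcv : ⟪a i, c • v⟫ = 0 := by rw [real_inner_smul_right, hv, mul_zero]
        have h1 : w + c • v ∈ F := hkey _ hcv hsmall
        have h2 : (w + c • v) -ᵥ w ∈ vectorSpan ℝ F := vsub_mem_vectorSpan ℝ h1 hwF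
        have h3 : (w + c • v) -ᵥ w = c • v := by
          show w + c • v - w = c • v; abel
        rw [h3] at h2
        have h4 : v = c⁻¹ • (c • v) := by
          rw [smul_smul, inv_mul_cancel₀ (ne_of_gt hcpos), one_smul]
        rw [h4]
        exact Submodule.smul_mem _ _ h2
  -- dimension
  have hsurj : Function.Surjective f := by
    intro r
    refine ⟨(r / ‖a i‖ ^ 2) • a i, ?_⟩
    simp only [hf, LinearMap.coe_mk, AddHom.coe_mk]
    rw [real_inner_smul_right, real_inner_self_eq_norm_sq]
    have : ‖a i‖ ≠ 0 := norm_ne_zero_iff.2 (hne i)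
    field_simp
  have hrange : LinearMap.range f = ⊤ := LinearMap.range_eq_top.2 hsurj
  have hdim : Module.finrank ℝ (vectorSpan ℝ F) + 1 = d := by
    have h5 := LinearMap.finrank_range_add_finrank_ker f
    rw [hrange] at h5
    rw [finrank_top, Module.finrank_self, finrank_euclideanSpace_fin] at h5
    rw [hvs]
    omega
  -- convexity & extremeness
  have hconv : Convex ℝ F := by
    rw [hFchar]
    intro x hx y' hy' s t hs ht hst
    simp only [Set.mem_setOf_eq] at hx hy' ⊢
    constructor
    · exact convex_Pset a b hx.1 hy'.1 hs ht hst
    · rw [inner_add_right, real_inner_smul_right, real_inner_smul_right, hx.2, hy'.2]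
      rw [← add_mul, hst, one_mul]
  have hextreme : IsExtreme ℝ (Pset a b) F := by
    constructor
    · rw [hFchar]; exact fun x hx => hx.1
    · intro x₁ hx₁ x₂ hx₂ x hx hseg
      rw [hFchar] at hx
      obtain ⟨s, t, hs, ht, hst, hx'⟩ := hseg
      have e1 : ⟪a i, x⟫ = s * ⟪a i, x₁⟫ + t * ⟪a i, x₂⟫ := by
        rw [← hx', inner_add_right, real_inner_smul_right, real_inner_smul_right]
      have hb1 : ⟪a i, x₁⟫ ≤ b i := hx₁ i
      have hb2 : ⟪a i, x₂⟫ ≤ b i := hx₂ i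
      have hxb : ⟪a i, x⟫ = b i := hx.2
      have key : ∀ c₁ c₂ : ℝ, c₁ ≤ b i → c₂ ≤ b i → b i = s * c₁ + t * c₂ → c₁ = b i := by
        intro c₁ c₂ hc₁ hc₂ hcc
        by_contra hne1
        have hlt : c₁ < b i := lt_of_le_of_ne hc₁ hne1
        have h1 : s * c₁ < s * b i := mul_lt_mul_of_pos_left hlt hs
        have h2 : t * c₂ ≤ t * b i := mul_le_mul_of_nonneg_left hc₂ ht.le
        have h3 : s * b i + t * b i = b i := by rw [← add_mul, hst, one_mul]
        linarith
      have he1 : ⟪a i, x₁⟫ = b i := key _ _ hb1 hb2 (by rw [← hxb, e1])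
      have he2 : ⟪a i, x₂⟫ = b i := by
        have e1' : b i = t * ⟪a i, x₂⟫ + s * ⟪a i, x₁⟫ := by rw [← hxb, e1]; ring
        have hst' : t + s = 1 := by linarith
        by_contra hne2
        have hlt : ⟪a i, x₂⟫ < b i := lt_of_le_of_ne hb2 hne2
        have h1 : t * ⟪a i, x₂⟫ < t * b i := mul_lt_mul_of_pos_left hlt ht
        have h2 : s * ⟪a i, x₁⟫ ≤ s * b i := mul_le_mul_of_nonneg_left hb1 hs.le
        have h3 : t * b i + s * b i = b i := by rw [← add_mul, hst', one_mul]
        linarith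
      rw [hFchar]
      exact ⟨hx₁, he1⟩
  -- affine span
  have hspan : ∀ x ∈ (affineSpan ℝ F : Set (Euc d)), ⟪a i, x⟫ = b i := by
    have hle : affineSpan ℝ F ≤ hypAff (a i) (b i) := by
      rw [affineSpan_le]
      intro x hx
      rw [hFchar] at hx
      exact hx.2
    intro x hx
    exact hle hx
  exact ⟨F, w, ⟨hconv, hextreme⟩, hdim, rfl, hwF, hiw, hspan⟩

lemma exists_irredundant (L : Set (Euc d)) :
    ∀ (n : ℕ) (a : Fin n → Euc d) (b : Fin n → ℝ),
      (∀ i, ∃ v : Fin d → ℤ, (∀ j, a i j = (v j : ℝ)) ∧ Finset.univ.gcd v = 1) →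
      L = Pset a b →
      ∃ (n' : ℕ) (a' : Fin n' → Euc d) (b' : Fin n' → ℝ),
        (∀ i, ∃ v : Fin d → ℤ, (∀ j, a' i j = (v j : ℝ)) ∧ Finset.univ.gcd v = 1) ∧
        L = Pset a' b' ∧
        ∀ i, ∃ y, (∀ j, j ≠ i → ⟪a' j, y⟫ ≤ b' j) ∧ b' i < ⟪a' i, y⟫ := by
  intro n
  induction n with
  | zero => exact fun a b hprim hL => ⟨0, a, b, hprim, hL, fun i => i.elim0⟩
  | succ n ih =>
    intro a b hprim hL
    by_cases hred : ∀ i, ∃ y, (∀ j, j ≠ i → ⟪a j, y⟫ ≤ b j) ∧ b i < ⟪a i, y⟫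
    · exact ⟨n + 1, a, b, hprim, hL, hred⟩
    · push_neg at hred
      obtain ⟨i, hi⟩ := hred
      refine ih (a ∘ i.succAbove) (b ∘ i.succAbove) (fun k => hprim _) ?_
      rw [hL]
      ext x
      simp only [Pset, Set.mem_setOf_eq, Function.comp]
      constructor
      · intro h k; exact h _
      · intro h j
        by_cases hj : j = i
        · subst hj
          refine hi x ?_
          intro j' hj'
          obtain ⟨kk, hkk⟩ := Fin.exists_succAbove_eq hj'
          rw [← hkk]; exact h kk
        · obtain ⟨kk, hkk⟩ := Fin.exists_succAbove_eq hj
          rw [← hkk]; exact h kk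

lemma rat_to_prim {d' : ℕ} (a : Fin d' → ℚ) (ha : a ≠ 0) :
    ∃ (c : ℚ) (v : Fin d' → ℤ), 0 < c ∧ (∀ j, (v j : ℚ) = c * a j) ∧
      Finset.univ.gcd v = 1 := by
  obtain ⟨j₀, hj₀⟩ := Function.ne_iff.1 ha
  set N : ℕ := ∏ j, (a j).den with hN
  have hNpos : 0 < N := Finset.prod_pos fun j _ => (a j).pos
  set w : Fin d' → ℤ := fun j => (a j).num * ((N : ℤ) / ((a j).den : ℤ)) with hw
  have hwc : ∀ j, (w j : ℚ) = N * a j := by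
    intro j
    have hd : ((a j).den : ℤ) ∣ (N : ℤ) :=
      Int.natCast_dvd_natCast.2 (Finset.dvd_prod_of_mem _ (Finset.mem_univ j))
    have hdenne : (((a j).den : ℤ) : ℚ) ≠ 0 := by
      exact_mod_cast (a j).den_nz
    have h1 : ((((N : ℤ) / ((a j).den : ℤ)) : ℤ) : ℚ)
        = ((N : ℤ) : ℚ) / (((a j).den : ℤ) : ℚ) := Int.cast_div hd hdenne
    have hden' : (((a j).den : ℚ)) ≠ 0 := by exact_mod_cast (a j).den_nz
    have h2 : ((a j).num : ℚ) = a j * ((a j).den : ℚ) :=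
      calc ((a j).num : ℚ)
          = ((a j).num : ℚ) / ((a j).den : ℚ) * ((a j).den : ℚ) :=
            (div_mul_cancel₀ _ hden').symm
        _ = a j * ((a j).den : ℚ) := by rw [Rat.num_div_den]
    rw [hw]
    push_cast [h1]
    have hden : (((a j).den : ℤ) : ℚ) ≠ 0 := hdenne
    field_simp
    rw [h2]
    ring
  set g : ℤ := Finset.univ.gcd w with hg
  have hwj₀ : w j₀ ≠ 0 := by
    intro h0
    have : (w j₀ : ℚ) = 0 := by rw [h0]; simp
    rw [hwc j₀] at this
    have hN0 : (N : ℚ) ≠ 0 := by exact_mod_cast hNpos.ne'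
    exact hj₀ (by simpa [hN0] using this)
  have hg0 : g ≠ 0 := by
    intro h0
    exact hwj₀ (Finset.gcd_eq_zero_iff.1 h0 j₀ (Finset.mem_univ j₀))
  have hgnn : 0 ≤ g := by
    have h1 : |g| = g := by rw [Int.abs_eq_normalize, hg, Finset.normalize_gcd]
    rw [← h1]; exact abs_nonneg g
  have hgpos : 0 < g := lt_of_le_of_ne hgnn (Ne.symm hg0)
  refine ⟨(N : ℚ) / (g : ℚ), fun j => w j / g, ?_, ?_, ?_⟩
  · apply div_pos (by exact_mod_cast hNpos) (by exact_mod_cast hgpos)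
  · intro j
    have hdvd : g ∣ w j := Finset.gcd_dvd (Finset.mem_univ j)
    have hgne : ((g : ℤ) : ℚ) ≠ 0 := by exact_mod_cast hg0
    rw [Int.cast_div hdvd hgne, hwc j]
    field_simp
  · exact Finset.gcd_div_eq_one (Finset.mem_univ j₀) hwj₀

end Stmt14Aux

end

/-- Lemma: integrality of the polar, Part II.
Under the assumptions of Statement 13, for every `z ∈ ℤ^d` the value
`(k·ℓ·m)! · ‖z‖_{L−p}` is a nonnegative integer, where `‖·‖_{L−p}` is the gauge
function of `L − p`. -/
theorem stmt14 (d : ℕ) (L : Set (Euc d))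
    (hL : IsRatPolyhedron d L) (hLdim : setDim L = d)
    (hfin : ∀ u ∈ primFacetNormals d L, ∃ c : ℝ, ∀ x ∈ L, ∀ y ∈ L,
      (inner ℝ u x : ℝ) - inner ℝ u y ≤ c)
    (p : Euc d) (hpQ : ∀ i, ∃ q : ℚ, p i = (q : ℝ)) (hpL : p ∈ interior L)
    (k ℓ m : ℕ) (hk : 0 < k) (hℓ : 0 < ℓ) (hm : 0 < m)
    (ha : MaxFacetWidthLE d L (k : ℝ))
    (hb : ∀ F : Set (Euc d), IsFacetOf d L F →
      (((ℓ : ℝ) • (affineSpan ℝ F : Set (Euc d))) ∩ latticePts d).Nonempty)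
    (hc : ∀ i, ∃ z : ℤ, (m : ℝ) * p i = (z : ℝ)) :
    ∀ z ∈ latticePts d, ∃ N : ℕ,
      (Nat.factorial (k * ℓ * m) : ℝ) * gauge (L - {p}) z = (N : ℝ) := by
  classical
  obtain ⟨n₀, a₀, b₀, ha₀, hLdef⟩ := hL
  choose c v hc0 hcv hgcd using fun i => Stmt14Aux.rat_to_prim (a₀ i) (ha₀ i)
  set A₀ : Fin n₀ → Euc d := fun i => WithLp.toLp 2 (fun j => ((v i j : ℝ))) with hA₀
  set B₀ : Fin n₀ → ℝ := fun i => ((c i : ℝ) * (b₀ i : ℝ)) with hB₀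
  have hvr : ∀ i j, ((v i j : ℝ)) = (c i : ℝ) * (a₀ i j : ℝ) := by
    intro i j
    exact_mod_cast congrArg (fun q : ℚ => (q : ℝ)) (hcv i j)
  have hLP : L = Stmt14Aux.Pset A₀ B₀ := by
    rw [hLdef]
    ext x
    simp only [Stmt14Aux.Pset, Set.mem_setOf_eq]
    have key : ∀ i, ((inner ℝ (A₀ i) x : ℝ) ≤ B₀ i ↔ ∑ j, (a₀ i j : ℝ) * x j ≤ (b₀ i : ℝ)) := by
      intro i
      rw [Stmt14Aux.inner_euc]
      have hcpos : (0 : ℝ) < (c i : ℝ) := by exact_mod_cast hc0 i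
      have hsum : ∑ j, A₀ i j * x j = (c i : ℝ) * ∑ j, (a₀ i j : ℝ) * x j := by
        rw [Finset.mul_sum]
        refine Finset.sum_congr rfl fun j _ => ?_
        show ((v i j : ℝ)) * x j = (c i : ℝ) * ((a₀ i j : ℝ) * x j)
        rw [hvr i j]; ring
      rw [hsum, hB₀]
      exact mul_le_mul_iff_right₀ hcpos
    exact ⟨fun h i => (key i).2 (h i), fun h i => (key i).1 (h i)⟩
  obtain ⟨n, A, B, hprimA, hLPA, hirr⟩ :=
    Stmt14Aux.exists_irredundant L n₀ A₀ B₀ (fun i => ⟨v i, fun j => rfl, hgcd i⟩) hLP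
  have hAne : ∀ i, A i ≠ 0 := by
    intro i h0
    obtain ⟨vv, hvv, hg1⟩ := hprimA i
    have hz0 : ∀ j, vv j = 0 := by
      intro j
      have h1 := hvv j
      rw [h0] at h1
      have h2 : (0 : Euc d) j = 0 := rfl
      rw [h2] at h1
      have h3 : ((vv j : ℤ) : ℝ) = 0 := h1.symm
      exact_mod_cast h3
    have : Finset.univ.gcd vv = 0 := Finset.gcd_eq_zero_iff.2 fun j _ => hz0 j
    rw [hg1] at this
    exact one_ne_zero this
  rw [hLPA] at hpL
  have hpstrict : ∀ i, (inner ℝ (A i) p : ℝ) < B i :=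
    fun i => Stmt14Aux.interior_strict hpL i (hAne i)
  set β : Fin n → ℝ := fun i => B i - (inner ℝ (A i) p : ℝ) with hβdef
  have hβ : ∀ i, 0 < β i := fun i => by
    have := hpstrict i; simp only [hβdef]; linarith
  have hC : L - {p} = Stmt14Aux.Pset A β := by
    rw [hLPA, Stmt14Aux.sub_singleton_eq]
  intro z hz
  simp only [latticePts, Set.mem_setOf_eq] at hz
  by_cases hcase : ∀ i, (inner ℝ (A i) z : ℝ) ≤ 0
  · refine ⟨0, ?_⟩
    rw [hC, Stmt14Aux.gauge_Pset_zero A β hβ z hcase]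
    simp
  · push_neg at hcase
    obtain ⟨i₀, hi₀⟩ := hcase
    have hne : (Finset.univ : Finset (Fin n)).Nonempty := ⟨i₀, Finset.mem_univ i₀⟩
    have hgauge : gauge (L - {p}) z
        = Finset.univ.sup' hne (fun i => (inner ℝ (A i) z : ℝ) / β i) := by
      rw [hC]; exact Stmt14Aux.gauge_Pset_pos A β hβ z i₀ hi₀
    obtain ⟨istar, -, hsup⟩ :=
      Finset.exists_mem_eq_sup' hne (fun i => (inner ℝ (A i) z : ℝ) / β i)
    have htpos : 0 < (inner ℝ (A istar) z : ℝ) / β istar := by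
      have h1 : (inner ℝ (A i₀) z : ℝ) / β i₀
          ≤ Finset.univ.sup' hne (fun i => (inner ℝ (A i) z : ℝ) / β i) :=
        Finset.le_sup' (fun i => (inner ℝ (A i) z : ℝ) / β i) (Finset.mem_univ i₀)
      rw [hsup] at h1
      exact lt_of_lt_of_le (div_pos hi₀ (hβ i₀)) h1
    have hAz_pos : 0 < (inner ℝ (A istar) z : ℝ) := by
      by_contra hcon
      push_neg at hcon
      have : (inner ℝ (A istar) z : ℝ) / β istar ≤ 0 :=
        div_nonpos_of_nonpos_of_nonneg hcon (hβ istar).le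
      linarith
    obtain ⟨y, hy1, hy2⟩ := hirr istar
    obtain ⟨F, w, hFace, hdim, hFeq, hwF, hiw, hspan⟩ :=
      Stmt14Aux.facet_of_irredundant hpL hAne istar y hy1 hy2
    have hFacet : IsFacetOf d L F := by
      refine ⟨?_, hdim⟩
      rw [hLPA]
      exact hFace
    have hONormal : IsOuterNormalOf d L F (A istar) := by
      rw [hLPA]
      exact hFeq
    obtain ⟨vv, hvv, hg1⟩ := hprimA istar
    have hprimmem : A istar ∈ primFacetNormals d L := ⟨⟨vv, hvv, hg1⟩, F, hFacet, hONormal⟩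
    have hwL : w ∈ L := by rw [hLPA]; exact hFace.2.1 hwF
    have hpLmem : p ∈ L := by rw [hLPA]; exact interior_subset hpL
    have hwidth := ha (A istar) hprimmem w hwL p hpLmem
    have hβk : β istar ≤ (k : ℝ) := by
      simp only [hβdef]
      rw [← hiw]
      exact hwidth
    obtain ⟨yl, hyl, hylat⟩ := hb F hFacet
    obtain ⟨w', hw', hw'eq⟩ := hyl
    have hinner_yl : (inner ℝ (A istar) yl : ℝ) = (ℓ : ℝ) * B istar := by
      rw [← hw'eq, real_inner_smul_right, hspan w' hw']
    simp only [latticePts, Set.mem_setOf_eq] at hylat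
    choose zi hzi using hz
    choose yi hyi using hylat
    choose pint hpint using hc
    set Aint : ℤ := ∑ j, vv j * zi j with hAintdef
    have hAint : (Aint : ℝ) = (inner ℝ (A istar) z : ℝ) := by
      rw [Stmt14Aux.inner_euc, hAintdef]
      push_cast
      exact Finset.sum_congr rfl fun j _ => by rw [hvv j, hzi j]
    set Bint : ℤ := ∑ j, vv j * yi j with hBintdef
    have hBint : (Bint : ℝ) = (ℓ : ℝ) * B istar := by
      rw [← hinner_yl, Stmt14Aux.inner_euc, hBintdef]
      push_cast
      exact Finset.sum_congr rfl fun j _ => by rw [hvv j, hyi j]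
    set Cint : ℤ := ∑ j, vv j * pint j with hCintdef
    have hCint : (Cint : ℝ) = (m : ℝ) * (inner ℝ (A istar) p : ℝ) := by
      rw [Stmt14Aux.inner_euc, hCintdef, Finset.mul_sum]
      push_cast
      refine Finset.sum_congr rfl fun j _ => ?_
      rw [hvv j, ← hpint j]
      ring
    set q : ℤ := m * Bint - ℓ * Cint with hqdef
    have hq : (q : ℝ) = (ℓ : ℝ) * (m : ℝ) * β istar := by
      rw [hqdef]
      push_cast
      rw [hBint, hCint]
      simp only [hβdef]
      ring
    have hqposR : (0 : ℝ) < (q : ℝ) := by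
      rw [hq]
      have h1 : (0:ℝ) < (ℓ : ℝ) := by exact_mod_cast hℓ
      have h2 : (0:ℝ) < (m : ℝ) := by exact_mod_cast hm
      have h3 := hβ istar
      positivity
    have hqpos : 0 < q := by exact_mod_cast hqposR
    have hqle : q ≤ ((k * ℓ * m : ℕ) : ℤ) := by
      have h1 : (q : ℝ) ≤ ((k * ℓ * m : ℕ) : ℝ) := by
        rw [hq]
        push_cast
        have h2 : (0:ℝ) ≤ (ℓ : ℝ) * (m : ℝ) := by positivity
        nlinarith [hβk, hβ istar]
      exact_mod_cast h1
    set qn : ℕ := q.toNat with hqndef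
    have hqn : (qn : ℤ) = q := Int.toNat_of_nonneg hqpos.le
    have hqnpos : 0 < qn := by omega
    have hqnle : qn ≤ k * ℓ * m := by
      have : (qn : ℤ) ≤ ((k * ℓ * m : ℕ) : ℤ) := by rw [hqn]; exact hqle
      exact_mod_cast this
    have hdvd : qn ∣ Nat.factorial (k * ℓ * m) := Nat.dvd_factorial hqnpos hqnle
    have hApos : 0 < Aint := by
      have : (0:ℝ) < (Aint : ℝ) := by rw [hAint]; exact hAz_pos
      exact_mod_cast this
    refine ⟨(Nat.factorial (k * ℓ * m) / qn) * (Aint.toNat * (ℓ * m)), ?_⟩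
    rw [hgauge, hsup]
    have hqnr : (qn : ℝ) = (q : ℝ) := by exact_mod_cast hqn
    have hAtn : (Aint.toNat : ℝ) = (Aint : ℝ) := by
      exact_mod_cast Int.toNat_of_nonneg hApos.le
    have hfact : (Nat.factorial (k * ℓ * m) : ℝ)
        = (qn : ℝ) * ((Nat.factorial (k * ℓ * m) / qn : ℕ) : ℝ) := by
      rw [← Nat.cast_mul, Nat.mul_div_cancel' hdvd]
    have hβq : β istar = (q : ℝ) / ((ℓ : ℝ) * (m : ℝ)) := by
      rw [hq]
      have h1 : (ℓ : ℝ) ≠ 0 := by exact_mod_cast hℓ.ne'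
      have h2 : (m : ℝ) ≠ 0 := by exact_mod_cast hm.ne'
      field_simp
    have hqne : (q : ℝ) ≠ 0 := ne_of_gt hqposR
    have h1 : (ℓ : ℝ) ≠ 0 := by exact_mod_cast hℓ.ne'
    have h2 : (m : ℝ) ≠ 0 := by exact_mod_cast hm.ne'
    rw [← hAint, hβq, hfact]
    push_cast [hAtn, hqnr]
    field_simp
end
end

section
/- Let (K_i)_{i∈ℕ} be a decreasing sequence of closed convex sets in ℝ^d (that is, K_{i+1} ⊆ K_i for every i ∈ ℕ) such that K := ⋂_{i=1}^{∞} K_i is bounded and nonempty. Then there exists j ∈ ℕ such that for every i ∈ ℕ with i ≥ j the set K_i is bounded. -/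
open Set Pointwise MeasureTheory ENNReal

noncomputable section

variable {E : Type*}

open Filter Topology in
/-- Lemma: eventual boundedness of a decreasing sequence.
Let `(K_i)` be a decreasing sequence of closed convex sets in `ℝ^d` whose intersection
`K := ⋂ᵢ K_i` is bounded and nonempty. Then there is `j` such that `K_i` is bounded for
every `i ≥ j`. -/
theorem stmt16 (d : ℕ) (K : ℕ → Set (Euc d))
    (hcl : ∀ i, IsClosed (K i)) (hcv : ∀ i, Convex ℝ (K i))
    (hdec : ∀ i, K (i + 1) ⊆ K i)
    (hb : Bornology.IsBounded (⋂ i, K i)) (hne : (⋂ i, K i).Nonempty) :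
    ∃ j : ℕ, ∀ i ≥ j, Bornology.IsBounded (K i) := by
  by_contra h
  push_neg at h
  have hant : Antitone K := antitone_nat_of_succ_le hdec
  have hub : ∀ j, ¬ Bornology.IsBounded (K j) := by
    intro j hbj
    obtain ⟨i, hij, hi⟩ := h j
    exact hi (hbj.subset (hant hij))
  obtain ⟨x₀, hx₀⟩ := hne
  have hx₀i : ∀ i, x₀ ∈ K i := fun i => mem_iInter.mp hx₀ i
  have hy : ∀ i : ℕ, ∃ z ∈ K i, (i : ℝ) + 1 < dist z x₀ := by
    intro i
    by_contra hc
    push_neg at hc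
    exact hub i ((Metric.isBounded_iff_subset_closedBall x₀).mpr
      ⟨(i : ℝ) + 1, fun z hz => Metric.mem_closedBall.mpr (hc z hz)⟩)
  choose y hyK hyd using hy
  have hdpos : ∀ i, 0 < dist (y i) x₀ := fun i =>
    lt_of_le_of_lt (by positivity) (hyd i)
  set u : ℕ → Euc d := fun i => (dist (y i) x₀)⁻¹ • (y i - x₀) with hu
  have hus : ∀ i, u i ∈ Metric.sphere (0 : Euc d) 1 := by
    intro i
    simp only [hu, mem_sphere_iff_norm, sub_zero, norm_smul, norm_inv, Real.norm_eq_abs,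
      ← dist_eq_norm]
    rw [abs_of_pos (hdpos i), inv_mul_cancel₀ (hdpos i).ne']
  obtain ⟨v, hv, φ, hφ, hconv⟩ := (isCompact_sphere (0:Euc d) 1).tendsto_subseq hus
  have hseg : ∀ i, ∀ t : ℝ, 0 ≤ t → t ≤ dist (y i) x₀ → x₀ + t • u i ∈ K i := by
    intro i t ht htd
    set D := dist (y i) x₀ with hD
    have hD0 : 0 < D := hdpos i
    have hs0 : 0 ≤ t / D := div_nonneg ht hD0.le
    have hs1 : t / D ≤ 1 := (div_le_one hD0).mpr htd
    have := hcv i (hx₀i i) (hyK i) (a := 1 - t / D) (b := t / D)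
      (by linarith) hs0 (by ring)
    convert this using 1
    simp only [hu, smul_smul]
    rw [smul_sub]
    module
  have hmem : ∀ t : ℝ, 0 ≤ t → ∀ j, x₀ + t • v ∈ K j := by
    intro t ht j
    have htend : Tendsto (fun k => x₀ + t • u (φ k)) atTop (𝓝 (x₀ + t • v)) :=
      tendsto_const_nhds.add (hconv.const_smul t)
    refine (hcl j).mem_of_tendsto htend ?_
    filter_upwards [eventually_ge_atTop (max j ⌈t⌉₊)] with k hk
    have hkj : j ≤ φ k := le_trans (le_max_left _ _) (le_trans hk hφ.le_apply)
    have hkt : t ≤ dist (y (φ k)) x₀ := by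
      have h1 : t ≤ (⌈t⌉₊ : ℝ) := Nat.le_ceil t
      have h2 : (⌈t⌉₊ : ℝ) ≤ (φ k : ℝ) := by
        exact_mod_cast le_trans (le_max_right j _) (le_trans hk hφ.le_apply)
      linarith [hyd (φ k), (by exact_mod_cast Nat.cast_nonneg (φ k) : (0:ℝ) ≤ (φ k : ℝ))]
    exact hant hkj (hseg (φ k) t ht hkt)
  obtain ⟨r, hr⟩ := (Metric.isBounded_iff_subset_closedBall x₀).mp hb
  have hmem' := hr (mem_iInter.mpr (hmem (max r 0 + 1) (by positivity)))
  have hvn : ‖v‖ = 1 := by simpa using hv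
  rw [Metric.mem_closedBall, dist_eq_norm, add_sub_cancel_left, norm_smul,
    Real.norm_eq_abs, hvn, mul_one, abs_of_nonneg (by positivity)] at hmem'
  have : r ≤ max r 0 := le_max_left r 0
  linarith
end
end
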